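/- arXiv:1104.2524 — 7 statements merged into one kernel-verified Lean document; each statement's English description precedes it below -/
import Mathlib

section
/- Let G be a chordal graph and let 𝒯 = (T, {T_u}_{u∈V(G)}) be a tree model of G. Then the following statements are equivalent: (i) 𝒯 is a minimal tree model of G, i.e., |V(T)| is smallest possible among all tree models of G; (ii) 𝒯 is isomorphic to the tree model defined by some clique tree of G; (iii) for every edge XY of T, contracting XY in T and in every subtree T_u containing both X and Y yields a tree model of a graph different from G; (iv) the map ψ defined by ψ(X) = {u ∈ V(G) : X ∈ V(T_u)} is a bijection between the nodes of T and the maximal cliques of G. -/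
open SimpleGraph

/-- The degree of a vertex in a graph, via `Set.ncard`. -/
noncomputable def deg {W : Type*} (T : SimpleGraph W) (w : W) : ℕ :=
  (T.neighborSet w).ncard

/-- The set of leaves (degree-one vertices) of a graph. -/
def leaves {W : Type*} (T : SimpleGraph W) : Set W :=
  {w | deg T w = 1}

/-- The number of leaves. -/
noncomputable def numLeaves {W : Type*} (T : SimpleGraph W) : ℕ :=
  (leaves T).ncard

/-- The set of leaves of the subgraph of `T` induced by `s`
(nodes of `s` with exactly one neighbour inside `s`). -/
def subLeaves {W : Type*} (T : SimpleGraph W) (s : Set W) : Set W :=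
  {w | w ∈ s ∧ (T.neighborSet w ∩ s).ncard = 1}

/-- The number of leaves of the subtree induced by `s`. -/
noncomputable def numSubLeaves {W : Type*} (T : SimpleGraph W) (s : Set W) : ℕ :=
  (subLeaves T s).ncard

/-- A tree model of a graph `G`: a finite host tree `T` together with nonempty
subtrees `sub u` such that distinct vertices are adjacent in `G` iff their
subtrees intersect. -/
structure TreeModel {V : Type*} (G : SimpleGraph V) where
  W : Type
  finW : Finite W
  T : SimpleGraph W
  tree : T.IsTree
  sub : V → Set W
  sub_nonempty : ∀ u, (sub u).Nonempty
  sub_conn : ∀ u, (T.induce (sub u)).Connected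
  adj_iff : ∀ u v, u ≠ v → (G.Adj u v ↔ (sub u ∩ sub v).Nonempty)

/-- The leafage of a chordal graph: the minimum number of host-tree leaves over
all tree models. -/
noncomputable def leafage {V : Type*} (G : SimpleGraph V) : ℕ :=
  sInf {n | ∃ M : TreeModel G, numLeaves M.T = n}

/-- The vertex leafage of a chordal graph: the least `k` such that `G` has a tree
model all of whose subtrees have at most `k` leaves. -/
noncomputable def vleafage {V : Type*} (G : SimpleGraph V) : ℕ :=
  sInf {k | ∃ M : TreeModel G, ∀ u, numSubLeaves M.T (M.sub u) ≤ k}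

/-- A maximal clique of `G`. -/
def IsMaxClique {V : Type*} (G : SimpleGraph V) (C : Set V) : Prop :=
  G.IsClique C ∧ ∀ D, G.IsClique D → C ⊆ D → D = C

/-- The type of maximal cliques of `G`. -/
abbrev MaxCliques {V : Type*} (G : SimpleGraph V) := {C : Set V // IsMaxClique G C}

/-- A clique tree of `G`: a tree whose nodes are exactly the maximal cliques of `G`,
such that every node on the path between nodes `C` and `C'` contains `C ∩ C'`. -/
structure CliqueTree {V : Type*} (G : SimpleGraph V) where
  T : SimpleGraph (MaxCliques G)
  tree : T.IsTree
  path_cond : ∀ (C C' : MaxCliques G) (p : T.Walk C C'), p.IsPath →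
    ∀ C'' ∈ p.support, C.1 ∩ C'.1 ⊆ C''.1

/-- The subtree (node set) assigned to a vertex `u` in the tree model defined by a
clique tree of `G`: the set of maximal cliques containing `u`. -/
def cliqueSub {V : Type*} (G : SimpleGraph V) (u : V) : Set (MaxCliques G) :=
  {C | u ∈ C.1}

/-- The set of nodes of degree at least 3. -/
def Hh {W : Type*} (T : SimpleGraph W) : Set W := {w | 3 ≤ deg T w}

/-- The set of edges incident to a node of degree at least 3. -/
def Ee {W : Type*} (T : SimpleGraph W) : Set (Sym2 W) :=
  {e | e ∈ T.edgeSet ∧ ∃ w ∈ e, w ∈ Hh T}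

/-- The host tree obtained by contracting the edge `XY` of the host tree of `M`
onto the node `X` (the node `Y` is removed and `X` inherits its neighbours). -/
def contractT {V : Type} {G : SimpleGraph V} (M : TreeModel G) (X Y : M.W) :
    SimpleGraph {w : M.W // w ≠ Y} :=
  SimpleGraph.fromRel (fun a b =>
    M.T.Adj a b ∨ ((a : M.W) = X ∧ M.T.Adj Y b) ∨ ((b : M.W) = X ∧ M.T.Adj (a : M.W) Y))

/-- The subtree of a vertex `u` after contracting the edge `XY` of the host tree
onto `X`: every subtree containing `Y` now contains `X` instead. -/
def contractSub {V : Type} {G : SimpleGraph V} (M : TreeModel G) (X Y : M.W) (u : V) :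
    Set {w : M.W // w ≠ Y} :=
  {w | (w : M.W) ∈ M.sub u ∨ ((w : M.W) = X ∧ Y ∈ M.sub u)}

open scoped Classical

namespace TreeAux

variable {W : Type*} {T : SimpleGraph W}

/-- The chosen path between two vertices of a tree. -/
noncomputable def pth (ht : T.IsTree) (x y : W) : T.Walk x y :=
  (ht.isConnected.preconnected x y).some.bypass

lemma pth_isPath (ht : T.IsTree) (x y : W) : (pth ht x y).IsPath :=
  SimpleGraph.Walk.bypass_isPath _

lemma path_eq_pth (ht : T.IsTree) {x y : W} (p : T.Walk x y) (hp : p.IsPath) :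
    p = pth ht x y := by
  have := ht.IsAcyclic.path_unique ⟨p, hp⟩ ⟨pth ht x y, pth_isPath ht x y⟩
  exact congrArg Subtype.val this

lemma pth_support_subset (ht : T.IsTree) {x y : W} (q : T.Walk x y) :
    (pth ht x y).support ⊆ q.support := by
  have h1 : q.bypass = pth ht x y := path_eq_pth ht q.bypass q.bypass_isPath
  rw [← h1]
  exact q.support_bypass_subset

/-- The inclusion homomorphism from an induced subgraph. -/
def inclHom (s : Set W) : T.induce s →g T :=
  { toFun := Subtype.val, map_rel' := fun h => h }

/-- Convexity: a connected induced subgraph contains the path between any two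
of its vertices. -/
lemma convex (ht : T.IsTree) {s : Set W} (hs : (T.induce s).Connected)
    {x y : W} (hx : x ∈ s) (hy : y ∈ s) :
    ∀ z ∈ (pth ht x y).support, z ∈ s := by
  obtain ⟨w⟩ := hs.preconnected ⟨x, hx⟩ ⟨y, hy⟩
  intro z hz
  have hsub : (pth ht x y).support ⊆ (w.map (inclHom s)).support :=
    pth_support_subset ht (w.map (inclHom s))
  have hmem := hsub hz
  rw [SimpleGraph.Walk.support_map] at hmem
  obtain ⟨⟨z', hz'⟩, _, rfl⟩ := List.mem_map.mp hmem
  exact hz'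

lemma reach_of_support_subset {s : Set W} :
    ∀ {x y : W} (p : T.Walk x y), (∀ z ∈ p.support, z ∈ s) →
      ∀ (hx : x ∈ s) (hy : y ∈ s), (T.induce s).Reachable ⟨x, hx⟩ ⟨y, hy⟩
  | x, _, SimpleGraph.Walk.nil, _, hx, hy => Reachable.refl _
  | x, y, SimpleGraph.Walk.cons h p, hsup, hx, hy =>
      have hm : _ ∈ s := hsup _ (by simp)
      (SimpleGraph.Adj.reachable
          (show (T.induce s).Adj ⟨x, hx⟩ ⟨_, hm⟩ from h)).trans
        (reach_of_support_subset p (fun z hz => hsup z (by simp [hz])) hm hy)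

/-- A "convex" nonempty set induces a connected subgraph. -/
lemma connected_of_convex (ht : T.IsTree) {s : Set W} (hne : s.Nonempty)
    (hconv : ∀ (x y : W), x ∈ s → y ∈ s → ∀ z ∈ (pth ht x y).support, z ∈ s) :
    (T.induce s).Connected := by
  rw [connected_iff]
  refine ⟨fun a b => ?_, ⟨⟨hne.some, hne.some_mem⟩⟩⟩
  obtain ⟨x, hx⟩ := a
  obtain ⟨y, hy⟩ := b
  exact reach_of_support_subset (pth ht x y) (hconv x y hx hy) hx hy

/-- Intersection of two connected induced subgraphs of a tree is connected. -/
lemma inter_connected (ht : T.IsTree) {s t : Set W}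
    (hs : (T.induce s).Connected) (hts : (T.induce t).Connected)
    (hne : (s ∩ t).Nonempty) : (T.induce (s ∩ t)).Connected := by
  refine connected_of_convex ht hne fun x y hx hy z hz => ?_
  exact ⟨convex ht hs hx.1 hy.1 z hz, convex ht hts hx.2 hy.2 z hz⟩

/-- First-hit decomposition of a walk with respect to a set containing its endpoint. -/
lemma first_hit {S : Set W} :
    ∀ {x y : W} (p : T.Walk x y), y ∈ S →
      ∃ (m : W) (_hm : m ∈ S) (q₁ : T.Walk x m) (q₂ : T.Walk m y),
        q₁.append q₂ = p ∧ ∀ z ∈ q₁.support, z ∈ S → z = m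
  | x, _, SimpleGraph.Walk.nil, hy =>
      ⟨x, hy, SimpleGraph.Walk.nil, SimpleGraph.Walk.nil, rfl,
        fun z hz _ => by simpa using hz⟩
  | x, y, SimpleGraph.Walk.cons h p, hy => by
      by_cases hu : x ∈ S
      · exact ⟨x, hu, SimpleGraph.Walk.nil, SimpleGraph.Walk.cons h p, rfl,
          fun z hz _ => by simpa using hz⟩
      · obtain ⟨m, hm, q₁, q₂, hq, hfirst⟩ := first_hit p hy
        refine ⟨m, hm, SimpleGraph.Walk.cons h q₁, q₂, by simp [hq], ?_⟩
        intro z hz hzS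
        rcases (by simpa using hz : z = x ∨ z ∈ q₁.support) with rfl | hz'
        · exact absurd hzS hu
        · exact hfirst z hz' hzS

/-- Concatenating two paths that share only their junction vertex gives a path. -/
lemma append_isPath {x m y : W} {p₁ : T.Walk x m} {p₂ : T.Walk m y}
    (h₁ : p₁.IsPath) (h₂ : p₂.IsPath)
    (hdisj : ∀ z, z ∈ p₁.support → z ∈ p₂.support → z = m) :
    (p₁.append p₂).IsPath := by
  rw [SimpleGraph.Walk.isPath_def, SimpleGraph.Walk.support_append]
  apply List.Nodup.append h₁.support_nodup (h₂.support_nodup.tail)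
  intro z hz hz'
  have hz₂ : z ∈ p₂.support := List.mem_of_mem_tail hz'
  have : z = m := hdisj z hz hz₂
  subst this
  have : p₂.support = z :: p₂.support.tail := p₂.support_eq_cons
  have hnd := h₂.support_nodup
  rw [this] at hnd
  exact (List.nodup_cons.mp hnd).1 hz'

/-- Median of three vertices in a tree. -/
lemma median (ht : T.IsTree) (a b c : W) :
    ∃ m, m ∈ (pth ht a b).support ∧ m ∈ (pth ht b c).support ∧
      m ∈ (pth ht a c).support := by
  obtain ⟨m, hmS, q₁, q₂, hq, hfirst⟩ :=
    first_hit (S := {z | z ∈ (pth ht a b).support}) (pth ht a c).reverse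
      (by simp [SimpleGraph.Walk.start_mem_support])
  -- q₁ : Walk c m, q₂ : Walk m a, q₁.append q₂ = (pth a c).reverse
  have hrevpath : ((pth ht a c).reverse).IsPath := (pth_isPath ht a c).reverse
  have hq₁ : q₁.IsPath := by
    rw [← hq] at hrevpath; exact hrevpath.of_append_left
  have hmac : m ∈ (pth ht a c).support := by
    have : m ∈ ((pth ht a c).reverse).support := by
      rw [← hq]; simp [SimpleGraph.Walk.mem_support_append_iff]
    simpa using this
  refine ⟨m, hmS, ?_, hmac⟩
  -- build the path from b to c through m
  have hmab : m ∈ (pth ht a b).support := hmS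
  set r₁ : T.Walk m b := (pth ht a b).dropUntil m hmab with hr₁
  have hr₁path : r₁.IsPath := (pth_isPath ht a b).dropUntil hmab
  have hr₁sub : r₁.support ⊆ (pth ht a b).support :=
    SimpleGraph.Walk.support_dropUntil_subset _ hmab
  have hcand : (r₁.reverse.append q₁.reverse).IsPath := by
    apply append_isPath hr₁path.reverse hq₁.reverse
    intro z hz hz'
    rw [SimpleGraph.Walk.support_reverse, List.mem_reverse] at hz hz'
    exact hfirst z hz' (hr₁sub hz)
  have : r₁.reverse.append q₁.reverse = pth ht b c := path_eq_pth ht _ hcand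
  rw [← this]
  simp [SimpleGraph.Walk.mem_support_append_iff]

/-- Helly property for three subtrees. -/
lemma helly3 (ht : T.IsTree) {A B C : Set W}
    (hA : (T.induce A).Connected) (hB : (T.induce B).Connected)
    (hC : (T.induce C).Connected)
    (hAB : (A ∩ B).Nonempty) (hAC : (A ∩ C).Nonempty) (hBC : (B ∩ C).Nonempty) :
    (A ∩ B ∩ C).Nonempty := by
  obtain ⟨a, haB, haC⟩ := hBC
  obtain ⟨b, hbA, hbC⟩ := hAC
  obtain ⟨c, hcA, hcB⟩ := hAB
  obtain ⟨m, hab, hbc, hac⟩ := median ht a b c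
  exact ⟨m, ⟨convex ht hA hbA hcA m hbc, convex ht hB haB hcB m hac⟩,
    convex ht hC haC hbC m hab⟩

/-- Helly property for finitely many subtrees of a tree. -/
lemma helly (ht : T.IsTree) {ι : Type*} :
    ∀ (s : Finset ι), s.Nonempty → ∀ (f : ι → Set W),
      (∀ i ∈ s, (f i).Nonempty) →
      (∀ i ∈ s, (T.induce (f i)).Connected) →
      (∀ i ∈ s, ∀ j ∈ s, (f i ∩ f j).Nonempty) →
      (⋂ i ∈ s, f i).Nonempty := by
  intro s
  induction s using Finset.induction_on with
  | empty => intro h; exact absurd h (by simp)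
  | @insert a s ha ih =>
      intro _ f hne hconn hint
      rcases Finset.eq_empty_or_nonempty s with rfl | hsne
      · simpa using hne a (by simp)
      · have hint' : ∀ i ∈ s, ∀ j ∈ s, ((f i ∩ f a) ∩ (f j ∩ f a)).Nonempty := by
          intro i hi j hj
          have h3 := helly3 ht (A := f i) (B := f j) (C := f a)
            (hconn i (by simp [hi])) (hconn j (by simp [hj])) (hconn a (by simp))
            (hint i (by simp [hi]) j (by simp [hj]))
            (hint i (by simp [hi]) a (by simp))
            (hint j (by simp [hj]) a (by simp))
          obtain ⟨z, ⟨hzi, hzj⟩, hza⟩ := h3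
          exact ⟨z, ⟨hzi, hza⟩, ⟨hzj, hza⟩⟩
        have ihres := ih hsne (fun i => f i ∩ f a)
          (fun i hi => hint i (by simp [hi]) a (by simp))
          (fun i hi => inter_connected ht (hconn i (by simp [hi])) (hconn a (by simp))
            (hint i (by simp [hi]) a (by simp)))
          hint'
        obtain ⟨z, hz⟩ := ihres
        rw [Set.mem_iInter₂] at hz
        refine ⟨z, ?_⟩
        rw [Set.mem_iInter₂]
        intro i hi
        obtain ⟨i₀, hi₀⟩ := hsne
        rcases Finset.mem_insert.mp hi with rfl | hi'
        · exact (hz i₀ hi₀).2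
        · exact (hz i hi').1

lemma takeUntil_cons {x y' z m : W} (h : T.Adj x y') (rest : T.Walk y' z)
    (hm : m ∈ (SimpleGraph.Walk.cons h rest).support) (hne : x ≠ m)
    (hm' : m ∈ rest.support) :
    (SimpleGraph.Walk.cons h rest).takeUntil m hm
      = SimpleGraph.Walk.cons h (rest.takeUntil m hm') := by
  simp [SimpleGraph.Walk.takeUntil, dif_neg hne]

lemma snd_mem_takeUntil_support {x y' z m : W} (h : T.Adj x y') (rest : T.Walk y' z)
    (hm : m ∈ (SimpleGraph.Walk.cons h rest).support) (hne : x ≠ m) :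
    y' ∈ ((SimpleGraph.Walk.cons h rest).takeUntil m hm).support := by
  have hm' : m ∈ rest.support := by
    rcases (by simpa using hm : m = x ∨ m ∈ rest.support) with rfl | h'
    · exact absurd rfl hne
    · exact h'
  rw [takeUntil_cons h rest hm hne hm']
  simp [SimpleGraph.Walk.start_mem_support]

section Maps

variable {A B : Type*} {GA : SimpleGraph A} {GB : SimpleGraph B}

lemma reach_map (f : A → B)
    (hf : ∀ a b : A, GA.Adj a b → GB.Adj (f a) (f b) ∨ f a = f b) :
    ∀ {a b : A}, GA.Walk a b → GB.Reachable (f a) (f b)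
  | _, _, SimpleGraph.Walk.nil => Reachable.refl _
  | a, b, SimpleGraph.Walk.cons h p => by
      rcases hf _ _ h with hadj | heq
      · exact hadj.reachable.trans (reach_map f hf p)
      · rw [heq]; exact reach_map f hf p

lemma reach_induce_map (f : A → B) {s : Set A} {t : Set B}
    (hmap : ∀ a ∈ s, f a ∈ t)
    (hf : ∀ a b : A, a ∈ s → b ∈ s → GA.Adj a b → GB.Adj (f a) (f b) ∨ f a = f b) :
    ∀ {x y : ↥s} (_p : (GA.induce s).Walk x y),
      (GB.induce t).Reachable ⟨f x, hmap x x.2⟩ ⟨f y, hmap y y.2⟩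
  | _, _, SimpleGraph.Walk.nil => Reachable.refl _
  | x, y, SimpleGraph.Walk.cons h p => by
      rcases hf _ _ x.2 (by exact Subtype.mem _) h with hadj | heq
      · exact (SimpleGraph.Adj.reachable
          (show (GB.induce t).Adj ⟨f x, _⟩ ⟨f _, _⟩ from hadj)).trans
          (reach_induce_map f hmap hf p)
      · have e : (⟨f x, hmap x x.2⟩ : ↥t) = ⟨f _, hmap _ (Subtype.mem _)⟩ :=
          Subtype.ext heq
        rw [e]
        exact reach_induce_map f hmap hf p

lemma induce_image_connected (f : A → B) {s : Set A}
    (hconn : (GA.induce s).Connected)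
    (hf : ∀ a b : A, a ∈ s → b ∈ s → GA.Adj a b → GB.Adj (f a) (f b) ∨ f a = f b) :
    (GB.induce (f '' s)).Connected := by
  rw [connected_iff]
  constructor
  · rintro ⟨b₁, hb₁⟩ ⟨b₂, hb₂⟩
    obtain ⟨a₁, ha₁, rfl⟩ := hb₁
    obtain ⟨a₂, ha₂, rfl⟩ := hb₂
    obtain ⟨p⟩ := hconn.preconnected ⟨a₁, ha₁⟩ ⟨a₂, ha₂⟩
    exact reach_induce_map f (fun a ha => Set.mem_image_of_mem f ha) hf p
  · obtain ⟨⟨a, ha⟩⟩ := hconn.nonempty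
    exact ⟨⟨f a, Set.mem_image_of_mem f ha⟩⟩

end Maps

end TreeAux

namespace ModelAux

open TreeAux

variable {V : Type} {G : SimpleGraph V}

/-- The bag of a node: the set of vertices whose subtree contains it. -/
def psi (M : TreeModel G) (X : M.W) : Set V := {u | X ∈ M.sub u}

lemma psi_clique (M : TreeModel G) (X : M.W) : G.IsClique (psi M X) := by
  intro u hu v hv huv
  exact (M.adj_iff u v huv).mpr ⟨X, hu, hv⟩

lemma sub_convex (M : TreeModel G) {u : V} {x y : M.W}
    (hx : x ∈ M.sub u) (hy : y ∈ M.sub u) :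
    ∀ z ∈ (pth M.tree x y).support, z ∈ M.sub u :=
  convex M.tree (M.sub_conn u) hx hy

/-- Every maximal clique is the bag of some node (Helly property). -/
lemma maxclique_is_bag [Fintype V] (M : TreeModel G) {C : Set V}
    (hC : IsMaxClique G C) : ∃ X : M.W, psi M X = C := by
  have hW : Nonempty M.W := M.tree.isConnected.nonempty
  have hsub : ∃ X : M.W, C ⊆ psi M X := by
    rcases Set.eq_empty_or_nonempty C with rfl | hCne
    · exact ⟨hW.some, by simp⟩
    · have hfin : C.Finite := Set.toFinite C
      have hfne : hfin.toFinset.Nonempty := by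
        rw [Set.Finite.toFinset_nonempty]; exact hCne
      have h := helly M.tree hfin.toFinset hfne M.sub
        (fun i _ => M.sub_nonempty i)
        (fun i _ => M.sub_conn i)
        (fun i hi j hj => by
          by_cases hij : i = j
          · subst hij; simpa [Set.inter_self] using M.sub_nonempty i
          · exact (M.adj_iff i j hij).mp
              (hC.1 (hfin.mem_toFinset.mp hi) (hfin.mem_toFinset.mp hj) hij))
      obtain ⟨Xw, hXw⟩ := h
      rw [Set.mem_iInter₂] at hXw
      exact ⟨Xw, fun u hu => hXw u (hfin.mem_toFinset.mpr hu)⟩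
  obtain ⟨Xw, hXw⟩ := hsub
  exact ⟨Xw, hC.2 (psi M Xw) (psi_clique M Xw) hXw⟩

/-- The "gate" lemma: if `X ∉ T_v`, there is a neighbour `Y'` of `X` that belongs
to every subtree that contains `X` and meets `T_v`. -/
lemma gate (M : TreeModel G) (v : V) (X : M.W) (hXv : X ∉ M.sub v) :
    ∃ Y' : M.W, M.T.Adj X Y' ∧
      ∀ u : V, X ∈ M.sub u → (M.sub u ∩ M.sub v).Nonempty → Y' ∈ M.sub u := by
  obtain ⟨z₀, hz₀⟩ := M.sub_nonempty v
  have hne : X ≠ z₀ := fun h => hXv (h ▸ hz₀)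
  cases hp : pth M.tree X z₀ with
  | nil => exact absurd rfl hne
  | @cons _ Y' _ h rest =>
    refine ⟨Y', h, ?_⟩
    rintro u hXu ⟨w, hwu, hwv⟩
    obtain ⟨m, hm1, hm2, hm3⟩ := median M.tree X w z₀
    have hmu : m ∈ M.sub u := sub_convex M hXu hwu m hm1
    have hmv : m ∈ M.sub v := sub_convex (u := v) M hwv hz₀ m hm2
    have hmX : X ≠ m := fun h => hXv (h ▸ hmv)
    have hm_in : m ∈ (SimpleGraph.Walk.cons h rest).support := by
      rw [← hp]; exact hm3
    have htup : ((SimpleGraph.Walk.cons h rest).takeUntil m hm_in).IsPath := by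
      have : (SimpleGraph.Walk.cons h rest).IsPath := by
        rw [← hp]; exact pth_isPath M.tree X z₀
      exact this.takeUntil hm_in
    have heqp : (SimpleGraph.Walk.cons h rest).takeUntil m hm_in = pth M.tree X m :=
      path_eq_pth M.tree _ htup
    have hY' : Y' ∈ (pth M.tree X m).support := by
      rw [← heqp]
      exact snd_mem_takeUntil_support h rest hm_in hmX
    exact sub_convex M hXu hmu Y' hY'

section Contract

variable (M : TreeModel G) (X Y : M.W)

lemma contract_adj {a b : {w : M.W // w ≠ Y}} :
    (contractT M X Y).Adj a b ↔ a ≠ b ∧ (M.T.Adj a.1 b.1 ∨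
      (a.1 = X ∧ M.T.Adj Y b.1) ∨ (b.1 = X ∧ M.T.Adj a.1 Y)) := by
  unfold contractT
  rw [SimpleGraph.fromRel_adj]
  constructor
  · rintro ⟨hne, h | h⟩
    · exact ⟨hne, h⟩
    · refine ⟨hne, ?_⟩
      rcases h with h | h | h
      · exact Or.inl h.symm
      · exact Or.inr (Or.inr ⟨h.1, h.2.symm⟩)
      · exact Or.inr (Or.inl ⟨h.1, h.2.symm⟩)
  · rintro ⟨hne, h⟩
    exact ⟨hne, Or.inl h⟩

/-- The projection map for the contraction of edge `XY` onto `X`. -/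
noncomputable def proj (hXY : M.T.Adj X Y) (w : M.W) : {w : M.W // w ≠ Y} :=
  if h : w = Y then ⟨X, hXY.ne⟩ else ⟨w, h⟩

lemma proj_ne (hXY : M.T.Adj X Y) (w : M.W) (h : w ≠ Y) : proj M X Y hXY w = ⟨w, h⟩ := dif_neg h

lemma proj_Y (hXY : M.T.Adj X Y) : proj M X Y hXY Y = ⟨X, hXY.ne⟩ := dif_pos rfl

lemma contract_pseudo (hXY : M.T.Adj X Y) : ∀ a b : M.W, M.T.Adj a b →
    (contractT M X Y).Adj (proj M X Y hXY a) (proj M X Y hXY b) ∨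
      proj M X Y hXY a = proj M X Y hXY b := by
  intro a b hab
  by_cases ha : a = Y
  · have hbY : b ≠ Y := ha ▸ hab.ne'
    by_cases hb : b = X
    · right; rw [ha, proj_Y, proj_ne M X Y hXY b hbY]; exact Subtype.ext hb.symm
    · left
      rw [ha, proj_Y, proj_ne M X Y hXY b hbY]
      exact (contract_adj M X Y).mpr
        ⟨fun h => hb (congrArg Subtype.val h).symm, Or.inr (Or.inl ⟨rfl, ha ▸ hab⟩)⟩
  · by_cases hbY : b = Y
    · by_cases haX : a = X
      · right; rw [hbY, proj_Y, proj_ne M X Y hXY a ha]; exact Subtype.ext haX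
      · left
        rw [hbY, proj_Y, proj_ne M X Y hXY a ha]
        exact (contract_adj M X Y).mpr
          ⟨fun h => haX (congrArg Subtype.val h), Or.inr (Or.inr ⟨rfl, hbY ▸ hab⟩)⟩
    · left
      rw [proj_ne M X Y hXY a ha, proj_ne M X Y hXY b hbY]
      exact (contract_adj M X Y).mpr
        ⟨fun h => hab.ne (congrArg Subtype.val h), Or.inl hab⟩

lemma contract_connected (hXY : M.T.Adj X Y) : (contractT M X Y).Connected := by
  rw [connected_iff]
  constructor
  · intro a b
    obtain ⟨p⟩ := M.tree.isConnected.preconnected a.1 b.1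
    have := reach_map (proj M X Y hXY) (contract_pseudo M X Y hXY) p
    rwa [proj_ne M X Y hXY a.1 a.2, proj_ne M X Y hXY b.1 b.2,
      Subtype.coe_eta, Subtype.coe_eta] at this
  · exact ⟨⟨X, hXY.ne⟩⟩

/-- Lift a walk of the contracted graph back to the tree. -/
noncomputable def liftWalk (hXY : M.T.Adj X Y) : ∀ {a b : {w : M.W // w ≠ Y}},
    (contractT M X Y).Walk a b → M.T.Walk a.1 b.1
  | _, _, SimpleGraph.Walk.nil => SimpleGraph.Walk.nil
  | a, b, @SimpleGraph.Walk.cons _ _ _ c _ h p =>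
    if hT : M.T.Adj a.1 c.1 then SimpleGraph.Walk.cons hT (liftWalk hXY p)
    else by
      have h2 : M.T.Adj a.1 Y ∧ M.T.Adj Y c.1 := by
        rcases ((contract_adj M X Y).mp h).2 with h' | ⟨haX, hYc⟩ | ⟨hcX, haY⟩
        · exact absurd h' hT
        · exact ⟨haX ▸ hXY, hYc⟩
        · exact ⟨haY, hcX ▸ hXY.symm⟩
      exact SimpleGraph.Walk.cons h2.1 (SimpleGraph.Walk.cons h2.2 (liftWalk hXY p))

lemma lift_edges_real (hXY : M.T.Adj X Y) : ∀ {a b : {w : M.W // w ≠ Y}}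
    (p : (contractT M X Y).Walk a b) (u v : {w : M.W // w ≠ Y}),
    s(u.1, v.1) ∈ (liftWalk M X Y hXY p).edges → s(u, v) ∈ p.edges
  | _, _, SimpleGraph.Walk.nil, u, v, hmem => by simp [liftWalk] at hmem
  | a, b, @SimpleGraph.Walk.cons _ _ _ c _ h p, u, v, hmem => by
    rw [liftWalk] at hmem
    by_cases hT : M.T.Adj a.1 c.1
    · rw [dif_pos hT] at hmem
      rw [SimpleGraph.Walk.edges_cons] at hmem ⊢
      rcases List.mem_cons.mp hmem with heq | hmem'
      · have hsuv : s(u, v) = s(a, c) := by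
          rcases Sym2.eq_iff.mp heq with ⟨h1, h2⟩ | ⟨h1, h2⟩
          · rw [Sym2.eq_iff]; left; exact ⟨Subtype.ext h1, Subtype.ext h2⟩
          · rw [Sym2.eq_iff]; right; exact ⟨Subtype.ext h1, Subtype.ext h2⟩
        rw [hsuv]; exact List.mem_cons_self
      · exact List.mem_cons_of_mem _ (lift_edges_real hXY p u v hmem')
    · rw [dif_neg hT] at hmem
      rw [SimpleGraph.Walk.edges_cons, SimpleGraph.Walk.edges_cons] at hmem
      rw [SimpleGraph.Walk.edges_cons]
      rcases List.mem_cons.mp hmem with heq | hmem'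
      · rcases Sym2.eq_iff.mp heq with ⟨h1, h2⟩ | ⟨h1, h2⟩
        · exact absurd h2 v.2
        · exact absurd h1 u.2
      · rcases List.mem_cons.mp hmem' with heq | hmem''
        · rcases Sym2.eq_iff.mp heq with ⟨h1, h2⟩ | ⟨h1, h2⟩
          · exact absurd h1 u.2
          · exact absurd h2 v.2
        · exact List.mem_cons_of_mem _ (lift_edges_real hXY p u v hmem'')

lemma lift_edges_Y (hXY : M.T.Adj X Y) : ∀ {a b : {w : M.W // w ≠ Y}}
    (p : (contractT M X Y).Walk a b) (u : {w : M.W // w ≠ Y}), u.1 ≠ X →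
    s(Y, u.1) ∈ (liftWalk M X Y hXY p).edges → s(⟨X, hXY.ne⟩, u) ∈ p.edges
  | _, _, SimpleGraph.Walk.nil, u, hu, hmem => by simp [liftWalk] at hmem
  | a, b, @SimpleGraph.Walk.cons _ _ _ c _ h p, u, hu, hmem => by
    rw [liftWalk] at hmem
    by_cases hT : M.T.Adj a.1 c.1
    · rw [dif_pos hT] at hmem
      rw [SimpleGraph.Walk.edges_cons] at hmem
      rw [SimpleGraph.Walk.edges_cons]
      rcases List.mem_cons.mp hmem with heq | hmem'
      · rcases Sym2.eq_iff.mp heq with ⟨h1, _⟩ | ⟨h1, _⟩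
        · exact absurd h1.symm a.2
        · exact absurd h1.symm c.2
      · exact List.mem_cons_of_mem _ (lift_edges_Y hXY p u hu hmem')
    · rw [dif_neg hT] at hmem
      have hd := ((contract_adj M X Y).mp h).2
      rw [SimpleGraph.Walk.edges_cons, SimpleGraph.Walk.edges_cons] at hmem
      rw [SimpleGraph.Walk.edges_cons]
      rcases List.mem_cons.mp hmem with heq | hmem'
      · -- s(Y, u.1) = s(a.1, Y)
        have hua : u.1 = a.1 := by
          rcases Sym2.eq_iff.mp heq with ⟨h1, _⟩ | ⟨_, h2⟩
          · exact absurd h1.symm a.2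
          · exact h2
        rcases hd with h' | ⟨haX, _⟩ | ⟨hcX, _⟩
        · exact absurd h' hT
        · exact absurd (hua.trans haX) hu
        · have : s(⟨X, hXY.ne⟩, u) = s(a, c) := by
            rw [Sym2.eq_iff]; right
            exact ⟨Subtype.ext hcX.symm, Subtype.ext hua⟩
          rw [this]; exact List.mem_cons_self
      · rcases List.mem_cons.mp hmem' with heq | hmem''
        · -- s(Y, u.1) = s(Y, c.1)
          have huc : u.1 = c.1 := by
            rcases Sym2.eq_iff.mp heq with ⟨_, h2⟩ | ⟨h1, _⟩
            · exact h2
            · exact absurd h1.symm c.2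
          rcases hd with h' | ⟨haX, _⟩ | ⟨hcX, _⟩
          · exact absurd h' hT
          · have : s(⟨X, hXY.ne⟩, u) = s(a, c) := by
              rw [Sym2.eq_iff]; left
              exact ⟨Subtype.ext haX.symm, Subtype.ext huc⟩
            rw [this]; exact List.mem_cons_self
          · exact absurd (huc.trans hcX) hu
        · exact List.mem_cons_of_mem _ (lift_edges_Y hXY p u hu hmem'')

lemma contract_acyclic (hXY : M.T.Adj X Y) : (contractT M X Y).IsAcyclic := by
  rw [isAcyclic_iff_forall_adj_isBridge]
  intro a c hac
  rw [isBridge_iff_adj_and_forall_walk_mem_edges]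
  refine fun p => ?_
  by_contra hnot
  have htb : ∀ (x y : M.W), M.T.Adj x y → ∀ q : M.T.Walk x y, s(x, y) ∈ q.edges := by
    intro x y hxy q
    have hb := (isAcyclic_iff_forall_adj_isBridge.mp M.tree.IsAcyclic) hxy
    exact (isBridge_iff_adj_and_forall_walk_mem_edges.mp hb) q
  have hac' : a ≠ c := hac.ne
  by_cases hT : M.T.Adj a.1 c.1
  · exact hnot (lift_edges_real M X Y hXY p a c (htb _ _ hT (liftWalk M X Y hXY p)))
  · rcases ((contract_adj M X Y).mp hac).2 with h' | ⟨haX, hYc⟩ | ⟨hcX, haY⟩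
    · exact hT h'
    · have hYa : M.T.Adj Y a.1 := haX ▸ hXY.symm
      have hmem := htb Y c.1 hYc
        (SimpleGraph.Walk.cons hYa (liftWalk M X Y hXY p))
      rw [SimpleGraph.Walk.edges_cons] at hmem
      rcases List.mem_cons.mp hmem with heq | hmem'
      · rcases Sym2.eq_iff.mp heq with ⟨_, h2⟩ | ⟨_, h2⟩
        · exact hac' (Subtype.ext h2.symm)
        · exact absurd h2 c.2
      · have hcne : c.1 ≠ X := fun hh => hac' (Subtype.ext (haX.trans hh.symm))
        have := lift_edges_Y M X Y hXY p c hcne hmem'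
        have hXa : (⟨X, hXY.ne⟩ : {w : M.W // w ≠ Y}) = a := Subtype.ext haX.symm
        rw [hXa] at this
        exact hnot this
    · have hcY : M.T.Adj c.1 Y := hcX ▸ hXY
      have hmem := htb a.1 Y haY
        ((liftWalk M X Y hXY p).append (SimpleGraph.Walk.cons hcY SimpleGraph.Walk.nil))
      rw [SimpleGraph.Walk.edges_append] at hmem
      rcases List.mem_append.mp hmem with hmem' | hmem''
      · have hane : a.1 ≠ X := fun hh => hac' (Subtype.ext (hh.trans hcX.symm))
        have hsw : s(Y, a.1) ∈ (liftWalk M X Y hXY p).edges := by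
          rwa [Sym2.eq_swap] at hmem'
        have := lift_edges_Y M X Y hXY p a hane hsw
        have hXc : (⟨X, hXY.ne⟩ : {w : M.W // w ≠ Y}) = c := Subtype.ext hcX.symm
        rw [hXc, Sym2.eq_swap] at this
        exact hnot this
      · simp only [SimpleGraph.Walk.edges_cons, SimpleGraph.Walk.edges_nil,
          List.mem_singleton] at hmem''
        rcases Sym2.eq_iff.mp hmem'' with ⟨h1, _⟩ | ⟨h1, h2⟩
        · exact hac' (Subtype.ext h1)
        · exact absurd h1 a.2

lemma contract_isTree (hXY : M.T.Adj X Y) : (contractT M X Y).IsTree :=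
  ⟨contract_connected M X Y hXY, contract_acyclic M X Y hXY⟩

lemma contractSub_eq_image (hXY : M.T.Adj X Y) (u : V) :
    contractSub M X Y u = proj M X Y hXY '' (M.sub u) := by
  ext w
  constructor
  · rintro (hw | ⟨hwX, hY⟩)
    · exact ⟨w.1, hw, by rw [proj_ne M X Y hXY w.1 w.2]⟩
    · exact ⟨Y, hY, by rw [proj_Y]; exact Subtype.ext hwX.symm⟩
  · rintro ⟨z, hz, rfl⟩
    by_cases hzY : z = Y
    · subst hzY
      rw [proj_Y]
      exact Or.inr ⟨rfl, hz⟩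
    · rw [proj_ne M X Y hXY z hzY]
      exact Or.inl hz

lemma contractSub_connected (hXY : M.T.Adj X Y) (u : V) :
    ((contractT M X Y).induce (contractSub M X Y u)).Connected := by
  rw [contractSub_eq_image M X Y hXY u]
  exact induce_image_connected (proj M X Y hXY) (M.sub_conn u)
    (fun a b _ _ hab => contract_pseudo M X Y hXY a b hab)

lemma contractSub_nonempty (hXY : M.T.Adj X Y) (u : V) : (contractSub M X Y u).Nonempty := by
  obtain ⟨z, hz⟩ := M.sub_nonempty u
  rw [contractSub_eq_image M X Y hXY u]
  exact ⟨_, z, hz, rfl⟩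

end Contract

section Main

variable (M : TreeModel G)

lemma contract_eq_iff {X Y : M.W} (hXY : M.T.Adj X Y) :
    SimpleGraph.fromRel
        (fun u v : V => ((contractSub M X Y u) ∩ (contractSub M X Y v)).Nonempty) = G ↔
      G.IsClique (psi M X ∪ psi M Y) := by
  have hmem : ∀ z : V, z ∈ psi M X ∪ psi M Y →
      (⟨X, hXY.ne⟩ : {w : M.W // w ≠ Y}) ∈ contractSub M X Y z := by
    rintro z (hz | hz)
    · exact Or.inl hz
    · exact Or.inr ⟨rfl, hz⟩
  have key : ∀ u v : V, u ≠ v → ((contractSub M X Y u) ∩ (contractSub M X Y v)).Nonempty →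
      G.IsClique (psi M X ∪ psi M Y) → G.Adj u v := by
    rintro u v hne ⟨w, hwu, hwv⟩ hcl
    rcases hwu with hw1 | ⟨hwX, hYu⟩
    · rcases hwv with hw2 | ⟨hwX, hYv⟩
      · exact (M.adj_iff u v hne).mpr ⟨w.1, hw1, hw2⟩
      · exact hcl (Or.inl (show X ∈ M.sub u from hwX ▸ hw1)) (Or.inr hYv) hne
    · rcases hwv with hw2 | ⟨_, hYv⟩
      · exact hcl (Or.inr hYu) (Or.inl (show X ∈ M.sub v from hwX ▸ hw2)) hne
      · exact hcl (Or.inr hYu) (Or.inr hYv) hne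
  constructor
  · intro heq
    intro u hu v hv hne
    rw [← heq, SimpleGraph.fromRel_adj]
    exact ⟨hne, Or.inl ⟨⟨X, hXY.ne⟩, hmem u hu, hmem v hv⟩⟩
  · intro hcl
    ext u v
    rw [SimpleGraph.fromRel_adj]
    constructor
    · rintro ⟨hne, h | h⟩
      · exact key u v hne h hcl
      · rw [Set.inter_comm] at h
        exact key u v hne h hcl
    · intro hadj
      refine ⟨hadj.ne, Or.inl ?_⟩
      obtain ⟨w, hw1, hw2⟩ := (M.adj_iff u v hadj.ne).mp hadj
      by_cases hwY : w = Y
      · exact ⟨⟨X, hXY.ne⟩, Or.inr ⟨rfl, hwY ▸ hw1⟩, Or.inr ⟨rfl, hwY ▸ hw2⟩⟩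
      · exact ⟨⟨w, hwY⟩, Or.inl hw1, Or.inl hw2⟩

/-- The statement of item (iii). -/
def StIII : Prop := ∀ X Y : M.W, M.T.Adj X Y →
  SimpleGraph.fromRel
    (fun u v : V => ((contractSub M X Y u) ∩ (contractSub M X Y v)).Nonempty) ≠ G

lemma notclique_of_iii (hiii : StIII M) :
    ∀ X Y : M.W, M.T.Adj X Y → ¬ G.IsClique (psi M X ∪ psi M Y) :=
  fun X Y h hc => hiii X Y h ((contract_eq_iff M h).mpr hc)

lemma iii_to_maxclique (hiii : StIII M) (X : M.W) : IsMaxClique G (psi M X) := by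
  refine ⟨psi_clique M X, fun D hD hsubXD => ?_⟩
  by_contra hDne
  have hssub : psi M X ⊂ D := hsubXD.ssubset_of_ne (fun h => hDne h.symm)
  obtain ⟨v, hvD, hvX⟩ := Set.exists_of_ssubset hssub
  obtain ⟨Y', hadj, hgate⟩ := gate M v X hvX
  have hsub : psi M X ⊆ psi M Y' := by
    intro u hu
    refine hgate u hu ?_
    have hne : u ≠ v := fun h => hvX (h ▸ hu)
    exact (M.adj_iff u v hne).mp (hD (hsubXD hu) hvD hne)
  refine notclique_of_iii M hiii X Y' hadj ?_
  rw [Set.union_eq_self_of_subset_left hsub]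
  exact psi_clique M Y'

lemma iii_to_inj (hiii : StIII M) {X X' : M.W} (hne : X ≠ X')
    (hpsi : psi M X = psi M X') : False := by
  cases hp : pth M.tree X X' with
  | nil => exact hne rfl
  | @cons _ Y' _ h rest =>
    have hsub : psi M X ⊆ psi M Y' := by
      intro u hu
      have hu' : X' ∈ M.sub u := (hpsi ▸ hu : u ∈ psi M X')
      refine sub_convex M hu hu' Y' ?_
      rw [hp]
      simp [SimpleGraph.Walk.support_cons, SimpleGraph.Walk.start_mem_support]
    refine notclique_of_iii M hiii X Y' h ?_
    rw [Set.union_eq_self_of_subset_left hsub]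
    exact psi_clique M Y'

lemma iii_to_iv [Fintype V] (hiii : StIII M) :
    Set.BijOn (psi M) Set.univ {C | IsMaxClique G C} := by
  refine ⟨fun X _ => iii_to_maxclique M hiii X, fun X _ X' _ h => ?_, fun C hC => ?_⟩
  · by_contra hne
    exact iii_to_inj M hiii hne h
  · obtain ⟨X, hX⟩ := maxclique_is_bag M hC
    exact ⟨X, Set.mem_univ X, hX⟩

lemma iv_to_iii (hbij : Set.BijOn (psi M) Set.univ {C | IsMaxClique G C}) :
    StIII M := by
  intro X Y hadj heq
  have hcl := (contract_eq_iff M hadj).mp heq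
  have hmX : IsMaxClique G (psi M X) := hbij.mapsTo (Set.mem_univ X)
  have hmY : IsMaxClique G (psi M Y) := hbij.mapsTo (Set.mem_univ Y)
  have hun : psi M X ∪ psi M Y = psi M X :=
    hmX.2 _ hcl Set.subset_union_left
  have hsubYX : psi M Y ⊆ psi M X := hun ▸ Set.subset_union_right
  have hXY : psi M X = psi M Y := hmY.2 (psi M X) (psi_clique M X) hsubYX
  exact hadj.ne (hbij.injOn (Set.mem_univ X) (Set.mem_univ Y) hXY)

lemma iv_to_i [Fintype V] (hbij : Set.BijOn (psi M) Set.univ {C | IsMaxClique G C}) :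
    ∀ M' : TreeModel G, Nat.card M.W ≤ Nat.card M'.W := by
  intro M'
  haveI := M.finW
  haveI := M'.finW
  have e : M.W ≃ ↥{C | IsMaxClique G C} :=
    (Equiv.Set.univ M.W).symm.trans (hbij.equiv (psi M))
  let g : ↥{C | IsMaxClique G C} → M'.W := fun C => (maxclique_is_bag M' C.2).choose
  have hg : ∀ C : ↥{C | IsMaxClique G C}, psi M' (g C) = C.1 := fun C =>
    (maxclique_is_bag M' C.2).choose_spec
  have ginj : Function.Injective g := by
    intro C₁ C₂ h
    apply Subtype.ext
    rw [← hg C₁, ← hg C₂, h]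
  calc Nat.card M.W = Nat.card ↥{C | IsMaxClique G C} := Nat.card_congr e
    _ ≤ Nat.card M'.W := Nat.card_le_card_of_injective g ginj

lemma iv_to_ii (hbij : Set.BijOn (psi M) Set.univ {C | IsMaxClique G C}) :
    ∃ (CT : CliqueTree G) (φ : M.T ≃g CT.T), ∀ u, (⇑φ) '' (M.sub u) = cliqueSub G u := by
  let f : M.W → MaxCliques G := fun X => ⟨psi M X, hbij.mapsTo (Set.mem_univ X)⟩
  have hfinj : Function.Injective f := fun X X' h =>
    hbij.injOn (Set.mem_univ X) (Set.mem_univ X') (congrArg Subtype.val h)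
  have hfsurj : Function.Surjective f := by
    intro C
    obtain ⟨X, _, hX⟩ := hbij.surjOn C.2
    exact ⟨X, Subtype.ext hX⟩
  let e : M.W ≃ MaxCliques G := Equiv.ofBijective f ⟨hfinj, hfsurj⟩
  have hpsiX : ∀ X : M.W, (e X).1 = psi M X := fun X => rfl
  let T' : SimpleGraph (MaxCliques G) := SimpleGraph.comap (⇑e.symm) M.T
  let φ : M.T ≃g T' :=
    ⟨e, by
      intro a b
      show M.T.Adj (e.symm (e a)) (e.symm (e b)) ↔ M.T.Adj a b
      rw [Equiv.symm_apply_apply, Equiv.symm_apply_apply]⟩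
  have hφ : ∀ x : M.W, φ x = e x := fun _ => rfl
  have htree : T'.IsTree := by
    constructor
    · rw [connected_iff]
      constructor
      · intro a b
        have r : M.T.Reachable (e.symm a) (e.symm b) :=
          M.tree.isConnected.preconnected _ _
        have := r.map φ.toHom
        simpa [hφ] using this
      · exact ⟨e (Classical.choice M.tree.isConnected.nonempty)⟩
    · intro C cyc hcyc
      have hq : (cyc.map φ.symm.toHom).IsCycle :=
        (SimpleGraph.Walk.map_isCycle_iff_of_injective φ.symm.injective).mpr hcyc
      exact M.tree.IsAcyclic _ hq
  have hpsiSymm : ∀ C : MaxCliques G, psi M (φ.symm C) = C.1 := by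
    intro C
    have h1 : e (φ.symm C) = C := by
      show e (e.symm C) = C
      exact e.apply_symm_apply C
    rw [← hpsiX (φ.symm C), h1]
  refine ⟨⟨T', htree, ?_⟩, φ, ?_⟩
  · -- path condition
    intro C C' p hp C'' hC'' u hu
    have hq : (p.map φ.symm.toHom).IsPath :=
      SimpleGraph.Walk.map_isPath_of_injective (φ.symm.injective) hp
    have hX₁ : (φ.symm C : M.W) ∈ M.sub u := by
      have : u ∈ psi M (φ.symm C) := by rw [hpsiSymm]; exact hu.1
      exact this
    have hX₂ : (φ.symm C' : M.W) ∈ M.sub u := by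
      have : u ∈ psi M (φ.symm C') := by rw [hpsiSymm]; exact hu.2
      exact this
    have heqq : p.map φ.symm.toHom = pth M.tree (φ.symm C) (φ.symm C') :=
      path_eq_pth M.tree _ hq
    have hC''mem : (φ.symm C'' : M.W) ∈ (p.map φ.symm.toHom).support := by
      rw [SimpleGraph.Walk.support_map]
      exact List.mem_map_of_mem hC''
    have : (φ.symm C'' : M.W) ∈ M.sub u := by
      refine sub_convex M hX₁ hX₂ _ ?_
      rw [← heqq]
      exact hC''mem
    have h2 : u ∈ psi M (φ.symm C'') := this
    rw [hpsiSymm] at h2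
    exact h2
  · intro u
    ext C
    constructor
    · rintro ⟨Xx, hXx, rfl⟩
      show u ∈ (φ Xx).1
      rw [hφ, hpsiX]
      exact hXx
    · intro hC
      refine ⟨φ.symm C, ?_, ?_⟩
      · have : u ∈ psi M (φ.symm C) := by rw [hpsiSymm]; exact hC
        exact this
      · show e (e.symm C) = C
        exact e.apply_symm_apply C

lemma ii_to_iv
    (h : ∃ (CT : CliqueTree G) (φ : M.T ≃g CT.T), ∀ u, (⇑φ) '' (M.sub u) = cliqueSub G u) :
    Set.BijOn (psi M) Set.univ {C | IsMaxClique G C} := by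
  obtain ⟨CT, φ, himg⟩ := h
  have hpsi : ∀ X : M.W, psi M X = (φ X).1 := by
    intro X
    ext u
    constructor
    · intro hu
      have : φ X ∈ cliqueSub G u := by
        rw [← himg u]
        exact ⟨X, hu, rfl⟩
      exact this
    · intro hu
      have : φ X ∈ (⇑φ) '' (M.sub u) := by
        rw [himg u]
        exact hu
      obtain ⟨X', hX', hXX'⟩ := this
      have : X' = X := φ.injective hXX'
      exact this ▸ hX'
  refine ⟨fun X _ => ?_, fun X _ X' _ h' => ?_, fun C hC => ?_⟩
  · rw [Set.mem_setOf_eq, hpsi X]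
    exact (φ X).2
  · have : (φ X : MaxCliques G) = φ X' := Subtype.ext (by rw [← hpsi X, ← hpsi X', h'])
    exact φ.injective this
  · refine ⟨φ.symm ⟨C, hC⟩, Set.mem_univ _, ?_⟩
    rw [hpsi]
    show ((φ (φ.symm ⟨C, hC⟩)) : MaxCliques G).1 = C
    rw [RelIso.apply_symm_apply]

lemma i_to_iii [Fintype V]
    (hi : ∀ M' : TreeModel G, Nat.card M.W ≤ Nat.card M'.W) : StIII M := by
  intro X Y hadj heq
  haveI := M.finW
  haveI : Fintype M.W := Fintype.ofFinite _
  let M' : TreeModel G :=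
    { W := {w : M.W // w ≠ Y}
      finW := inferInstance
      T := contractT M X Y
      tree := contract_isTree M X Y hadj
      sub := contractSub M X Y
      sub_nonempty := contractSub_nonempty M X Y hadj
      sub_conn := contractSub_connected M X Y hadj
      adj_iff := by
        intro u v huv
        have hiff : ∀ a b : V,
            (SimpleGraph.fromRel fun u v : V =>
              ((contractSub M X Y u) ∩ (contractSub M X Y v)).Nonempty).Adj a b ↔ G.Adj a b :=
          fun a b => by rw [heq]
        constructor
        · intro h
          obtain ⟨_, h' | h'⟩ := (SimpleGraph.fromRel_adj _ u v).mp ((hiff u v).mpr h)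
          · exact h'
          · rwa [Set.inter_comm] at h'
        · intro h
          exact (hiff u v).mp ((SimpleGraph.fromRel_adj _ u v).mpr ⟨huv, Or.inl h⟩) }
  have hcard := hi M'
  have hlt : Nat.card {w : M.W // w ≠ Y} < Nat.card M.W := by
    rw [Nat.card_eq_fintype_card, Nat.card_eq_fintype_card]
    exact Fintype.card_subtype_lt (p := fun w => w ≠ Y) (x := Y) (by simp)
  have : Nat.card M'.W = Nat.card {w : M.W // w ≠ Y} := rfl
  omega

end Main

end ModelAux


/-- Fact 1: for a tree model `𝒯 = (T, {T_u})` of a chordal graph `G`, the following are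
equivalent: (i) `𝒯` is a minimal tree model of `G`; (ii) `𝒯` is isomorphic to the tree
model defined by some clique tree of `G`; (iii) contracting any edge `XY` of `T` (in `T`
and in all subtrees containing it) yields a tree model of a graph different from `G`;
(iv) `ψ : X ↦ {u | X ∈ V(T_u)}` is a bijection between the nodes of `T` and the maximal
cliques of `G`. -/
theorem stmt1 {V : Type} [Fintype V] (G : SimpleGraph V) (M : TreeModel G) :
    List.TFAE [
      -- (i) minimality of the tree model
      (∀ M' : TreeModel G, Nat.card M.W ≤ Nat.card M'.W),
      -- (ii) isomorphic to the tree model defined by some clique tree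
      (∃ (CT : CliqueTree G) (φ : M.T ≃g CT.T), ∀ u, (⇑φ) '' (M.sub u) = cliqueSub G u),
      -- (iii) contracting any edge yields a tree model of a graph `G' ≠ G`
      (∀ X Y : M.W, M.T.Adj X Y →
        SimpleGraph.fromRel
          (fun u v : V => ((contractSub M X Y u) ∩ (contractSub M X Y v)).Nonempty) ≠ G),
      -- (iv) `ψ` is a bijection onto the maximal cliques of `G`
      (Set.BijOn (fun X : M.W => {u : V | X ∈ M.sub u}) Set.univ {C | IsMaxClique G C})
    ] := by
  tfae_have 1 → 3 := ModelAux.i_to_iii M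
  tfae_have 3 → 4 := ModelAux.iii_to_iv M
  tfae_have 4 → 1 := ModelAux.iv_to_i M
  tfae_have 4 → 2 := ModelAux.iv_to_ii M
  tfae_have 2 → 4 := ModelAux.ii_to_iv M
  tfae_finish
end

section
/- For every chordal graph G and every tree model (T, {T_u}) of G, there exists a minimal tree model (T', {T'_u}) of G (one whose host tree has the fewest nodes among all tree models of G) such that |L(T')| ≤ |L(T)| and |L(T'_u)| ≤ |L(T_u)| for every vertex u of G. -/
open SimpleGraph

section Aux
open Classical

variable {W : Type*} {T : SimpleGraph W}

/-- Convexity of a set in a graph: contains all paths between its points. -/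
def Conv (T : SimpleGraph W) (s : Set W) : Prop :=
  ∀ ⦃u v : W⦄ (p : T.Walk u v), p.IsPath → u ∈ s → v ∈ s → ∀ w ∈ p.support, w ∈ s

lemma conv_of_connected (ht : T.IsTree) {s : Set W} (hs : (T.induce s).Connected) :
    Conv T s := by
  classical
  intro u v p hp hu hv w hw
  obtain ⟨q⟩ := hs ⟨u, hu⟩ ⟨v, hv⟩
  have hq : ((q.toPath.1 : (T.induce s).Walk _ _).map (Embedding.induce s).toHom).IsPath :=
    Walk.map_isPath_of_injective (Embedding.induce (G := T) s).injective q.toPath.2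
  have := (ht.existsUnique_path u v).unique hp hq
  subst this
  replace hw := List.mem_map.1 ((congrArg (w ∈ ·)
    (Walk.support_map (Embedding.induce (G := T) s).toHom q.toPath.1)).mp hw)
  obtain ⟨⟨w', hw'⟩, hmem, rfl⟩ := hw
  exact hw'

lemma median (ht : T.IsTree) : ∀ {a b c : W} (p : T.Walk a b), p.IsPath →
    ∀ (q : T.Walk a c), q.IsPath → ∀ (r : T.Walk b c), r.IsPath →
    ∃ m, m ∈ p.support ∧ m ∈ q.support ∧ m ∈ r.support := by
  classical
  intro a b c p
  induction p with
  | nil =>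
    intro _ q hq r hr
    obtain rfl := (ht.existsUnique_path _ _).unique hq hr
    exact ⟨_, Walk.start_mem_support _, q.start_mem_support, q.start_mem_support⟩
  | @cons a a'' b h p' ih =>
    intro hp q hq r hr
    by_cases har : a ∈ r.support
    · exact ⟨a, by simp, q.start_mem_support, har⟩
    · set q' : T.Walk a'' c := (Walk.cons h.symm q).toPath.1 with hq'def
      have hq'path : q'.IsPath := (Walk.cons h.symm q).toPath.2
      have hq'sub : q'.support ⊆ a'' :: q.support := by
        intro z hz
        simpa using (Walk.cons h.symm q).support_toPath_subset hz
      by_cases haq' : a ∈ q'.support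
      · obtain ⟨m, hm1, hm2, hm3⟩ := ih hp.of_cons q' hq'path r hr
        rcases List.mem_cons.1 (hq'sub hm2) with hm2' | hm2'
        · exfalso
          subst hm2'
          have hdrop : (r.dropUntil m hm3).IsPath := hr.dropUntil hm3
          have : q' = r.dropUntil m hm3 := (ht.existsUnique_path m c).unique hq'path hdrop
          exact har (Walk.support_dropUntil_subset r hm3 (this ▸ haq'))
        · exact ⟨m, by simp [hm1], hm2', hm3⟩
      · have hcons : (Walk.cons h q').IsPath := by
          rw [Walk.cons_isPath_iff]; exact ⟨hq'path, haq'⟩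
        have hqeq : q = Walk.cons h q' := (ht.existsUnique_path a c).unique hq hcons
        obtain ⟨m, hm1, hm2, hm3⟩ := ih hp.of_cons q' hq'path r hr
        exact ⟨m, by simp [hm1], by rw [hqeq]; simp [hm2], hm3⟩

lemma conv_inter {s t : Set W} (hs : Conv T s) (ht : Conv T t) : Conv T (s ∩ t) :=
  fun _ _ p hp hu hv w hw => ⟨hs p hp hu.1 hv.1 w hw, ht p hp hu.2 hv.2 w hw⟩

lemma helly3 (ht : T.IsTree) {s t r : Set W} (hs : Conv T s) (htt : Conv T t)
    (hr : Conv T r) (hst : (s ∩ t).Nonempty) (hsr : (s ∩ r).Nonempty)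
    (htr : (t ∩ r).Nonempty) : (s ∩ t ∩ r).Nonempty := by
  obtain ⟨a, has, hat⟩ := hst
  obtain ⟨b, hbs, hbr⟩ := hsr
  obtain ⟨c, hct, hcr⟩ := htr
  obtain ⟨p⟩ := ht.1 a b
  obtain ⟨q⟩ := ht.1 a c
  obtain ⟨r'⟩ := ht.1 b c
  obtain ⟨m, hm1, hm2, hm3⟩ := median ht p.toPath.1 p.toPath.2 q.toPath.1 q.toPath.2
    r'.toPath.1 r'.toPath.2
  exact ⟨m, ⟨⟨hs _ p.toPath.2 has hbs m hm1, htt _ q.toPath.2 hat hct m hm2⟩,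
    hr _ r'.toPath.2 hbr hcr m hm3⟩⟩

lemma helly (ht : T.IsTree) : ∀ (n : ℕ) (F : Finset (Set W)), F.card = n → F.Nonempty →
    (∀ s ∈ F, Conv T s) → (∀ s ∈ F, ∀ t ∈ F, (s ∩ t).Nonempty) →
    (⋂₀ (F : Set (Set W))).Nonempty := by
  classical
  intro n
  induction n using Nat.strong_induction_on with
  | _ n ih =>
    intro F hcard hne hconv hpair
    by_cases hsingle : ∀ s ∈ F, ∀ t ∈ F, s = t
    · obtain ⟨s, hsF⟩ := hne
      obtain ⟨x, hx⟩ := hpair s hsF s hsF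
      exact ⟨x, by intro t htF; have := hsingle s hsF t htF; subst this; exact hx.1⟩
    · push_neg at hsingle
      obtain ⟨s, hsF, t, htF, hst⟩ := hsingle
      set F' : Finset (Set W) := insert (s ∩ t) ((F.erase s).erase t) with hF'
      have hcard' : F'.card < n := by
        have h1 : ((F.erase s).erase t).card = F.card - 2 := by
          rw [Finset.card_erase_of_mem (Finset.mem_erase.2 ⟨hst.symm, htF⟩),
            Finset.card_erase_of_mem hsF]
          omega
        have h2 : 2 ≤ F.card := by
          have := Finset.one_lt_card.2 ⟨s, hsF, t, htF, hst⟩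
          omega
        calc F'.card ≤ ((F.erase s).erase t).card + 1 := Finset.card_insert_le _ _
          _ < n := by omega
      have hmem : ∀ r ∈ F', r = s ∩ t ∨ (r ∈ F ∧ r ≠ s ∧ r ≠ t) := by
        intro r hr
        rcases Finset.mem_insert.1 hr with h | h
        · exact Or.inl h
        · rcases Finset.mem_erase.1 h with ⟨h1, h2⟩
          rcases Finset.mem_erase.1 h2 with ⟨h3, h4⟩
          exact Or.inr ⟨h4, h3, h1⟩
      have hconv' : ∀ r ∈ F', Conv T r := by
        intro r hr
        rcases hmem r hr with rfl | ⟨h, _, _⟩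
        · exact conv_inter (hconv s hsF) (hconv t htF)
        · exact hconv r h
      have hint : ∀ r ∈ F, ((s ∩ t) ∩ r).Nonempty := fun r hr =>
        helly3 ht (hconv s hsF) (hconv t htF) (hconv r hr) (hpair s hsF t htF)
          (hpair s hsF r hr) (hpair t htF r hr)
      have hpair' : ∀ r ∈ F', ∀ r' ∈ F', (r ∩ r').Nonempty := by
        intro r hr r' hr'
        rcases hmem r hr with rfl | ⟨h, _, _⟩
        · rcases hmem r' hr' with rfl | ⟨h', _, _⟩
          · obtain ⟨x, hx⟩ := hpair s hsF t htF
            exact ⟨x, hx, hx⟩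
          · exact hint r' h'
        · rcases hmem r' hr' with rfl | ⟨h', _, _⟩
          · obtain ⟨x, hx1, hx2⟩ := hint r h
            exact ⟨x, hx2, hx1⟩
          · exact hpair r h r' h'
      obtain ⟨x, hx⟩ := ih F'.card hcard' F' rfl ⟨s ∩ t, Finset.mem_insert_self _ _⟩
        hconv' hpair'
      refine ⟨x, ?_⟩
      intro r hrF
      have hxst : x ∈ s ∩ t := hx (s ∩ t) (by simp [hF'])
      by_cases hrs : r = s
      · exact hrs ▸ hxst.1
      · by_cases hrt : r = t
        · exact hrt ▸ hxst.2
        · exact hx r (Finset.mem_coe.2 (Finset.mem_insert.2 (Or.inr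
            (Finset.mem_erase.2 ⟨hrt, Finset.mem_erase.2 ⟨hrs, Finset.mem_coe.1 hrF⟩⟩))))

section Contract

variable (T) in
/-- contraction of the edge x-y, removing x -/
def cT (x y : W) : SimpleGraph {w : W // w ≠ x} where
  Adj a b := a ≠ b ∧ (T.Adj a.1 b.1 ∨ (a.1 = y ∧ T.Adj x b.1) ∨ (b.1 = y ∧ T.Adj x a.1))
  symm := by
    constructor
    intro a b ⟨hne, h⟩
    refine ⟨hne.symm, ?_⟩
    rcases h with h | h | h
    · exact Or.inl h.symm
    · exact Or.inr (Or.inr h)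
    · exact Or.inr (Or.inl h)
  loopless := ⟨fun a h => h.1 rfl⟩

variable {x y : W}

open Classical in
/-- the contraction map -/
noncomputable def cf (hyx : y ≠ x) (w : W) : {w : W // w ≠ x} :=
  if h : w = x then ⟨y, hyx⟩ else ⟨w, h⟩

lemma cf_of_ne (hyx : y ≠ x) {w : W} (h : w ≠ x) : cf hyx w = ⟨w, h⟩ := by
  simp [cf, h]

lemma cf_of_eq (hyx : y ≠ x) : cf hyx x = ⟨y, hyx⟩ := by
  simp [cf]

lemma cf_val (hyx : y ≠ x) (a : {w : W // w ≠ x}) : cf hyx a.1 = a := by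
  rw [cf_of_ne hyx a.2]

lemma cf_surj (hyx : y ≠ x) : Function.Surjective (cf hyx) :=
  fun a => ⟨a.1, cf_val hyx a⟩

lemma cf_eq_cases (hyx : y ≠ x) {u v : W} (h : cf hyx u = cf hyx v) :
    u = v ∨ (u = x ∧ v = y) ∨ (u = y ∧ v = x) := by
  by_cases hu : u = x <;> by_cases hv : v = x
  · exact Or.inl (hu.trans hv.symm)
  · rw [hu, cf_of_eq, cf_of_ne hyx hv] at h
    exact Or.inr (Or.inl ⟨hu, (congrArg Subtype.val h).symm⟩)
  · rw [hv, cf_of_eq, cf_of_ne hyx hu] at h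
    exact Or.inr (Or.inr ⟨congrArg Subtype.val h, hv⟩)
  · rw [cf_of_ne hyx hu, cf_of_ne hyx hv] at h
    exact Or.inl (congrArg Subtype.val h)

lemma no_triangle (ht : T.IsTree) {a b c : W} (hab : T.Adj a b) (hbc : T.Adj b c)
    (hac : T.Adj a c) : False := by
  have h1 : (Walk.cons hac Walk.nil).IsPath := by simp [hac.ne]
  have h2 : (Walk.cons hab (Walk.cons hbc Walk.nil)).IsPath := by
    simp [Walk.isPath_def, hab.ne, hbc.ne, hac.ne]
  have := (ht.existsUnique_path a c).unique h1 h2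
  have := congrArg Walk.length this
  simp [Walk.length_cons] at this

lemma x_mem_conv (ht : T.IsTree) {s : Set W} (hc : Conv T s) (hxy : T.Adj x y) {b : W}
    (hxb : T.Adj x b) (hyb : y ≠ b) (hy : y ∈ s) (hb : b ∈ s) : x ∈ s := by
  have hpath : (Walk.cons hxy.symm (Walk.cons hxb Walk.nil)).IsPath := by
    simp [Walk.isPath_def, hxy.ne', hxb.ne, hyb]
  exact hc _ hpath hy hb x (by simp)

lemma cf_adj (hxy : T.Adj x y) {u v : W} (huv : T.Adj u v)
    (hne : cf hxy.ne' u ≠ cf hxy.ne' v) : (cT T x y).Adj (cf hxy.ne' u) (cf hxy.ne' v) := by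
  refine ⟨hne, ?_⟩
  by_cases hu : u = x <;> by_cases hv : v = x
  · exact absurd (hu.trans hv.symm) huv.ne
  · rw [hu, cf_of_eq, cf_of_ne hxy.ne' hv]
    exact Or.inr (Or.inl ⟨rfl, hu ▸ huv⟩)
  · rw [hv, cf_of_eq, cf_of_ne hxy.ne' hu]
    exact Or.inr (Or.inr ⟨rfl, hv ▸ huv.symm⟩)
  · rw [cf_of_ne hxy.ne' hu, cf_of_ne hxy.ne' hv]
    exact Or.inl huv

lemma reach_of_walk {A B : Type*} {G : SimpleGraph A} {H : SimpleGraph B} (g : A → B)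
    (hstep : ∀ u v, G.Adj u v → H.Reachable (g u) (g v)) {u v : A} (p : G.Walk u v) :
    H.Reachable (g u) (g v) := by
  induction p with
  | nil => exact Reachable.refl _
  | cons h _ ih => exact (hstep _ _ h).trans ih

lemma cT_connected (ht : T.IsTree) (hxy : T.Adj x y) : (cT T x y).Connected := by
  have hne : Nonempty {w : W // w ≠ x} := ⟨⟨y, hxy.ne'⟩⟩
  refine Connected.mk ?_
  intro a b
  obtain ⟨p⟩ := ht.isConnected a.1 b.1
  have := reach_of_walk (cf hxy.ne')
    (fun u v huv => by
      by_cases h : cf hxy.ne' u = cf hxy.ne' v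
      · rw [h]
      · exact (cf_adj hxy huv h).reachable) p
  rwa [cf_val, cf_val] at this

lemma cT_induce_connected (ht : T.IsTree) (hxy : T.Adj x y) {s : Set W}
    (hs : (T.induce s).Connected) :
    ((cT T x y).induce (cf hxy.ne' '' s)).Connected := by
  obtain ⟨⟨w₀, hw₀⟩⟩ := hs.nonempty
  have hne : Nonempty (cf hxy.ne' '' s : Set _) := ⟨⟨cf hxy.ne' w₀, ⟨w₀, hw₀, rfl⟩⟩⟩
  refine Connected.mk ?_
  rintro ⟨a, a', ha', rfl⟩ ⟨b, b', hb', rfl⟩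
  obtain ⟨p⟩ := hs ⟨a', ha'⟩ ⟨b', hb'⟩
  exact reach_of_walk
    (fun (z : s) => (⟨cf hxy.ne' z.1, ⟨z.1, z.2, rfl⟩⟩ : (cf hxy.ne' '' s : Set _)))
    (fun u v huv => by
      by_cases h : cf hxy.ne' u.1 = cf hxy.ne' v.1
      · have : (⟨cf hxy.ne' u.1, ⟨u.1, u.2, rfl⟩⟩ : (cf hxy.ne' '' s : Set _))
            = ⟨cf hxy.ne' v.1, ⟨v.1, v.2, rfl⟩⟩ := Subtype.ext h
        beta_reduce
        exact this ▸ Reachable.refl _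
      · exact Adj.reachable (show ((cT T x y).induce (cf hxy.ne' '' s)).Adj _ _ from
          cf_adj hxy huv h)) p

end Contract

section Acyclic

variable {x y : W}

lemma del_adj {G : SimpleGraph W} {e : Sym2 W} {u v : W} :
    (G \ fromEdgeSet {e}).Adj u v ↔ G.Adj u v ∧ s(u, v) ≠ e := by
  simp only [sdiff_adj, fromEdgeSet_adj, Set.mem_singleton_iff]
  constructor
  · rintro ⟨hA, h2⟩
    exact ⟨hA, fun he => h2 ⟨he, hA.ne⟩⟩
  · rintro ⟨hA, h2⟩
    exact ⟨hA, fun h => h2 h.1⟩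

lemma bridge_no_reach (ht : T.IsTree) {u v : W} (h : T.Adj u v) :
    ¬(T \ fromEdgeSet {s(u, v)}).Reachable u v := by
  have := isAcyclic_iff_forall_adj_isBridge.1 ht.2 h
  rw [isBridge_iff] at this
  exact this

lemma cT_case2 (ht : T.IsTree) (hxy : T.Adj x y) {a b : {w : W // w ≠ x}}
    (hab : (cT T x y).Adj a b) (hay : a.1 = y) (hxb : T.Adj x b.1)
    (hreach : ((cT T x y) \ fromEdgeSet {s(a, b)}).Reachable a b) : False := by
  have hba : b.1 ≠ y := fun h => hab.1 (Subtype.ext (hay.trans h.symm))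
  have key : ∀ u v : {w : W // w ≠ x}, ((cT T x y) \ fromEdgeSet {s(a, b)}).Adj u v →
      (T \ fromEdgeSet {s(x, b.1)}).Reachable u.1 v.1 := by
    intro u v huv
    rw [del_adj] at huv
    obtain ⟨⟨hneuv, hcase⟩, hnedge⟩ := huv
    rcases hcase with h | ⟨huy, hxv⟩ | ⟨hvy, hxu⟩
    · refine Adj.reachable (del_adj.2 ⟨h, fun hc => ?_⟩)
      rcases Sym2.eq_iff.1 hc with ⟨h1, _⟩ | ⟨_, h2⟩
      · exact u.2 h1
      · exact v.2 h2
    · refine (Adj.reachable (del_adj.2 ⟨?_, fun hc => ?_⟩)).trans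
        (Adj.reachable (del_adj.2 ⟨hxv, fun hc => ?_⟩))
      · rw [huy]; exact hxy.symm
      · rcases Sym2.eq_iff.1 hc with ⟨h1, _⟩ | ⟨h1, _⟩
        · exact u.2 h1
        · exact hba (h1 ▸ huy)
      · rcases Sym2.eq_iff.1 hc with ⟨_, h1⟩ | ⟨h1, _⟩
        · exact hnedge (by rw [show u = a from Subtype.ext (huy.trans hay.symm),
            show v = b from Subtype.ext h1])
        · exact b.2 h1.symm
    · refine (Adj.reachable (del_adj.2 ⟨hxu.symm, fun hc => ?_⟩)).trans
        (Adj.reachable (del_adj.2 ⟨?_, fun hc => ?_⟩))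
      · rcases Sym2.eq_iff.1 hc with ⟨h1, _⟩ | ⟨h1, _⟩
        · exact u.2 h1
        · exact hnedge (by rw [show u = b from Subtype.ext h1,
            show v = a from Subtype.ext (hvy.trans hay.symm), Sym2.eq_swap])
      · rw [hvy]; exact hxy
      · rcases Sym2.eq_iff.1 hc with ⟨_, h1⟩ | ⟨h1, _⟩
        · exact hba (h1 ▸ hvy)
        · exact b.2 h1.symm
  have hra : (T \ fromEdgeSet {s(x, b.1)}).Reachable a.1 b.1 :=
    hreach.elim fun p => reach_of_walk Subtype.val key p
  have h1 : (T \ fromEdgeSet {s(x, b.1)}).Adj x y := by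
    refine del_adj.2 ⟨hxy, fun hc => ?_⟩
    rcases Sym2.eq_iff.1 hc with ⟨_, h1⟩ | ⟨h1, _⟩
    · exact hba h1.symm
    · exact b.2 h1.symm
  exact bridge_no_reach ht hxb ((h1.reachable).trans (hay ▸ hra))

lemma cT_acyclic (ht : T.IsTree) (hxy : T.Adj x y) : IsAcyclic (cT T x y) := by
  rw [isAcyclic_iff_forall_adj_isBridge]
  intro a b hab
  rw [isBridge_iff]
  refine fun hreach => ?_
  rcases hab.2 with h1 | ⟨hay, hxb⟩ | ⟨hby, hxa⟩
  · -- removed edge is an original tree edge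
    have key : ∀ u v : {w : W // w ≠ x}, ((cT T x y) \ fromEdgeSet {s(a, b)}).Adj u v →
        (T \ fromEdgeSet {s(a.1, b.1)}).Reachable u.1 v.1 := by
      intro u v huv
      rw [del_adj] at huv
      obtain ⟨⟨hneuv, hcase⟩, hnedge⟩ := huv
      rcases hcase with h | ⟨huy, hxv⟩ | ⟨hvy, hxu⟩
      · refine Adj.reachable (del_adj.2 ⟨h, fun hc => ?_⟩)
        refine hnedge ?_
        rcases Sym2.eq_iff.1 hc with ⟨h1, h2⟩ | ⟨h1, h2⟩
        · rw [show u = a from Subtype.ext h1, show v = b from Subtype.ext h2]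
        · rw [show u = b from Subtype.ext h1, show v = a from Subtype.ext h2, Sym2.eq_swap]
      · refine (Adj.reachable (del_adj.2 ⟨?_, fun hc => ?_⟩)).trans
          (Adj.reachable (del_adj.2 ⟨hxv, fun hc => ?_⟩))
        · rw [huy]; exact hxy.symm
        · rcases Sym2.eq_iff.1 hc with ⟨_, h2⟩ | ⟨_, h2⟩
          · exact b.2 h2.symm
          · exact a.2 h2.symm
        · rcases Sym2.eq_iff.1 hc with ⟨h2, _⟩ | ⟨h2, _⟩
          · exact a.2 h2.symm
          · exact b.2 h2.symm
      · refine (Adj.reachable (del_adj.2 ⟨hxu.symm, fun hc => ?_⟩)).trans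
          (Adj.reachable (del_adj.2 ⟨?_, fun hc => ?_⟩))
        · rcases Sym2.eq_iff.1 hc with ⟨_, h2⟩ | ⟨_, h2⟩
          · exact b.2 h2.symm
          · exact a.2 h2.symm
        · rw [hvy]; exact hxy
        · rcases Sym2.eq_iff.1 hc with ⟨h2, _⟩ | ⟨h2, _⟩
          · exact a.2 h2.symm
          · exact b.2 h2.symm
    have hra : (T \ fromEdgeSet {s(a.1, b.1)}).Reachable a.1 b.1 :=
      hreach.elim fun p => reach_of_walk Subtype.val key p
    exact bridge_no_reach ht h1 hra
  · exact cT_case2 ht hxy hab hay hxb hreach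
  · have h := hreach.symm
    rw [show s(a, b) = s(b, a) from Sym2.eq_swap] at h
    exact cT_case2 ht hxy hab.symm hby hxa h

lemma cT_isTree (ht : T.IsTree) (hxy : T.Adj x y) : (cT T x y).IsTree :=
  ⟨cT_connected ht hxy, cT_acyclic ht hxy⟩

end Acyclic

section Nbr

variable {x y : W}

lemma injOn_nbr (ht : T.IsTree) (hxy : T.Adj x y) {a : W} (hax : a ≠ x) (hay : a ≠ y) :
    Set.InjOn (cf hxy.ne') (T.neighborSet a) := by
  intro u hu v hv h
  rcases cf_eq_cases hxy.ne' h with h | ⟨h1, h2⟩ | ⟨h1, h2⟩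
  · exact h
  · exact absurd hxy (fun hh => no_triangle ht (h1 ▸ hu : T.Adj a x) hh (h2 ▸ hv : T.Adj a y))
  · exact absurd hxy (fun hh => no_triangle ht (h2 ▸ hv : T.Adj a x) hh (h1 ▸ hu : T.Adj a y))

lemma nbr_A (ht : T.IsTree) (hxy : T.Adj x y) {s : Set W} (hconv : Conv T s)
    (hsxy : x ∈ s → y ∈ s) {a : {w : W // w ≠ x}} (hay : a.1 ≠ y) (has : a.1 ∈ s) :
    (cT T x y).neighborSet a ∩ (cf hxy.ne' '' s) = cf hxy.ne' '' (T.neighborSet a.1 ∩ s) := by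
  ext b
  simp only [Set.mem_inter_iff, Set.mem_image, mem_neighborSet]
  constructor
  · rintro ⟨⟨hne, hcase⟩, w₀, hw₀, rfl⟩
    rcases hcase with h | ⟨h1, _⟩ | ⟨h1, h2⟩
    · by_cases hw : w₀ = x
      · rw [hw, cf_of_eq] at h ⊢
        exact ⟨y, ⟨h, hsxy (hw ▸ hw₀)⟩, cf_of_ne hxy.ne' hxy.ne'⟩
      · rw [cf_of_ne hxy.ne' hw] at h ⊢
        exact ⟨w₀, ⟨h, hw₀⟩, cf_of_ne hxy.ne' hw⟩
    · exact absurd h1 hay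
    · by_cases hw : w₀ = x
      · rw [hw, cf_of_eq]
        exact ⟨x, ⟨h2.symm, hw ▸ hw₀⟩, cf_of_eq hxy.ne'⟩
      · rw [cf_of_ne hxy.ne' hw] at h1
        have hxs : x ∈ s := x_mem_conv ht hconv hxy h2 (fun h => hay h.symm)
          (h1 ▸ hw₀) has
        refine ⟨x, ⟨h2.symm, hxs⟩, ?_⟩
        rw [cf_of_eq, cf_of_ne hxy.ne' hw]
        exact Subtype.ext h1.symm
  · rintro ⟨w, ⟨hadj, hws⟩, rfl⟩
    by_cases hw : w = x
    · rw [hw, cf_of_eq]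
      refine ⟨⟨fun h => hay (congrArg Subtype.val h),
        Or.inr (Or.inr ⟨rfl, (hw ▸ hadj : T.Adj a.1 x).symm⟩)⟩,
        y, hsxy (hw ▸ hws), cf_of_ne hxy.ne' hxy.ne'⟩
    · rw [cf_of_ne hxy.ne' hw]
      exact ⟨⟨fun h => hadj.ne (congrArg Subtype.val h), Or.inl hadj⟩,
        w, hws, cf_of_ne hxy.ne' hw⟩

lemma nbr_B (hxy : T.Adj x y) {s : Set W} (hx : x ∈ s) :
    Subtype.val '' ((cT T x y).neighborSet ⟨y, hxy.ne'⟩ ∩ (cf hxy.ne' '' s)) =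
      ((T.neighborSet y ∩ s) \ {x}) ∪ ((T.neighborSet x ∩ s) \ {y}) := by
  ext b
  simp only [Set.mem_image, Set.mem_inter_iff, Set.mem_union, Set.mem_diff,
    Set.mem_singleton_iff, mem_neighborSet]
  constructor
  · rintro ⟨c, ⟨⟨hne, hcase⟩, w₀, hw₀, hw₀e⟩, rfl⟩
    have hcy : c.1 ≠ y := fun h => hne (Subtype.ext h).symm
    have hcs : c.1 ∈ s := by
      by_cases hw : w₀ = x
      · exact absurd (by rw [← hw₀e, hw, cf_of_eq]) hcy
      · rw [← hw₀e, cf_of_ne hxy.ne' hw]; exact hw₀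
    rcases hcase with h | ⟨_, h⟩ | ⟨h1, _⟩
    · exact Or.inl ⟨⟨(h : T.Adj y c.1), hcs⟩, c.2⟩
    · exact Or.inr ⟨⟨h, hcs⟩, hcy⟩
    · exact absurd h1 hcy
  · rintro (⟨⟨hadj, hbs⟩, hbx⟩ | ⟨⟨hadj, hbs⟩, hby⟩)
    · refine ⟨⟨b, hbx⟩, ⟨⟨fun h => hadj.ne (congrArg Subtype.val h),
        Or.inl (show T.Adj y b from hadj)⟩, b, hbs, cf_of_ne hxy.ne' hbx⟩, rfl⟩
    · refine ⟨⟨b, hadj.ne'⟩, ⟨⟨fun h => hby (congrArg Subtype.val h).symm,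
        Or.inr (Or.inl ⟨rfl, hadj⟩)⟩, b, hbs, cf_of_ne hxy.ne' hadj.ne'⟩, rfl⟩

lemma nbr_B' (ht : T.IsTree) (hxy : T.Adj x y) {s : Set W} (hconv : Conv T s)
    (hxs : x ∉ s) (hy : y ∈ s) :
    Subtype.val '' ((cT T x y).neighborSet ⟨y, hxy.ne'⟩ ∩ (cf hxy.ne' '' s)) =
      T.neighborSet y ∩ s := by
  ext b
  simp only [Set.mem_image, Set.mem_inter_iff, mem_neighborSet]
  constructor
  · rintro ⟨c, ⟨⟨hne, hcase⟩, w₀, hw₀, hw₀e⟩, rfl⟩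
    have hcy : c.1 ≠ y := fun h => hne (Subtype.ext h).symm
    have hcs : c.1 ∈ s := by
      by_cases hw : w₀ = x
      · exact absurd (hw ▸ hw₀) hxs
      · rw [← hw₀e, cf_of_ne hxy.ne' hw]; exact hw₀
    rcases hcase with h | ⟨_, h⟩ | ⟨h1, _⟩
    · exact ⟨(h : T.Adj y c.1), hcs⟩
    · exact absurd (x_mem_conv ht hconv hxy h (fun hh => hcy hh.symm) hy hcs) hxs
    · exact absurd h1 hcy
  · rintro ⟨hadj, hbs⟩
    have hbx : b ≠ x := fun h => hxs (h ▸ hbs)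
    refine ⟨⟨b, hbx⟩, ⟨⟨fun h => hadj.ne (congrArg Subtype.val h),
      Or.inl (show T.Adj y b from hadj)⟩, b, hbs, cf_of_ne hxy.ne' hbx⟩, rfl⟩

end Nbr

section SubLeaves

variable {x y : W}

open Classical in
lemma contract_subLeaves [Finite W] (ht : T.IsTree) (hxy : T.Adj x y) {s : Set W}
    (hconv : Conv T s) (hsxy : x ∈ s → y ∈ s) :
    numSubLeaves (cT T x y) (cf hxy.ne' '' s) ≤ numSubLeaves T s := by
  set A := T.neighborSet y ∩ s with hA
  set B := T.neighborSet x ∩ s with hB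
  set ψ : {w : W // w ≠ x} → W :=
    fun b => if b.1 = y ∧ x ∈ s ∧ B.ncard = 1 then x else b.1 with hψ
  have hmem_s : ∀ b : {w : W // w ≠ x}, b ∈ (cf hxy.ne' '' s) → b.1 ≠ y → b.1 ∈ s := by
    rintro b ⟨w₀, hw₀, rfl⟩ hby
    by_cases hw : w₀ = x
    · exact absurd (by rw [hw, cf_of_eq]) hby
    · rw [cf_of_ne hxy.ne' hw]; exact hw₀
  have hmaps : ∀ b ∈ subLeaves (cT T x y) (cf hxy.ne' '' s), ψ b ∈ subLeaves T s := by
    rintro b ⟨hbs, hcard⟩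
    by_cases hcond : b.1 = y ∧ x ∈ s ∧ B.ncard = 1
    · rw [hψ]
      simp only [if_pos hcond]
      exact ⟨hcond.2.1, hcond.2.2⟩
    · rw [hψ]
      simp only [if_neg hcond]
      by_cases hby : b.1 = y
      · have hb' : b = ⟨y, hxy.ne'⟩ := Subtype.ext hby
        rw [hb'] at hcard
        have hval : (Subtype.val '' ((cT T x y).neighborSet ⟨y, hxy.ne'⟩ ∩
            (cf hxy.ne' '' s))).ncard = 1 := by
          rw [Set.ncard_image_of_injective _ Subtype.val_injective]
          exact hcard
        by_cases hxs : x ∈ s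
        · have hys : y ∈ s := hsxy hxs
          rw [nbr_B hxy hxs] at hval
          have hdisj : Disjoint (A \ {x}) (B \ {y}) := by
            rw [Set.disjoint_left]
            rintro z ⟨⟨hz1, _⟩, _⟩ ⟨⟨hz2, _⟩, _⟩
            exact no_triangle ht hxy hz1 hz2
          rw [Set.ncard_union_eq hdisj] at hval
          have hxA : x ∈ A := ⟨hxy.symm, hxs⟩
          have hyB : y ∈ B := ⟨hxy, hys⟩
          rw [Set.ncard_diff_singleton_of_mem hxA, Set.ncard_diff_singleton_of_mem hyB] at hval
          have hApos : 0 < A.ncard := (Set.ncard_pos).2 ⟨x, hxA⟩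
          have hBpos : 0 < B.ncard := (Set.ncard_pos).2 ⟨y, hyB⟩
          have hBne : B.ncard ≠ 1 := fun h => hcond ⟨hby, hxs, h⟩
          have hA1 : A.ncard = 1 := by omega
          exact ⟨hby ▸ hys, by rw [hby]; exact hA1⟩
        · have hys : y ∈ s := by
            rcases hbs with ⟨w₀, hw₀, hw₀e⟩
            by_cases hw : w₀ = x
            · exact absurd (hw ▸ hw₀) hxs
            · have h2 := hw₀e
              rw [cf_of_ne hxy.ne' hw] at h2
              exact ((congrArg Subtype.val h2).trans hby) ▸ hw₀
          rw [nbr_B' ht hxy hconv hxs hys] at hval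
          exact ⟨hby ▸ hys, by rw [hby]; exact hval⟩
      · have hbs' : b.1 ∈ s := hmem_s b hbs hby
        rw [nbr_A ht hxy hconv hsxy hby hbs',
          Set.ncard_image_of_injOn ((injOn_nbr ht hxy b.2 hby).mono
            Set.inter_subset_left)] at hcard
        exact ⟨hbs', hcard⟩
  have hinj : Set.InjOn ψ (subLeaves (cT T x y) (cf hxy.ne' '' s)) := by
    intro b hb b' hb' heq
    rw [hψ] at heq
    by_cases h1 : b.1 = y ∧ x ∈ s ∧ B.ncard = 1 <;>
      by_cases h2 : b'.1 = y ∧ x ∈ s ∧ B.ncard = 1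
    · exact Subtype.ext (h1.1.trans h2.1.symm)
    · simp only [if_pos h1, if_neg h2] at heq
      exact absurd heq.symm b'.2
    · simp only [if_neg h1, if_pos h2] at heq
      exact absurd heq b.2
    · simp only [if_neg h1, if_neg h2] at heq
      exact Subtype.ext heq
  calc numSubLeaves (cT T x y) (cf hxy.ne' '' s)
      = (ψ '' subLeaves (cT T x y) (cf hxy.ne' '' s)).ncard :=
        (Set.ncard_image_of_injOn hinj).symm
    _ ≤ numSubLeaves T s := Set.ncard_le_ncard (by rintro z ⟨b, hb, rfl⟩; exact hmaps b hb)
        (Set.toFinite _)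

lemma leaves_eq_subLeaves_univ (T : SimpleGraph W) : leaves T = subLeaves T Set.univ := by
  ext w
  simp [leaves, subLeaves, deg]

lemma contract_numLeaves [Finite W] (ht : T.IsTree) (hxy : T.Adj x y) :
    numLeaves (cT T x y) ≤ numLeaves T := by
  have h1 : cf hxy.ne' '' Set.univ = Set.univ :=
    Set.image_univ_of_surjective (cf_surj hxy.ne')
  have := contract_subLeaves (s := Set.univ) ht hxy
    (fun u v p hp hu hv w hw => trivial) (fun _ => trivial)
  rw [h1] at this
  rw [numLeaves, numLeaves, leaves_eq_subLeaves_univ, leaves_eq_subLeaves_univ]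
  exact this

end SubLeaves

section Model

variable {V : Type} {G : SimpleGraph V}

/-- Contraction of a tree model along an edge x-y with x's label set contained in y's. -/
noncomputable def contractModel (M : TreeModel G) {x y : M.W} (hxy : M.T.Adj x y)
    (hsub : ∀ u, x ∈ M.sub u → y ∈ M.sub u) : TreeModel G where
  W := {w : M.W // w ≠ x}
  finW := by haveI := M.finW; infer_instance
  T := cT M.T x y
  tree := cT_isTree M.tree hxy
  sub u := cf hxy.ne' '' M.sub u
  sub_nonempty u := (M.sub_nonempty u).image _
  sub_conn u := cT_induce_connected M.tree hxy (M.sub_conn u)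
  adj_iff u v huv := by
    rw [M.adj_iff u v huv]
    constructor
    · rintro ⟨w, hw1, hw2⟩
      exact ⟨cf hxy.ne' w, ⟨w, hw1, rfl⟩, ⟨w, hw2, rfl⟩⟩
    · rintro ⟨z, ⟨w1, hw1, rfl⟩, ⟨w2, hw2, he⟩⟩
      rcases cf_eq_cases hxy.ne' he with h | ⟨h1, h2⟩ | ⟨h1, h2⟩
      · exact ⟨w1, hw1, h ▸ hw2⟩
      · exact ⟨y, h2 ▸ hw1, hsub v (h1 ▸ hw2)⟩
      · exact ⟨y, hsub u (h2 ▸ hw1), h1 ▸ hw2⟩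

lemma contractModel_card (M : TreeModel G) {x y : M.W} (hxy : M.T.Adj x y)
    (hsub : ∀ u, x ∈ M.sub u → y ∈ M.sub u) :
    Nat.card (contractModel M hxy hsub).W < Nat.card M.W := by
  haveI := M.finW
  haveI : Fintype M.W := Fintype.ofFinite _
  show Nat.card {w : M.W // w ≠ x} < Nat.card M.W
  simp only [Nat.card_eq_fintype_card]
  exact Fintype.card_subtype_lt (x := x) (by simp)

lemma contractModel_numLeaves (M : TreeModel G) {x y : M.W} (hxy : M.T.Adj x y)
    (hsub : ∀ u, x ∈ M.sub u → y ∈ M.sub u) :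
    numLeaves (contractModel M hxy hsub).T ≤ numLeaves M.T := by
  haveI := M.finW
  exact contract_numLeaves M.tree hxy

lemma contractModel_numSubLeaves (M : TreeModel G) {x y : M.W} (hxy : M.T.Adj x y)
    (hsub : ∀ u, x ∈ M.sub u → y ∈ M.sub u) (u : V) :
    numSubLeaves (contractModel M hxy hsub).T ((contractModel M hxy hsub).sub u) ≤
      numSubLeaves M.T (M.sub u) := by
  haveI := M.finW
  exact contract_subLeaves M.tree hxy (conv_of_connected M.tree (M.sub_conn u)) (hsub u)

end Model

section Main

variable {V : Type} [Fintype V] {G : SimpleGraph V}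

lemma model_point (M' : TreeModel G) (K : Set V) (hKne : K.Nonempty)
    (hKcl : ∀ u ∈ K, ∀ v ∈ K, u ≠ v → G.Adj u v) :
    ∃ z : M'.W, ∀ u ∈ K, z ∈ M'.sub u := by
  classical
  haveI := M'.finW
  set F : Finset (Set M'.W) := (Set.toFinite K).toFinset.image M'.sub with hF
  have hFne : F.Nonempty := by
    obtain ⟨u, hu⟩ := hKne
    exact ⟨M'.sub u, Finset.mem_image.2 ⟨u, (Set.Finite.mem_toFinset _).2 hu, rfl⟩⟩
  have hconv : ∀ s ∈ F, Conv M'.T s := by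
    intro s hs
    obtain ⟨u, _, rfl⟩ := Finset.mem_image.1 hs
    exact conv_of_connected M'.tree (M'.sub_conn u)
  have hpair : ∀ s ∈ F, ∀ t ∈ F, (s ∩ t).Nonempty := by
    intro s hs t ht
    obtain ⟨u, hu, rfl⟩ := Finset.mem_image.1 hs
    obtain ⟨v, hv, rfl⟩ := Finset.mem_image.1 ht
    by_cases huv : u = v
    · subst huv
      rw [Set.inter_self]
      exact M'.sub_nonempty u
    · exact (M'.adj_iff u v huv).1 (hKcl u ((Set.Finite.mem_toFinset _).1 hu)
        v ((Set.Finite.mem_toFinset _).1 hv) huv)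
  obtain ⟨z, hz⟩ := helly M'.tree F.card F rfl hFne hconv hpair
  refine ⟨z, fun u hu => ?_⟩
  exact hz (M'.sub u) (Finset.mem_coe.2 (Finset.mem_image.2
    ⟨u, (Set.Finite.mem_toFinset _).2 hu, rfl⟩))

lemma minimal_of_no_contract (M : TreeModel G)
    (hno : ∀ x y : M.W, M.T.Adj x y → ¬(∀ u, x ∈ M.sub u → y ∈ M.sub u)) :
    ∀ M'' : TreeModel G, Nat.card M.W ≤ Nat.card M''.W := by
  classical
  haveI := M.finW
  intro M''
  haveI := M''.finW
  haveI : Nonempty M''.W := M''.tree.isConnected.nonempty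
  by_cases hsmall : Nat.card M.W ≤ 1
  · have : 0 < Nat.card M''.W := Nat.card_pos
    omega
  · haveI : Nontrivial M.W := by
      rw [← Finite.one_lt_card_iff_nontrivial]
      omega
    -- each node's label set is nonempty
    have hCne : ∀ w : M.W, {u : V | w ∈ M.sub u}.Nonempty := by
      intro w
      by_contra h
      rw [Set.not_nonempty_iff_eq_empty] at h
      obtain ⟨w', hw'⟩ := exists_ne w
      obtain ⟨p⟩ := M.tree.isConnected w w'
      cases p with
      | nil => exact hw' rfl
      | cons hadj ptail =>
        exact hno _ _ hadj (fun u hu => absurd (show u ∈ {u : V | w ∈ M.sub u} from hu)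
          (by rw [h]; exact Set.notMem_empty u))
    -- the key uniqueness property
    have key : ∀ (w0 z : M.W), (∀ u, w0 ∈ M.sub u → z ∈ M.sub u) → z = w0 := by
      intro w0 z hzmem
      by_contra hzw
      set S : Set M.W := {m | ∀ u, w0 ∈ M.sub u → m ∈ M.sub u} with hS
      have hSconv : Conv M.T S := by
        intro a b p hp ha hb m hm u hu
        exact conv_of_connected M.tree (M.sub_conn u) p hp (ha u hu) (hb u hu) m hm
      have hwS : w0 ∈ S := fun u hu => hu
      have hzS : z ∈ S := hzmem
      obtain ⟨p0⟩ := M.tree.isConnected w0 z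
      obtain ⟨p, hp⟩ := p0.toPath
      cases p with
      | nil => exact hzw rfl
      | @cons _ w₁ _ hadj ptail =>
        have hw₁ : w₁ ∈ S := hSconv _ hp hwS hzS w₁ (by simp)
        exact hno _ _ hadj (fun u hu => hw₁ u hu)
    -- injection into M''
    have hclique : ∀ w : M.W, ∀ u ∈ {u : V | w ∈ M.sub u}, ∀ v ∈ {u : V | w ∈ M.sub u},
        u ≠ v → G.Adj u v := by
      intro w u hu v hv huv
      exact (M.adj_iff u v huv).2 ⟨w, hu, hv⟩
    have hφ : ∀ w : M.W, ∃ z : M''.W, ∀ u ∈ {u : V | w ∈ M.sub u}, z ∈ M''.sub u :=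
      fun w => model_point M'' _ (hCne w) (hclique w)
    choose φ hφspec using hφ
    have hinj : Function.Injective φ := by
      intro w w' heq
      by_contra hne
      set K : Set V := {u : V | w ∈ M.sub u} ∪ {u : V | w' ∈ M.sub u} with hK
      have hzK : ∀ u ∈ K, φ w ∈ M''.sub u := by
        rintro u (hu | hu)
        · exact hφspec w u hu
        · exact heq ▸ hφspec w' u hu
      have hKcl : ∀ u ∈ K, ∀ v ∈ K, u ≠ v → G.Adj u v := by
        intro u hu v hv huv
        exact (M''.adj_iff u v huv).2 ⟨φ w, hzK u hu, hzK v hv⟩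
      obtain ⟨z, hz⟩ := model_point M K ((hCne w).mono Set.subset_union_left) hKcl
      have h1 : z = w := key w z (fun u hu => hz u (Or.inl hu))
      have h2 : z = w' := key w' z (fun u hu => hz u (Or.inr hu))
      exact hne (h1 ▸ h2)
    exact Nat.card_le_card_of_injective φ hinj

end Main

end Aux

/-- For every chordal graph `G` and every tree model `(T, {T_u})` of `G`, there exists a
minimal tree model `(T', {T'_u})` of `G` (fewest host-tree nodes among all tree models)
with `|L(T')| ≤ |L(T)|` and `|L(T'_u)| ≤ |L(T_u)|` for every vertex `u`. -/
theorem stmt2 {V : Type} [Fintype V] (G : SimpleGraph V) (M : TreeModel G) :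
    ∃ M' : TreeModel G,
      (∀ M'' : TreeModel G, Nat.card M'.W ≤ Nat.card M''.W) ∧
      numLeaves M'.T ≤ numLeaves M.T ∧
      (∀ u, numSubLeaves M'.T (M'.sub u) ≤ numSubLeaves M.T (M.sub u)) := by
  classical
  suffices h : ∀ (n : ℕ) (M : TreeModel G), Nat.card M.W ≤ n →
      ∃ M' : TreeModel G,
        (∀ M'' : TreeModel G, Nat.card M'.W ≤ Nat.card M''.W) ∧
        numLeaves M'.T ≤ numLeaves M.T ∧
        (∀ u, numSubLeaves M'.T (M'.sub u) ≤ numSubLeaves M.T (M.sub u)) by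
    exact h (Nat.card M.W) M le_rfl
  intro n
  induction n with
  | zero =>
    intro M hM
    exfalso
    haveI := M.finW
    haveI : Nonempty M.W := M.tree.isConnected.nonempty
    have : 0 < Nat.card M.W := Nat.card_pos
    omega
  | succ n ih =>
    intro M hM
    by_cases hno : ∀ x y : M.W, M.T.Adj x y → ¬(∀ u, x ∈ M.sub u → y ∈ M.sub u)
    · exact ⟨M, minimal_of_no_contract M hno, le_rfl, fun u => le_rfl⟩
    · push_neg at hno
      obtain ⟨x, y, hxy, hsub⟩ := hno
      have hcard := contractModel_card M hxy hsub
      obtain ⟨M', hmin, hl, hsl⟩ := ih (contractModel M hxy hsub) (by omega)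
      exact ⟨M', hmin, hl.trans (contractModel_numLeaves M hxy hsub),
        fun u => (hsl u).trans (contractModel_numSubLeaves M hxy hsub u)⟩
end

section
/- Let C_1, …, C_m be subsets of {v_1, …, v_n} and suppose there exist distinct indices i, i⁺ such that v_{i⁺} ∈ C_j for every j with v_i ∈ C_j. Let the reduced instance consist of those clauses C_j with v_i ∉ C_j, over the variable set {v_1, …, v_n} \ {v_i}. Then the original instance has a solution if and only if the reduced instance has a solution. More precisely: if S solves the original instance then S \ {v_i} solves the reduced instance; and if S solves the reduced instance, then S solves the original instance when v_{i⁺} ∈ S, and S ∪ {v_i} solves the original instance when v_{i⁺} ∉ S. -/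
/-- A solution of a (monotone) NOT-ALL-EQUAL instance with clauses `C j`:
a set `S` meeting every clause and missing part of every clause. -/
def IsNAESolution {n m : ℕ} (C : Fin m → Set (Fin n)) (S : Set (Fin n)) : Prop :=
  ∀ j, (C j ∩ S).Nonempty ∧ (C j \ S).Nonempty

/-- Suppose there are distinct indices `i ≠ i'` such that `v_{i'} ∈ C_j` whenever
`v_i ∈ C_j`. Form the reduced instance by removing the variable `v_i` and all clauses
containing it (a solution of the reduced instance is a set avoiding `v_i` which is a
NAE-solution for all clauses not containing `v_i`). Then the original instance has a
solution iff the reduced one does; more precisely, if `S` solves the original instance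
then `S \ {i}` solves the reduced one, and if `S` solves the reduced one then `S` solves
the original instance when `i' ∈ S`, and `S ∪ {i}` solves it when `i' ∉ S`. -/
theorem stmt9 {n m : ℕ} (C : Fin m → Set (Fin n)) (i i' : Fin n) (hne : i ≠ i')
    (hdom : ∀ j, i ∈ C j → i' ∈ C j) :
    ((∃ S, IsNAESolution C S) ↔
      (∃ S, i ∉ S ∧ ∀ j, i ∉ C j → (C j ∩ S).Nonempty ∧ (C j \ S).Nonempty)) ∧
    (∀ S, IsNAESolution C S →
      (i ∉ S \ {i} ∧ ∀ j, i ∉ C j →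
        (C j ∩ (S \ {i})).Nonempty ∧ (C j \ (S \ {i})).Nonempty)) ∧
    (∀ S, i ∉ S → (∀ j, i ∉ C j → (C j ∩ S).Nonempty ∧ (C j \ S).Nonempty) →
      ((i' ∈ S → IsNAESolution C S) ∧
       (i' ∉ S → IsNAESolution C (S ∪ {i})))) := by
  have fwd : ∀ S, IsNAESolution C S →
      (i ∉ S \ {i} ∧ ∀ j, i ∉ C j →
        (C j ∩ (S \ {i})).Nonempty ∧ (C j \ (S \ {i})).Nonempty) := by
    intro S hS
    refine ⟨fun h => h.2 rfl, fun j hij => ?_⟩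
    obtain ⟨⟨x, hx1, hx2⟩, ⟨y, hy1, hy2⟩⟩ := hS j
    exact ⟨⟨x, hx1, hx2, fun h => hij (h ▸ hx1)⟩, ⟨y, hy1, fun h => hy2 h.1⟩⟩
  have bwd : ∀ S, i ∉ S → (∀ j, i ∉ C j → (C j ∩ S).Nonempty ∧ (C j \ S).Nonempty) →
      ((i' ∈ S → IsNAESolution C S) ∧ (i' ∉ S → IsNAESolution C (S ∪ {i}))) := by
    intro S hiS hS
    constructor
    · intro hi'S j
      by_cases hij : i ∈ C j
      · exact ⟨⟨i', hdom j hij, hi'S⟩, ⟨i, hij, hiS⟩⟩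
      · exact hS j hij
    · intro hi'S j
      by_cases hij : i ∈ C j
      · refine ⟨⟨i, hij, Or.inr rfl⟩, ⟨i', hdom j hij, ?_⟩⟩
        rintro (h | h)
        · exact hi'S h
        · exact hne h.symm
      · obtain ⟨⟨x, hx1, hx2⟩, ⟨y, hy1, hy2⟩⟩ := hS j hij
        refine ⟨⟨x, hx1, Or.inl hx2⟩, ⟨y, hy1, ?_⟩⟩
        rintro (h | h)
        · exact hy2 h
        · exact hij (h ▸ hy1)
  refine ⟨⟨fun ⟨S, hS⟩ => ⟨S \ {i}, fwd S hS⟩, fun ⟨S, hiS, hS⟩ => ?_⟩, fwd, bwd⟩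
  by_cases h : i' ∈ S
  · exact ⟨S, (bwd S hiS hS).1 h⟩
  · exact ⟨S ∪ {i}, (bwd S hiS hS).2 h⟩
end

section
/- Let G be a chordal graph, let T* be a clique tree of G, and let F = Ee(T*). Define the graph G' with V(G') = V(G) ∪ {v_e : e ∈ F} and E(G') = E(G) ∪ {u v_e : e = CC' ∈ F, u ∈ C ∪ C'} ∪ {v_e v_{e'} : e, e' ∈ F share an endpoint}. Then: G' is chordal; the leafage of G' satisfies ℓ(G') ≤ |L(T*)|; and the map φ defined by φ(C) = C ∪ {v_e : C is an endpoint of e} is a bijection between the maximal cliques of G and the maximal cliques of G'. -/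
open SimpleGraph

/-- The auxiliary graph `G'` obtained from `G` and the edge set `F = Ee(T*)` of a clique
tree `T*` of `G`: a new vertex `v_e` is added for each edge `e ∈ F`; `v_e` is adjacent to
all vertices of the two endpoints (maximal cliques) of `e`, and to all `v_{e'}` where `e`
and `e'` share an endpoint. -/
def Gprime {V : Type} (G : SimpleGraph V) (CT : CliqueTree G) :
    SimpleGraph (V ⊕ {e : Sym2 (MaxCliques G) // e ∈ Ee CT.T}) :=
  SimpleGraph.fromRel (fun a b =>
    match a, b with
    | Sum.inl u, Sum.inl v => G.Adj u v
    | Sum.inl u, Sum.inr e => ∃ D ∈ e.1, u ∈ D.1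
    | Sum.inr e, Sum.inl u => ∃ D ∈ e.1, u ∈ D.1
    | Sum.inr e, Sum.inr e' => ∃ D, D ∈ e.1 ∧ D ∈ e'.1)

/-- The map `φ(C) = C ∪ {v_e : C is an endpoint of e}` from sets of vertices of `G` to
sets of vertices of `G'`. -/
def phiMap {V : Type} (G : SimpleGraph V) (CT : CliqueTree G) (Cset : Set V) :
    Set (V ⊕ {e : Sym2 (MaxCliques G) // e ∈ Ee CT.T}) :=
  Sum.inl '' Cset ∪ Sum.inr '' {e | ∃ D ∈ e.1, D.1 = Cset}
set_option linter.unusedSectionVars false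
namespace Stmt10Aux

variable {W : Type*} {T : SimpleGraph W}

lemma isPath_concat {a b c : W} {p : T.Walk a b}
    (hp : p.IsPath) (h : T.Adj b c) (hc : c ∉ p.support) : (p.concat h).IsPath := by
  rw [Walk.isPath_def, Walk.support_concat]
  rw [Walk.isPath_def] at hp
  simp [List.concat_eq_append, List.nodup_append, hp, hc]
  exact fun a ha h => hc (h ▸ ha)

lemma reachable_induce_of_walk {S : Set W} :
    ∀ {a b : W} (p : T.Walk a b) (ha : a ∈ S) (hb : b ∈ S),
      (∀ x ∈ p.support, x ∈ S) → (T.induce S).Reachable ⟨a, ha⟩ ⟨b, hb⟩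
  | _, _, Walk.nil, _, _, _ => Reachable.refl _
  | a, b, @Walk.cons _ _ _ c _ h q, ha, hb, hs => by
      have hc : c ∈ S := hs c (by simp)
      have h1 : (T.induce S).Adj ⟨a, ha⟩ ⟨c, hc⟩ := by
        simp only [comap_adj, Function.Embedding.coe_subtype]
        exact h
      exact h1.reachable.trans
        (reachable_induce_of_walk q hc hb fun x hx => hs x (by simp [hx]))

lemma induce_connected_of_vconn {S : Set W} (hne : S.Nonempty)
    (h : ∀ a ∈ S, ∀ b ∈ S, ∃ p : T.Walk a b, ∀ x ∈ p.support, x ∈ S) :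
    (T.induce S).Connected := by
  obtain ⟨s0, hs0⟩ := hne
  have : Nonempty S := ⟨⟨s0, hs0⟩⟩
  refine ⟨fun a b => ?_⟩
  obtain ⟨p, hp⟩ := h a.1 a.2 b.1 b.2
  have := reachable_induce_of_walk p a.2 b.2 hp
  simpa using this


lemma exists_path_length_dist (ht : T.Connected) (u v : W) :
    ∃ p : T.Walk u v, p.IsPath ∧ p.length = T.dist u v := by
  obtain ⟨p, hp⟩ := ht.exists_walk_length_eq_dist u v
  exact ⟨p, p.isPath_of_length_eq_dist hp, hp⟩

lemma exists_semi_leaf [Finite W] (ht : T.IsTree) (U : Set W) (hU : U.Nonempty) :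
    ∃ l ∈ U, ∃ n : W, ∀ x, T.Adj l x → x ∈ U → x = n := by
  classical
  obtain ⟨u0, hu0⟩ := hU
  obtain ⟨l, hlU, hmax⟩ := Set.Finite.exists_maximalFor (T.dist u0) U (Set.toFinite U) ⟨u0, hu0⟩
  have hle : ∀ x ∈ U, T.dist u0 x ≤ T.dist u0 l := by
    intro x hx
    by_contra hlt
    push_neg at hlt
    have := hmax hx hlt.le
    omega
  refine ⟨l, hlU, ?_⟩
  have step : ∀ x, T.Adj l x → x ∈ U → ∃ r : T.Walk l u0, r.IsPath ∧ r.getVert 1 = x := by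
    intro x hxa hxU
    obtain ⟨q, hq, hlen⟩ := exists_path_length_dist ht.isConnected u0 x
    have hnot : l ∉ q.support := by
      intro hmem
      have h1 : T.dist u0 l ≤ (q.takeUntil l hmem).length := dist_le _
      have h2 : T.dist l x ≤ (q.dropUntil l hmem).length := dist_le _
      have h3 : (q.takeUntil l hmem).length + (q.dropUntil l hmem).length = q.length := by
        rw [← Walk.length_append, Walk.take_spec]
      have h5 : T.dist l x ≠ 0 :=
        dist_ne_zero_iff_ne_and_reachable.mpr ⟨hxa.ne, ht.isConnected.preconnected l x⟩
      have := hle x hxU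
      omega
    refine ⟨(q.concat hxa.symm).reverse, (isPath_concat hq hxa.symm hnot).reverse, ?_⟩
    rw [Walk.reverse_concat, Walk.getVert_cons_succ, Walk.getVert_zero]
  have key : ∀ x, T.Adj l x → x ∈ U → ∀ y, T.Adj l y → y ∈ U → x = y := by
    intro x hxa hxU y hya hyU
    obtain ⟨r1, hr1, he1⟩ := step x hxa hxU
    obtain ⟨r2, hr2, he2⟩ := step y hya hyU
    have : (⟨r1, hr1⟩ : T.Path l u0) = ⟨r2, hr2⟩ := ht.IsAcyclic.path_unique _ _
    rw [← he1, ← he2]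
    have : r1 = r2 := congrArg Subtype.val this
    rw [this]
  by_cases hex : ∃ x, T.Adj l x ∧ x ∈ U
  · obtain ⟨x0, hx0a, hx0U⟩ := hex
    exact ⟨x0, fun x hxa hxU => key x hxa hxU x0 hx0a hx0U⟩
  · push_neg at hex
    exact ⟨u0, fun x hxa hxU => absurd hxU (hex x hxa)⟩


lemma snd_of_walk {a b : W} (p : T.Walk a b) (hab : a ≠ b) :
    ∃ c, T.Adj a c ∧ c ∈ p.support ∧ c ∈ p.support.tail := by
  cases p with
  | nil => exact absurd rfl hab
  | cons h q => exact ⟨_, h, by simp, by simp⟩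

lemma helly [Finite W] [Nonempty W] (ht : T.IsTree) :
    ∀ (n : ℕ) (F : Set (Set W)),
      (⋃₀ F).ncard ≤ n →
      (∀ S ∈ F, S.Nonempty) →
      (∀ S ∈ F, ∀ a ∈ S, ∀ b ∈ S, ∃ p : T.Walk a b, ∀ x ∈ p.support, x ∈ S) →
      (∀ S ∈ F, ∀ S' ∈ F, (S ∩ S').Nonempty) →
      ∃ c, ∀ S ∈ F, c ∈ S := by
  classical
  intro n
  induction n with
  | zero =>
    intro F hcard hne hconn hpair
    rcases Set.eq_empty_or_nonempty F with hF | ⟨S0, hS0⟩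
    · exact ⟨Classical.arbitrary W, by simp [hF]⟩
    · obtain ⟨a, ha⟩ := hne S0 hS0
      have hmem : a ∈ ⋃₀ F := ⟨S0, hS0, ha⟩
      have h1 : (⋃₀ F).ncard = 0 := le_antisymm hcard (Nat.zero_le _)
      rw [Set.ncard_eq_zero (Set.toFinite _)] at h1
      rw [h1] at hmem
      exact absurd hmem (Set.notMem_empty a)
  | succ n ih =>
    intro F hcard hne hconn hpair
    rcases Set.eq_empty_or_nonempty F with hF | ⟨S0, hS0⟩
    · exact ⟨Classical.arbitrary W, by simp [hF]⟩
    by_cases hsing : ∃ S ∈ F, ∃ a, S = {a}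
    · obtain ⟨S, hS, a, rfl⟩ := hsing
      refine ⟨a, fun S' hS' => ?_⟩
      obtain ⟨x, hx1, hx2⟩ := hpair _ hS S' hS'
      rw [Set.mem_singleton_iff] at hx1
      rwa [hx1] at hx2
    · push_neg at hsing
      have htwo : ∀ S ∈ F, ∀ a ∈ S, ∃ b ∈ S, b ≠ a := by
        intro S hS a ha
        by_contra h
        push_neg at h
        exact hsing S hS a (Set.eq_singleton_iff_unique_mem.mpr ⟨ha, h⟩)
      have hUne : (⋃₀ F).Nonempty := by
        obtain ⟨a, ha⟩ := hne S0 hS0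
        exact ⟨a, S0, hS0, ha⟩
      obtain ⟨l, hlU, n0, hn0⟩ := exists_semi_leaf ht (⋃₀ F) hUne
      have hsubU : ∀ S ∈ F, S ⊆ ⋃₀ F := fun S hS x hx => ⟨S, hS, hx⟩
      have hstep : ∀ S ∈ F, l ∈ S → n0 ∈ S ∧ n0 ≠ l := by
        intro S hS hlS
        obtain ⟨t, htS, htl⟩ := htwo S hS l hlS
        obtain ⟨p, hp⟩ := hconn S hS l hlS t htS
        obtain ⟨c, hca, hcs, -⟩ := snd_of_walk p (fun h => htl (h ▸ rfl))
        have hcS : c ∈ S := hp c hcs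
        have : c = n0 := hn0 c hca (hsubU S hS hcS)
        exact ⟨this ▸ hcS, this ▸ hca.ne'⟩
      have havoid : ∀ S ∈ F, ∀ a ∈ S \ {l}, ∀ b ∈ S \ {l},
          ∃ p : T.Walk a b, ∀ x ∈ p.support, x ∈ S \ {l} := by
        intro S hS a ha b hb
        obtain ⟨p0, hp0⟩ := hconn S hS a ha.1 b hb.1
        refine ⟨p0.bypass, ?_⟩
        have hsupp : ∀ x ∈ p0.bypass.support, x ∈ S := fun x hx =>
          hp0 x (Walk.support_bypass_subset _ hx)
        have hpath := p0.bypass_isPath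
        intro x hx
        refine ⟨hsupp x hx, fun hxl => ?_⟩
        rw [Set.mem_singleton_iff] at hxl
        subst hxl
        -- x = l lies on the path; contradiction
        set q := p0.bypass with hqdef
        have hq1 := q.takeUntil x hx
        obtain ⟨c1, hc1a, hc1s, -⟩ := snd_of_walk (q.takeUntil x hx).reverse
          (fun h => ha.2 (by rw [Set.mem_singleton_iff]; exact h.symm ▸ rfl))
        obtain ⟨c2, hc2a, -, hc2t⟩ := snd_of_walk (q.dropUntil x hx)
          (fun h => hb.2 (by rw [Set.mem_singleton_iff]; exact h.symm ▸ rfl))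
        have hc1mem : c1 ∈ (q.takeUntil x hx).support := by
          rw [Walk.support_reverse] at hc1s
          exact (List.mem_reverse).mp hc1s
        have hc1S : c1 ∈ S := hsupp c1 ((Walk.support_takeUntil_subset q hx) hc1mem)
        have hc2S : c2 ∈ S := by
          have : c2 ∈ (q.dropUntil x hx).support := List.mem_of_mem_tail hc2t
          exact hsupp c2 ((Walk.support_dropUntil_subset q hx) this)
        have he1 : c1 = n0 := hn0 c1 hc1a (hsubU S hS hc1S)
        have he2 : c2 = n0 := hn0 c2 hc2a (hsubU S hS hc2S)
        have hspl : q.support = (q.takeUntil x hx).support ++ (q.dropUntil x hx).support.tail := by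
          rw [← Walk.support_append, Walk.take_spec]
        have hnd := hpath.support_nodup
        rw [hspl, List.nodup_append] at hnd
        exact hnd.2.2 _ hc1mem _ hc2t (he1.trans he2.symm)
      -- recurse on F' = image of (· \ {l})
      have hrec := ih ((fun S => S \ {l}) '' F) ?_ ?_ ?_ ?_
      · obtain ⟨c, hc⟩ := hrec
        exact ⟨c, fun S hS => ((hc (S \ {l}) ⟨S, hS, rfl⟩)).1⟩
      · -- card
        have hsub : ⋃₀ ((fun S => S \ {l}) '' F) ⊆ (⋃₀ F) \ {l} := by
          rintro x ⟨S', ⟨S, hS, rfl⟩, hx⟩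
          exact ⟨⟨S, hS, hx.1⟩, hx.2⟩
        have h1 : (⋃₀ ((fun S => S \ {l}) '' F)).ncard ≤ ((⋃₀ F) \ {l}).ncard :=
          Set.ncard_le_ncard hsub (Set.toFinite _)
        have h2 : ((⋃₀ F) \ {l}).ncard = (⋃₀ F).ncard - 1 :=
          Set.ncard_diff_singleton_of_mem hlU
        have h3 : 0 < (⋃₀ F).ncard := (Set.ncard_pos (Set.toFinite _)).mpr hUne
        omega
      · -- nonempty
        rintro S' ⟨S, hS, rfl⟩
        by_cases hlS : l ∈ S
        · obtain ⟨t, htS, htl⟩ := htwo S hS l hlS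
          exact ⟨t, htS, by simpa using htl⟩
        · obtain ⟨a, ha⟩ := hne S hS
          exact ⟨a, ha, by simp; rintro rfl; exact hlS ha⟩
      · -- conn
        rintro S' ⟨S, hS, rfl⟩
        exact havoid S hS
      · -- pairwise
        rintro S1 ⟨S, hS, rfl⟩ S2 ⟨S', hS', rfl⟩
        obtain ⟨x, hxS, hxS'⟩ := hpair S hS S' hS'
        by_cases hxl : x = l
        · subst hxl
          obtain ⟨hn1, hne1⟩ := hstep S hS hxS
          obtain ⟨hn2, hne2⟩ := hstep S' hS' hxS'
          exact ⟨n0, ⟨hn1, by simpa using hne1⟩, ⟨hn2, by simpa using hne2⟩⟩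
        · exact ⟨x, ⟨hxS, by simpa using hxl⟩, ⟨hxS', by simpa using hxl⟩⟩

end Stmt10Aux

namespace Stmt10Aux

lemma exists_maxclique {V : Type*} [Fintype V] (G : SimpleGraph V) {s : Set V}
    (hs : G.IsClique s) : ∃ C : Set V, IsMaxClique G C ∧ s ⊆ C := by
  classical
  obtain ⟨C, hC, hmax⟩ := Set.Finite.exists_maximalFor id {t : Set V | G.IsClique t ∧ s ⊆ t}
    (Set.toFinite _) ⟨s, hs, subset_rfl⟩
  exact ⟨C, ⟨hC.1, fun D hD hCD => Set.Subset.antisymm (hmax ⟨hD, hC.2.trans hCD⟩ hCD) hCD⟩, hC.2⟩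

variable {V : Type} [Fintype V] {G : SimpleGraph V} (CT : CliqueTree G)

/-- The subtree map of the tree model of `Gprime`. -/
def msub : V ⊕ {e : Sym2 (MaxCliques G) // e ∈ Ee CT.T} → Set (MaxCliques G)
  | Sum.inl u => cliqueSub G u
  | Sum.inr e => {C | C ∈ e.1}

lemma gprime_adj_inl_inl (u v : V) :
    (Gprime G CT).Adj (Sum.inl u) (Sum.inl v) ↔ u ≠ v ∧ G.Adj u v := by
  rw [Gprime, SimpleGraph.fromRel_adj]
  change Sum.inl u ≠ Sum.inl v ∧ (G.Adj u v ∨ G.Adj v u) ↔ _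
  constructor
  · rintro ⟨hne, h | h⟩
    · exact ⟨fun h' => hne (by rw [h']), h⟩
    · exact ⟨fun h' => hne (by rw [h']), h.symm⟩
  · rintro ⟨hne, h⟩
    exact ⟨by simpa using hne, Or.inl h⟩

lemma gprime_adj_inl_inr (u : V) (e : {e : Sym2 (MaxCliques G) // e ∈ Ee CT.T}) :
    (Gprime G CT).Adj (Sum.inl u) (Sum.inr e) ↔ ∃ D ∈ e.1, u ∈ D.1 := by
  rw [Gprime, SimpleGraph.fromRel_adj]
  change Sum.inl u ≠ Sum.inr e ∧ ((∃ D ∈ e.1, u ∈ D.1) ∨ (∃ D ∈ e.1, u ∈ D.1)) ↔ _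
  constructor
  · rintro ⟨-, h | h⟩ <;> exact h
  · intro h
    exact ⟨by simp, Or.inl h⟩

lemma gprime_adj_inr_inr (e e' : {e : Sym2 (MaxCliques G) // e ∈ Ee CT.T}) :
    (Gprime G CT).Adj (Sum.inr e) (Sum.inr e') ↔ e ≠ e' ∧ ∃ D, D ∈ e.1 ∧ D ∈ e'.1 := by
  rw [Gprime, SimpleGraph.fromRel_adj]
  change Sum.inr e ≠ Sum.inr e' ∧ ((∃ D, D ∈ e.1 ∧ D ∈ e'.1) ∨ (∃ D, D ∈ e'.1 ∧ D ∈ e.1)) ↔ _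
  constructor
  · rintro ⟨hne, h | h⟩
    · exact ⟨fun h' => hne (by rw [h']), h⟩
    · exact ⟨fun h' => hne (by rw [h']), h.imp fun D hD => ⟨hD.2, hD.1⟩⟩
  · rintro ⟨hne, h⟩
    exact ⟨by simpa using hne, Or.inl h⟩

/-- The common-clique characterization of adjacency in `G`. -/
lemma adj_iff_maxclique (u v : V) (huv : u ≠ v) :
    G.Adj u v ↔ ∃ C : MaxCliques G, u ∈ C.1 ∧ v ∈ C.1 := by
  constructor
  · intro h
    obtain ⟨C, hC, hsub⟩ := exists_maxclique G
      (SimpleGraph.isClique_pair.mpr (fun _ => h) : G.IsClique {u, v})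
    exact ⟨⟨C, hC⟩, hsub (Set.mem_insert u {v}), hsub (Set.mem_insert_of_mem u rfl)⟩
  · rintro ⟨C, hu, hv⟩
    exact C.2.1 hu hv huv

/-- Every edge of `Ee` has its two endpoints adjacent in the clique tree. -/
lemma ee_endpoints {e : Sym2 (MaxCliques G)} (he : e ∈ Ee CT.T) :
    ∃ A B : MaxCliques G, e = s(A, B) ∧ CT.T.Adj A B := by
  induction e using Sym2.inductionOn with
  | _ A B => exact ⟨A, B, rfl, CT.T.mem_edgeSet.mp he.1⟩

/-- Subtrees of vertices of `G` in the clique tree support walks inside themselves. -/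
lemma cliqueSub_walks (u : V) :
    ∀ a ∈ cliqueSub G u, ∀ b ∈ cliqueSub G u,
      ∃ p : CT.T.Walk a b, ∀ x ∈ p.support, x ∈ cliqueSub G u := by
  classical
  intro a ha b hb
  obtain ⟨p0⟩ := CT.tree.isConnected.preconnected a b
  refine ⟨p0.bypass, fun x hx => ?_⟩
  exact CT.path_cond a b p0.bypass p0.bypass_isPath x hx ⟨ha, hb⟩

lemma msub_walks (x : V ⊕ {e : Sym2 (MaxCliques G) // e ∈ Ee CT.T}) :
    ∀ a ∈ msub CT x, ∀ b ∈ msub CT x,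
      ∃ p : CT.T.Walk a b, ∀ y ∈ p.support, y ∈ msub CT x := by
  classical
  cases x with
  | inl u => exact cliqueSub_walks CT u
  | inr e =>
    obtain ⟨A, B, hAB, hadj⟩ := ee_endpoints CT e.2
    intro a ha b hb
    by_cases hab : a = b
    · subst hab
      exact ⟨Walk.nil, by simp [ha]⟩
    · have hmem : ∀ c, c ∈ msub CT (Sum.inr e) ↔ c = A ∨ c = B := by
        intro c
        show c ∈ e.1 ↔ _
        rw [hAB, Sym2.mem_iff]
      have hadj' : CT.T.Adj a b := by
        rcases (hmem a).mp ha with rfl | rfl <;> rcases (hmem b).mp hb with rfl | rfl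
        · exact absurd rfl hab
        · exact hadj
        · exact hadj.symm
        · exact absurd rfl hab
      refine ⟨Walk.cons hadj' Walk.nil, fun y hy => ?_⟩
      simp only [Walk.support_cons, Walk.support_nil, List.mem_cons, List.mem_singleton] at hy
      rcases hy with rfl | rfl | h
      · exact ha
      · exact hb
      · exact absurd h (by simp)

lemma msub_nonempty (x : V ⊕ {e : Sym2 (MaxCliques G) // e ∈ Ee CT.T}) :
    (msub CT x).Nonempty := by
  classical
  cases x with
  | inl u =>
    obtain ⟨C, hC, hsub⟩ := exists_maxclique G
      (SimpleGraph.isClique_singleton u : G.IsClique {u})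
    exact ⟨⟨C, hC⟩, hsub rfl⟩
  | inr e =>
    obtain ⟨A, B, hAB, -⟩ := ee_endpoints CT e.2
    exact ⟨A, show A ∈ e.1 by rw [hAB]; simp⟩

/-- The tree model of `Gprime`. -/
noncomputable def gprimeModel : TreeModel (Gprime G CT) where
  W := MaxCliques G
  finW := inferInstance
  T := CT.T
  tree := CT.tree
  sub := msub CT
  sub_nonempty := msub_nonempty CT
  sub_conn x := induce_connected_of_vconn (msub_nonempty CT x) (msub_walks CT x)
  adj_iff := by
    rintro (u | e) (v | e') hne
    · rw [gprime_adj_inl_inl]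
      have huv : u ≠ v := fun h => hne (by rw [h])
      rw [adj_iff_maxclique u v huv]
      constructor
      · rintro ⟨-, C, hu, hv⟩
        exact ⟨C, hu, hv⟩
      · rintro ⟨C, hu, hv⟩
        exact ⟨huv, C, hu, hv⟩
    · rw [gprime_adj_inl_inr]
      constructor
      · rintro ⟨D, hD, hu⟩
        exact ⟨D, hu, hD⟩
      · rintro ⟨D, hu, hD⟩
        exact ⟨D, hD, hu⟩
    · rw [(Gprime G CT).adj_comm, gprime_adj_inl_inr]
      constructor
      · rintro ⟨D, hD, hu⟩
        exact ⟨D, hD, hu⟩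
      · rintro ⟨D, hD, hu⟩
        exact ⟨D, hD, hu⟩
    · rw [gprime_adj_inr_inr]
      have hee : e ≠ e' := fun h => hne (by rw [h])
      constructor
      · rintro ⟨-, D, h1, h2⟩
        exact ⟨D, h1, h2⟩
      · rintro ⟨D, h1, h2⟩
        exact ⟨hee, D, h1, h2⟩

lemma mem_phi_inl {Cset : Set V} {u : V} :
    Sum.inl u ∈ phiMap G CT Cset ↔ u ∈ Cset := by
  simp [phiMap]

lemma mem_phi_inr {Cset : Set V} {e : {e : Sym2 (MaxCliques G) // e ∈ Ee CT.T}} :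
    Sum.inr e ∈ phiMap G CT Cset ↔ ∃ D ∈ e.1, D.1 = Cset := by
  simp [phiMap]

lemma phi_clique {Cset : Set V} (hC : IsMaxClique G Cset) :
    (Gprime G CT).IsClique (phiMap G CT Cset) := by
  rintro x hx y hy hxy
  match x, y with
  | Sum.inl u, Sum.inl v =>
    rw [mem_phi_inl] at hx hy
    have huv : u ≠ v := fun h => hxy (by rw [h])
    exact (gprime_adj_inl_inl CT u v).mpr ⟨huv, hC.1 hx hy huv⟩
  | Sum.inl u, Sum.inr e =>
    rw [mem_phi_inl] at hx
    rw [mem_phi_inr] at hy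
    obtain ⟨D, hDe, hD⟩ := hy
    exact (gprime_adj_inl_inr CT u e).mpr ⟨D, hDe, hD ▸ hx⟩
  | Sum.inr e, Sum.inl u =>
    rw [mem_phi_inr] at hx
    rw [mem_phi_inl] at hy
    obtain ⟨D, hDe, hD⟩ := hx
    exact ((gprime_adj_inl_inr CT u e).mpr ⟨D, hDe, hD ▸ hy⟩).symm
  | Sum.inr e, Sum.inr e' =>
    rw [mem_phi_inr] at hx hy
    obtain ⟨D, hDe, hD⟩ := hx
    obtain ⟨D', hD'e, hD'⟩ := hy
    have hDD : D = D' := Subtype.ext (hD.trans hD'.symm)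
    exact (gprime_adj_inr_inr CT e e').mpr
      ⟨fun h => hxy (by rw [h]), D, hDe, hDD ▸ hD'e⟩

lemma phi_max {Cset : Set V} (hC : IsMaxClique G Cset) :
    IsMaxClique (Gprime G CT) (phiMap G CT Cset) := by
  classical
  refine ⟨phi_clique CT hC, fun D' hD' hsub => ?_⟩
  refine Set.Subset.antisymm ?_ hsub
  rintro (v | e) hx
  · rw [mem_phi_inl]
    have hclique : G.IsClique (insert v Cset) := by
      refine hC.1.insert fun u hu hvu => ?_
      have hxD : Sum.inl u ∈ D' := hsub ((mem_phi_inl CT).mpr hu)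
      have hadj := hD' hx hxD (fun h => hvu (Sum.inl.inj h))
      exact ((gprime_adj_inl_inl CT v u).mp hadj).2
    have heq := hC.2 (insert v Cset) hclique (Set.subset_insert v Cset)
    rw [← heq]
    exact Set.mem_insert v Cset
  · rw [mem_phi_inr]
    obtain ⟨A, B, hAB, hadjAB⟩ := ee_endpoints CT e.2
    set Cn : MaxCliques G := ⟨Cset, hC⟩ with hCn
    by_cases hA : Cn = A
    · exact ⟨A, by rw [hAB]; simp, (congrArg Subtype.val hA).symm⟩
    by_cases hB : Cn = B
    · exact ⟨B, by rw [hAB]; simp, (congrArg Subtype.val hB).symm⟩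
    exfalso
    have hsub2 : Cset ⊆ A.1 ∪ B.1 := by
      intro u hu
      have hadj := hD' (hsub ((mem_phi_inl CT).mpr hu)) hx (by simp)
      obtain ⟨D, hDe, huD⟩ := (gprime_adj_inl_inr CT u e).mp hadj
      rw [hAB, Sym2.mem_iff] at hDe
      rcases hDe with rfl | rfl
      · exact Or.inl huD
      · exact Or.inr huD
    have hCA : ¬ Cset ⊆ A.1 := fun h => hA (Subtype.ext (hC.2 A.1 A.2.1 h).symm)
    have hCB : ¬ Cset ⊆ B.1 := fun h => hB (Subtype.ext (hC.2 B.1 B.2.1 h).symm)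
    obtain ⟨u, huC, huB⟩ := Set.not_subset.mp hCB
    obtain ⟨v, hvC, hvA⟩ := Set.not_subset.mp hCA
    have huA : u ∈ A.1 := (hsub2 huC).resolve_right huB
    have hvB : v ∈ B.1 := (hsub2 hvC).resolve_left hvA
    obtain ⟨p0⟩ := CT.tree.isConnected.preconnected Cn A
    by_cases hBp : B ∈ p0.bypass.support
    · exact huB (CT.path_cond Cn A p0.bypass p0.bypass_isPath B hBp ⟨huC, huA⟩)
    · have hq := isPath_concat p0.bypass_isPath hadjAB hBp
      have hAq : A ∈ (p0.bypass.concat hadjAB).support := by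
        rw [Walk.support_concat]
        simp
      exact hvA (CT.path_cond Cn B (p0.bypass.concat hadjAB) hq A hAq ⟨hvC, hvB⟩)

end Stmt10Aux

/-- `G'` is chordal (i.e. has a tree model), its leafage is at most `|L(T*)|`, and
`φ` is a bijection between the maximal cliques of `G` and those of `G'`. -/
theorem stmt10 {V : Type} [Fintype V] (G : SimpleGraph V) (CTstar : CliqueTree G) :
    Nonempty (TreeModel (Gprime G CTstar)) ∧
    leafage (Gprime G CTstar) ≤ numLeaves CTstar.T ∧
    Set.BijOn (phiMap G CTstar) {Cset | IsMaxClique G Cset}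
      {D | IsMaxClique (Gprime G CTstar) D} := by
  classical
  haveI hNE : Nonempty (MaxCliques G) := CTstar.tree.isConnected.nonempty
  refine ⟨⟨Stmt10Aux.gprimeModel CTstar⟩, Nat.sInf_le ⟨Stmt10Aux.gprimeModel CTstar, rfl⟩,
    ?_, ?_, ?_⟩
  · -- MapsTo
    intro Cset hC
    exact Stmt10Aux.phi_max CTstar hC
  · -- InjOn
    intro C1 _ C2 _ heq
    ext u
    constructor
    · intro hu
      have h1 : Sum.inl u ∈ phiMap G CTstar C1 := (Stmt10Aux.mem_phi_inl CTstar).mpr hu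
      rw [heq] at h1
      exact (Stmt10Aux.mem_phi_inl CTstar).mp h1
    · intro hu
      have h1 : Sum.inl u ∈ phiMap G CTstar C2 := (Stmt10Aux.mem_phi_inl CTstar).mpr hu
      rw [← heq] at h1
      exact (Stmt10Aux.mem_phi_inl CTstar).mp h1
  · -- SurjOn
    intro D hD
    have hcommon : ∃ c : MaxCliques G, ∀ x ∈ D, c ∈ Stmt10Aux.msub CTstar x := by
      have hne : ∀ S ∈ Stmt10Aux.msub CTstar '' D, S.Nonempty := by
        rintro S ⟨x, hx, rfl⟩
        exact Stmt10Aux.msub_nonempty CTstar x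
      have hconn : ∀ S ∈ Stmt10Aux.msub CTstar '' D, ∀ a ∈ S, ∀ b ∈ S,
          ∃ p : CTstar.T.Walk a b, ∀ y ∈ p.support, y ∈ S := by
        rintro S ⟨x, hx, rfl⟩
        exact Stmt10Aux.msub_walks CTstar x
      have hpair : ∀ S ∈ Stmt10Aux.msub CTstar '' D, ∀ S' ∈ Stmt10Aux.msub CTstar '' D,
          (S ∩ S').Nonempty := by
        rintro S ⟨x, hx, rfl⟩ S' ⟨y, hy, rfl⟩
        by_cases hxy : x = y
        · subst hxy
          rw [Set.inter_self]
          exact Stmt10Aux.msub_nonempty CTstar x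
        · exact ((Stmt10Aux.gprimeModel CTstar).adj_iff x y hxy).mp (hD.1 hx hy hxy)
      obtain ⟨c, hc⟩ := Stmt10Aux.helly CTstar.tree
        ((⋃₀ (Stmt10Aux.msub CTstar '' D)).ncard) (Stmt10Aux.msub CTstar '' D) le_rfl
        hne hconn hpair
      exact ⟨c, fun x hx => hc _ ⟨x, hx, rfl⟩⟩
    obtain ⟨c, hc⟩ := hcommon
    have hsub : D ⊆ phiMap G CTstar c.1 := by
      rintro (u | e) hx
      · exact (Stmt10Aux.mem_phi_inl CTstar).mpr (hc _ hx)
      · exact (Stmt10Aux.mem_phi_inr CTstar).mpr ⟨c, hc _ hx, rfl⟩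
    exact ⟨c.1, c.2, hD.2 _ (Stmt10Aux.phi_clique CTstar c.2) hsub⟩
end

section
/- Let G be a chordal graph, let T* be a clique tree of G, let F = Ee(T*), and let G' be the graph with V(G') = V(G) ∪ {v_e : e ∈ F} and E(G') = E(G) ∪ {u v_e : e = CC' ∈ F, u ∈ C ∪ C'} ∪ {v_e v_{e'} : e, e' ∈ F share an endpoint}. Let T' be a clique tree of G' with |L(T')| = ℓ(G'), and let T be obtained from T' by renaming each node C' of T' to C' ∩ V(G). Then T is a clique tree of G, F ⊆ E(T), Hh(T) = Hh(T*), Ee(T) = Ee(T*) = F, and |L(T)| = |L(T*)|. -/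
open SimpleGraph

/-- The tree `T` obtained from a clique tree `T'` of `G'` by renaming each node `C'` to
`C' ∩ V(G)` (two renamed nodes are adjacent iff some pair of preimages is adjacent
in `T'`). -/
def renameT {V : Type} (G : SimpleGraph V) (CT : CliqueTree G)
    (CT' : CliqueTree (Gprime G CT)) : SimpleGraph (MaxCliques G) :=
  SimpleGraph.fromRel (fun D E =>
    ∃ D' E' : MaxCliques (Gprime G CT),
      CT'.T.Adj D' E' ∧ {u : V | Sum.inl u ∈ D'.1} = D.1 ∧ {u : V | Sum.inl u ∈ E'.1} = E.1)

section AuxBasic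

open SimpleGraph Sum

variable {V : Type}

/-- Every clique extends to a maximal clique (finite vertex set). -/
lemma aux_exists_maxClique [Fintype V] (G : SimpleGraph V) {s : Set V} (hs : G.IsClique s) :
    ∃ C : MaxCliques G, s ⊆ C.1 := by
  obtain ⟨D, hD, hmax⟩ := Set.Finite.exists_maximalFor
    id _ (Set.toFinite {D : Set V | G.IsClique D ∧ s ⊆ D}) ⟨s, hs, subset_rfl⟩
  exact ⟨⟨D, hD.1, fun E hE hDE => Set.Subset.antisymm (hmax ⟨hE, hD.2.trans hDE⟩ hDE) hDE⟩, hD.2⟩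

lemma aux_reachable_induce {W : Type*} {T : SimpleGraph W} {s : Set W} :
    ∀ {a b : W} (p : T.Walk a b), (∀ x ∈ p.support, x ∈ s) →
      ∀ (ha : a ∈ s) (hb : b ∈ s), (T.induce s).Reachable ⟨a, ha⟩ ⟨b, hb⟩ := by
  intro a b p
  induction p with
  | nil => intro _ ha hb; rfl
  | @cons u v w h q ih =>
      intro hp ha hb
      have hv : v ∈ s := hp v (by simp)
      have hadj : (T.induce s).Adj ⟨u, ha⟩ ⟨v, hv⟩ := by
        simpa using h
      exact hadj.reachable.trans (ih (fun x hx => hp x (by simp [hx])) hv hb)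

variable [Fintype V] {G : SimpleGraph V} (CT : CliqueTree G)

/-- The set of maximal cliques containing a fixed vertex induces a connected subgraph. -/
lemma aux_cliqueSub_conn (u : V) : (CT.T.induce {C : MaxCliques G | u ∈ C.1}).Connected := by
  obtain ⟨C0, hC0⟩ := aux_exists_maxClique G (G.isClique_singleton u)
  have hu0 : u ∈ C0.1 := hC0 rfl
  rw [connected_iff]
  refine ⟨?_, ⟨⟨C0, hu0⟩⟩⟩
  rintro ⟨A, hA⟩ ⟨B, hB⟩
  classical
  obtain ⟨q⟩ := CT.tree.isConnected A B
  refine aux_reachable_induce q.toPath.1 (fun x hx => ?_) hA hB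
  exact CT.path_cond A B q.toPath.1 q.toPath.2 x hx ⟨hA, hB⟩

/-- Cliques contained in the union of two adjacent tree nodes lie in one of them. -/
lemma aux_clique_split {A B : MaxCliques G} (hAdj : CT.T.Adj A B) {s : Set V}
    (hs : G.IsClique s) (hsub : s ⊆ A.1 ∪ B.1) : s ⊆ A.1 ∨ s ⊆ B.1 := by
  by_contra hcon
  push_neg at hcon
  obtain ⟨h1, h2⟩ := hcon
  rw [Set.not_subset] at h1 h2
  obtain ⟨u, hus, huA⟩ := h1
  obtain ⟨w, hws, hwB⟩ := h2
  have huB : u ∈ B.1 := (hsub hus).resolve_left huA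
  have hwA : w ∈ A.1 := (hsub hws).resolve_right hwB
  have hne : u ≠ w := fun h => huA (h ▸ hwA)
  have hadj : G.Adj u w := hs hus hws hne
  obtain ⟨D, hD⟩ := aux_exists_maxClique G ((SimpleGraph.isClique_pair (G := G)).mpr fun _ => hadj)
  have huD : u ∈ D.1 := hD (Set.mem_insert _ _)
  have hwD : w ∈ D.1 := hD (Set.mem_insert_of_mem _ rfl)
  -- take the tree path from D to A
  classical
  obtain ⟨q⟩ := CT.tree.isConnected D A
  set p := q.toPath with hp
  by_cases hBmem : B ∈ p.1.support
  · exact hwB (CT.path_cond D A p.1 p.2 B hBmem ⟨hwD, hwA⟩)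
  · have hpath : (SimpleGraph.Walk.cons hAdj.symm p.1.reverse).IsPath := by
      refine SimpleGraph.Walk.IsPath.cons p.2.reverse ?_
      simpa using hBmem
    have hAmem : A ∈ (SimpleGraph.Walk.cons hAdj.symm p.1.reverse).support := by
      simp
    exact huA (CT.path_cond B D _ hpath A hAmem ⟨huB, huD⟩)

/-- Intersection of two nodes at distance two is contained in the middle node. -/
lemma aux_inter_dist2 {A D0 B : MaxCliques G} (h1 : CT.T.Adj A D0) (h2 : CT.T.Adj D0 B)
    (hne : A ≠ B) : A.1 ∩ B.1 ⊆ D0.1 := by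
  have hpath : (SimpleGraph.Walk.cons h1 (SimpleGraph.Walk.cons h2 SimpleGraph.Walk.nil)).IsPath := by
    simp [SimpleGraph.Walk.cons_isPath_iff, h1.ne, h2.ne, hne]
  exact CT.path_cond A B _ hpath D0 (by simp)

end AuxBasic
section AuxGprime

open SimpleGraph Sum

variable {V : Type} [Fintype V] {G : SimpleGraph V} {CT : CliqueTree G}

lemma aux_mem_phiMap_inl {s : Set V} {u : V} :
    Sum.inl u ∈ phiMap G CT s ↔ u ∈ s := by
  simp [phiMap]

lemma aux_mem_phiMap_inr {C : MaxCliques G} {e : {e : Sym2 (MaxCliques G) // e ∈ Ee CT.T}} :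
    Sum.inr e ∈ phiMap G CT C.1 ↔ C ∈ e.1 := by
  simp only [phiMap, Set.mem_union, Set.mem_image, Set.mem_setOf_eq]
  constructor
  · rintro (⟨u, _, h⟩ | ⟨f, ⟨D, hD, hDC⟩, hfe⟩)
    · exact absurd h (by simp)
    · cases Sum.inr_injective hfe
      exact (Subtype.ext hDC : D = C) ▸ hD
  · intro h
    exact Or.inr ⟨e, ⟨C, h, rfl⟩, rfl⟩

lemma aux_Gprime_adj_inl_inl {u v : V} :
    (Gprime G CT).Adj (Sum.inl u) (Sum.inl v) ↔ G.Adj u v := by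
  rw [Gprime, SimpleGraph.fromRel_adj]
  constructor
  · rintro ⟨-, (h | h)⟩
    · exact h
    · exact h.symm
  · intro h
    exact ⟨by simpa using h.ne, Or.inl h⟩

lemma aux_Gprime_adj_inl_inr {u : V} {e : {e : Sym2 (MaxCliques G) // e ∈ Ee CT.T}} :
    (Gprime G CT).Adj (Sum.inl u) (Sum.inr e) ↔ ∃ D ∈ e.1, u ∈ D.1 := by
  rw [Gprime, SimpleGraph.fromRel_adj]
  constructor
  · rintro ⟨-, (h | h)⟩ <;> exact h
  · intro h
    exact ⟨by simp, Or.inl h⟩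

lemma aux_Gprime_adj_inr_inr {e f : {e : Sym2 (MaxCliques G) // e ∈ Ee CT.T}} :
    (Gprime G CT).Adj (Sum.inr e) (Sum.inr f) ↔ e ≠ f ∧ ∃ D, D ∈ e.1 ∧ D ∈ f.1 := by
  rw [Gprime, SimpleGraph.fromRel_adj]
  constructor
  · rintro ⟨hne, (⟨D, h1, h2⟩ | ⟨D, h1, h2⟩)⟩
    · exact ⟨fun h => hne (by rw [h]), D, h1, h2⟩
    · exact ⟨fun h => hne (by rw [h]), D, h2, h1⟩
  · rintro ⟨hne, D, h1, h2⟩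
    exact ⟨fun h => hne (Sum.inr_injective h), Or.inl ⟨D, h1, h2⟩⟩

/-- The two endpoints of an edge in `Ee CT.T` are adjacent in `CT.T`. -/
lemma aux_edge_endpoints {e : Sym2 (MaxCliques G)} (he : e ∈ Ee CT.T) :
    ∃ A B : MaxCliques G, e = s(A, B) ∧ CT.T.Adj A B := by
  obtain ⟨⟨A, B⟩, rfl⟩ := Quot.exists_rep e
  exact ⟨A, B, rfl, he.1⟩

/-- a maximal clique contained in another clique equals it -/
lemma aux_max_eq {C A : MaxCliques G} (h : C.1 ⊆ A.1) : A = C :=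
  Subtype.ext (C.2.2 A.1 A.2.1 h)

/-- `phiMap C` is a maximal clique of `Gprime G CT`. -/
lemma aux_phi_isMaxClique (C : MaxCliques G) :
    IsMaxClique (Gprime G CT) (phiMap G CT C.1) := by
  constructor
  · rintro x hx y hy hxy
    match x, y with
    | Sum.inl u, Sum.inl v =>
        rw [aux_mem_phiMap_inl] at hx hy
        exact aux_Gprime_adj_inl_inl.mpr (C.2.1 hx hy (by simpa using hxy))
    | Sum.inl u, Sum.inr e =>
        rw [aux_mem_phiMap_inl] at hx
        rw [aux_mem_phiMap_inr] at hy
        exact aux_Gprime_adj_inl_inr.mpr ⟨C, hy, hx⟩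
    | Sum.inr e, Sum.inl u =>
        rw [aux_mem_phiMap_inr] at hx
        rw [aux_mem_phiMap_inl] at hy
        exact ((Gprime G CT).adj_symm (aux_Gprime_adj_inl_inr.mpr ⟨C, hx, hy⟩))
    | Sum.inr e, Sum.inr f =>
        rw [aux_mem_phiMap_inr] at hx hy
        exact aux_Gprime_adj_inr_inr.mpr ⟨fun h => hxy (by rw [h]), C, hx, hy⟩
  · intro X hX hsub
    apply Set.Subset.antisymm _ hsub
    intro x hx
    match x with
    | Sum.inl u =>
        have hY : G.IsClique {v : V | Sum.inl v ∈ X} := by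
          intro a ha b hb hab
          exact aux_Gprime_adj_inl_inl.mp (hX ha hb (by simpa using hab))
        have hCY : C.1 ⊆ {v : V | Sum.inl v ∈ X} := fun v hv =>
          hsub (aux_mem_phiMap_inl.mpr hv)
        have : {v : V | Sum.inl v ∈ X} = C.1 := C.2.2 _ hY hCY
        exact aux_mem_phiMap_inl.mpr (this ▸ hx : u ∈ _)
    | Sum.inr e =>
        obtain ⟨A, B, heAB, hAdj⟩ := aux_edge_endpoints e.2
        have hCsub : C.1 ⊆ A.1 ∪ B.1 := by
          intro u hu
          have hadj : (Gprime G CT).Adj (Sum.inl u) (Sum.inr e) :=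
            hX (hsub (aux_mem_phiMap_inl.mpr hu)) hx (by simp)
          obtain ⟨D, hD1, hD2⟩ := aux_Gprime_adj_inl_inr.mp hadj
          rw [heAB, Sym2.mem_iff] at hD1
          rcases hD1 with rfl | rfl
          · exact Or.inl hD2
          · exact Or.inr hD2
        have hCmem : C ∈ e.1 := by
          rcases aux_clique_split CT hAdj C.2.1 hCsub with h | h
          · rw [heAB, Sym2.mem_iff]; exact Or.inl (aux_max_eq h).symm
          · rw [heAB, Sym2.mem_iff]; exact Or.inr (aux_max_eq h).symm
        exact aux_mem_phiMap_inr.mpr hCmem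

end AuxGprime
section AuxClass

open SimpleGraph Sum

variable {V : Type} [Fintype V] {G : SimpleGraph V} {CT : CliqueTree G}

lemma aux_path_len_ne {A B : MaxCliques G} {p q : CT.T.Walk A B} (hp : p.IsPath) (hq : q.IsPath)
    (hlen : p.length ≠ q.length) : False := by
  have := CT.tree.IsAcyclic.path_unique ⟨p, hp⟩ ⟨q, hq⟩
  exact hlen (congrArg (fun r : CT.T.Path A B => r.1.length) this)

/-- Every maximal clique of `Gprime G CT` has the form `phiMap G CT C`. -/
lemma aux_maxClique_Gprime {X : Set (V ⊕ {e : Sym2 (MaxCliques G) // e ∈ Ee CT.T})}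
    (hX : IsMaxClique (Gprime G CT) X) :
    ∃ C : MaxCliques G, X = phiMap G CT C.1 := by
  suffices h : ∃ C : MaxCliques G, X ⊆ phiMap G CT C.1 by
    obtain ⟨C, hC⟩ := h
    exact ⟨C, (hX.2 _ (aux_phi_isMaxClique C).1 hC).symm⟩
  set Y := {v : V | Sum.inl v ∈ X} with hYdef
  have hY : G.IsClique Y := by
    intro a ha b hb hab
    exact aux_Gprime_adj_inl_inl.mp (hX.1 ha hb (by simpa using hab))
  by_cases hPhi : ∀ e : {e : Sym2 (MaxCliques G) // e ∈ Ee CT.T}, Sum.inr e ∉ X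
  · obtain ⟨C, hC⟩ := aux_exists_maxClique G hY
    refine ⟨C, fun x hx => ?_⟩
    match x with
    | Sum.inl u => exact aux_mem_phiMap_inl.mpr (hC hx)
    | Sum.inr e => exact absurd hx (hPhi e)
  · push_neg at hPhi
    obtain ⟨f, hf⟩ := hPhi
    have hYf : ∀ u ∈ Y, ∃ D ∈ f.1, u ∈ D.1 := by
      intro u hu
      exact aux_Gprime_adj_inl_inr.mp (hX.1 hu hf (by simp))
    by_cases hall : ∀ e : {e : Sym2 (MaxCliques G) // e ∈ Ee CT.T}, Sum.inr e ∈ X → e = f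
    · obtain ⟨A, B, heAB, hAdj⟩ := aux_edge_endpoints f.2
      have hYsub : Y ⊆ A.1 ∪ B.1 := by
        intro u hu
        obtain ⟨D, hD1, hD2⟩ := hYf u hu
        rw [heAB, Sym2.mem_iff] at hD1
        rcases hD1 with rfl | rfl
        · exact Or.inl hD2
        · exact Or.inr hD2
      have hmem : ∀ (C : MaxCliques G), Y ⊆ C.1 → C ∈ f.1 → X ⊆ phiMap G CT C.1 := by
        intro C hYC hCf x hx
        match x with
        | Sum.inl u => exact aux_mem_phiMap_inl.mpr (hYC hx)
        | Sum.inr e => exact aux_mem_phiMap_inr.mpr ((hall e hx) ▸ hCf)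
      rcases aux_clique_split CT hAdj hY hYsub with h | h
      · exact ⟨A, hmem A h (by rw [heAB]; exact Sym2.mem_mk_left _ _)⟩
      · exact ⟨B, hmem B h (by rw [heAB]; exact Sym2.mem_mk_right _ _)⟩
    · push_neg at hall
      obtain ⟨g, hg, hgf⟩ := hall
      obtain ⟨-, D0, hD0g, hD0f⟩ :=
        aux_Gprime_adj_inr_inr.mp (hX.1 hg hf (fun h => hgf (Sum.inr_injective h)))
      obtain ⟨Af, hfrep⟩ := Sym2.mem_iff_exists.mp hD0f
      obtain ⟨Ag, hgrep⟩ := Sym2.mem_iff_exists.mp hD0g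
      have hAfg : Af ≠ Ag := by
        intro h
        exact hgf (Subtype.ext (by rw [hgrep, hfrep, h]))
      have hAdjf : CT.T.Adj D0 Af := by
        have := f.2.1
        rw [hfrep] at this
        exact this
      have hAdjg : CT.T.Adj D0 Ag := by
        have := g.2.1
        rw [hgrep] at this
        exact this
      refine ⟨D0, fun x hx => ?_⟩
      match x with
      | Sum.inl u =>
          refine aux_mem_phiMap_inl.mpr ?_
          by_contra huD0
          obtain ⟨D, hD1, hD2⟩ := hYf u hx
          rw [hfrep, Sym2.mem_iff] at hD1
          have huAf : u ∈ Af.1 := by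
            rcases hD1 with rfl | rfl
            · exact absurd hD2 huD0
            · exact hD2
          obtain ⟨D', hD'1, hD'2⟩ :=
            aux_Gprime_adj_inl_inr.mp (hX.1 hx hg (by simp))
          rw [hgrep, Sym2.mem_iff] at hD'1
          have huAg : u ∈ Ag.1 := by
            rcases hD'1 with rfl | rfl
            · exact absurd hD'2 huD0
            · exact hD'2
          exact huD0 (aux_inter_dist2 CT hAdjf.symm hAdjg hAfg ⟨huAf, huAg⟩)
      | Sum.inr e =>
          refine aux_mem_phiMap_inr.mpr ?_
          by_cases hef : e = f
          · rw [hef]; exact hD0f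
          by_cases heg : e = g
          · rw [heg]; exact hD0g
          by_contra hD0e
          obtain ⟨-, D1, hD1e, hD1f⟩ :=
            aux_Gprime_adj_inr_inr.mp (hX.1 hx hf (fun h => hef (Sum.inr_injective h)))
          obtain ⟨-, D2, hD2e, hD2g⟩ :=
            aux_Gprime_adj_inr_inr.mp (hX.1 hx hg (fun h => heg (Sum.inr_injective h)))
          rw [hfrep, Sym2.mem_iff] at hD1f
          rw [hgrep, Sym2.mem_iff] at hD2g
          have hAfe : Af ∈ e.1 := by
            rcases hD1f with rfl | rfl
            · exact absurd hD1e hD0e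
            · exact hD1e
          have hAge : Ag ∈ e.1 := by
            rcases hD2g with rfl | rfl
            · exact absurd hD2e hD0e
            · exact hD2e
          have herep : e.1 = s(Af, Ag) := (Sym2.mem_and_mem_iff hAfg).mp ⟨hAfe, hAge⟩
          have hAdje : CT.T.Adj Af Ag := by
            have := e.2.1
            rw [herep] at this
            exact this
          -- two distinct paths from Af to Ag: contradiction with acyclicity
          have hp1 : (SimpleGraph.Walk.cons hAdje SimpleGraph.Walk.nil).IsPath := by
            simp [hAfg]
          have hp2 : (SimpleGraph.Walk.cons hAdjf.symm
              (SimpleGraph.Walk.cons hAdjg SimpleGraph.Walk.nil)).IsPath := by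
            simp [SimpleGraph.Walk.cons_isPath_iff, hAdjf.ne', hAdjg.ne, hAfg]
          exact aux_path_len_ne hp1 hp2 (by simp)

end AuxClass
section AuxEquiv

open SimpleGraph Sum

variable {V : Type} [Fintype V] {G : SimpleGraph V} {CT : CliqueTree G}

/-- The inverse map: from a maximal clique of `G'` to a maximal clique of `G`. -/
noncomputable def auxPsi (X : MaxCliques (Gprime G CT)) : MaxCliques G :=
  (aux_maxClique_Gprime X.2).choose

lemma auxPsi_spec (X : MaxCliques (Gprime G CT)) :
    X.1 = phiMap G CT (auxPsi X).1 :=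
  (aux_maxClique_Gprime X.2).choose_spec

/-- The forward map `φ`. -/
def auxPhi (C : MaxCliques G) : MaxCliques (Gprime G CT) :=
  ⟨phiMap G CT C.1, aux_phi_isMaxClique C⟩

lemma aux_inlpart_phi (s : Set V) : {u : V | Sum.inl u ∈ phiMap G CT s} = s := by
  ext u; exact aux_mem_phiMap_inl

lemma aux_phiMap_inj {s t : Set V} (h : phiMap G CT s = phiMap G CT t) : s = t := by
  rw [← aux_inlpart_phi (CT := CT) s, ← aux_inlpart_phi (CT := CT) t, h]

lemma auxPhi_inj : Function.Injective (auxPhi (G := G) (CT := CT)) :=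
  fun _ _ h => Subtype.ext (aux_phiMap_inj (congrArg Subtype.val h))

lemma auxPhi_psi (X : MaxCliques (Gprime G CT)) : auxPhi (auxPsi X) = X :=
  Subtype.ext (auxPsi_spec X).symm

lemma auxPsi_phi (C : MaxCliques G) : auxPsi (auxPhi (CT := CT) C) = C := by
  apply auxPhi_inj
  rw [auxPhi_psi]

lemma aux_inlpart_eq {D' : MaxCliques (Gprime G CT)} {D : MaxCliques G}
    (h : {u : V | Sum.inl u ∈ D'.1} = D.1) : D' = auxPhi D := by
  have h2 := auxPsi_spec D'
  have h3 : (auxPsi D').1 = D.1 := by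
    rw [← h, h2, aux_inlpart_phi]
  rw [← auxPhi_psi D']
  exact congrArg auxPhi (Subtype.ext h3)

/-- Adjacency in the renamed tree. -/
lemma aux_renameT_adj (CT' : CliqueTree (Gprime G CT)) {D E : MaxCliques G} :
    (renameT G CT CT').Adj D E ↔ CT'.T.Adj (auxPhi D) (auxPhi E) := by
  rw [renameT, SimpleGraph.fromRel_adj]
  constructor
  · rintro ⟨hne, (⟨D', E', hadj, hD, hE⟩ | ⟨D', E', hadj, hD, hE⟩)⟩
    · rw [aux_inlpart_eq hD, aux_inlpart_eq hE] at hadj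
      exact hadj
    · rw [aux_inlpart_eq hD, aux_inlpart_eq hE] at hadj
      exact hadj.symm
  · intro h
    refine ⟨fun hDE => h.ne (by rw [hDE]), Or.inl ⟨auxPhi D, auxPhi E, h, ?_, ?_⟩⟩
    · exact aux_inlpart_phi D.1
    · exact aux_inlpart_phi E.1

/-- The isomorphism between `CT'.T` and the renamed tree. -/
noncomputable def auxIso (CT' : CliqueTree (Gprime G CT)) :
    CT'.T ≃g renameT G CT CT' where
  toFun := auxPsi
  invFun := auxPhi
  left_inv := auxPhi_psi
  right_inv := auxPsi_phi
  map_rel_iff' := by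
    intro a b
    show (renameT G CT CT').Adj (auxPsi a) (auxPsi b) ↔ CT'.T.Adj a b
    rw [aux_renameT_adj CT', auxPhi_psi, auxPhi_psi]

lemma aux_renameT_isTree (CT' : CliqueTree (Gprime G CT)) :
    (renameT G CT CT').IsTree := by
  constructor
  · exact (auxIso CT').connected_iff.mp CT'.tree.isConnected
  · intro v c hc
    have hinj : Function.Injective ((auxIso CT').symm.toHom : _ → MaxCliques (Gprime G CT)) :=
      (auxIso CT').symm.toEquiv.injective
    exact CT'.tree.IsAcyclic _
      ((SimpleGraph.Walk.map_isCycle_iff_of_injective hinj).mpr hc)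

lemma aux_renameT_path_cond (CT' : CliqueTree (Gprime G CT)) :
    ∀ (D E : MaxCliques G) (p : (renameT G CT CT').Walk D E), p.IsPath →
      ∀ Dmid ∈ p.support, D.1 ∩ E.1 ⊆ Dmid.1 := by
  intro D E p hp Dmid hmid u hu
  have hinj : Function.Injective ((auxIso CT').symm.toHom : _ → MaxCliques (Gprime G CT)) :=
    (auxIso CT').symm.toEquiv.injective
  have hp' := (SimpleGraph.Walk.map_isPath_iff_of_injective hinj).mpr hp
  have hmem : (auxIso CT').symm.toHom Dmid ∈ (p.map (auxIso CT').symm.toHom).support := by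
    rw [SimpleGraph.Walk.support_map]
    exact List.mem_map_of_mem hmid
  have hcond := CT'.path_cond _ _ (p.map (auxIso CT').symm.toHom) hp' _ hmem
  have hDin : Sum.inl u ∈ ((auxIso CT').symm.toHom D).1 ∩ ((auxIso CT').symm.toHom E).1 := by
    constructor
    · exact aux_mem_phiMap_inl.mpr hu.1
    · exact aux_mem_phiMap_inl.mpr hu.2
  exact aux_mem_phiMap_inl.mp (hcond hDin)

lemma aux_F_subset (CT' : CliqueTree (Gprime G CT)) :
    Ee CT.T ⊆ (renameT G CT CT').edgeSet := by
  intro e he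
  obtain ⟨A, B, rfl, hAdj⟩ := aux_edge_endpoints he
  rw [SimpleGraph.mem_edgeSet]
  have hveA : Sum.inr (⟨s(A, B), he⟩ : {e // e ∈ Ee CT.T}) ∈ (auxPhi A).1 :=
    aux_mem_phiMap_inr.mpr (Sym2.mem_mk_left _ _)
  have hveB : Sum.inr (⟨s(A, B), he⟩ : {e // e ∈ Ee CT.T}) ∈ (auxPhi B).1 :=
    aux_mem_phiMap_inr.mpr (Sym2.mem_mk_right _ _)
  classical
  obtain ⟨q⟩ := CT'.tree.isConnected (auxPhi A) (auxPhi B)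
  set p := q.toPath with hpdef
  have hne : (auxPhi A : MaxCliques (Gprime G CT)) ≠ auxPhi B := fun h => hAdj.ne (auxPhi_inj h)
  obtain ⟨x, h, q', hq'⟩ := SimpleGraph.Walk.exists_eq_cons_of_ne hne p.1
  have hx : x ∈ p.1.support := by rw [hq']; simp
  have hxmem : Sum.inr (⟨s(A, B), he⟩ : {e // e ∈ Ee CT.T}) ∈ x.1 :=
    CT'.path_cond _ _ p.1 p.2 x hx ⟨hveA, hveB⟩
  have hmem2 : auxPsi x ∈ (⟨s(A, B), he⟩ : {e // e ∈ Ee CT.T}).1 := by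
    rw [auxPsi_spec x] at hxmem
    exact aux_mem_phiMap_inr.mp hxmem
  rw [Sym2.mem_iff] at hmem2
  have hxA : x ≠ auxPhi A := h.ne'
  rcases hmem2 with h1 | h1
  · exact absurd (by rw [← auxPhi_psi x, h1]) hxA
  · have hxB : x = auxPhi B := by rw [← auxPhi_psi x, h1]
    exact (aux_renameT_adj CT').mpr (hxB ▸ h)

lemma aux_deg_renameT (CT' : CliqueTree (Gprime G CT)) (X : MaxCliques (Gprime G CT)) :
    deg (renameT G CT CT') (auxPsi X) = deg CT'.T X := by
  unfold deg
  have himg : (renameT G CT CT').neighborSet (auxPsi X) = auxPsi '' (CT'.T.neighborSet X) := by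
    ext E
    simp only [SimpleGraph.mem_neighborSet, Set.mem_image]
    constructor
    · intro hadj
      refine ⟨auxPhi E, ?_, auxPsi_phi E⟩
      have := (aux_renameT_adj CT').mp hadj
      rwa [auxPhi_psi] at this
    · rintro ⟨Y, hY, rfl⟩
      refine (aux_renameT_adj CT').mpr ?_
      rwa [auxPhi_psi, auxPhi_psi]
  rw [himg, Set.ncard_image_of_injective _ (fun a b hab => by
    rw [← auxPhi_psi a, ← auxPhi_psi b, hab])]

lemma aux_deg_renameT' (CT' : CliqueTree (Gprime G CT)) (C : MaxCliques G) :
    deg (renameT G CT CT') C = deg CT'.T (auxPhi C) := by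
  have := aux_deg_renameT CT' (auxPhi C)
  rwa [auxPsi_phi] at this

lemma aux_numLeaves_renameT (CT' : CliqueTree (Gprime G CT)) :
    numLeaves (renameT G CT CT') = numLeaves CT'.T := by
  unfold numLeaves
  have himg : leaves (renameT G CT CT') = auxPsi '' leaves CT'.T := by
    ext E
    simp only [leaves, Set.mem_setOf_eq, Set.mem_image]
    constructor
    · intro hE
      refine ⟨auxPhi E, ?_, auxPsi_phi E⟩
      rw [← aux_deg_renameT' CT' E]
      exact hE
    · rintro ⟨Y, hY, rfl⟩
      rw [aux_deg_renameT CT' Y]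
      exact hY
  rw [himg, Set.ncard_image_of_injective _ (fun a b hab => by
    rw [← auxPhi_psi a, ← auxPhi_psi b, hab])]

end AuxEquiv
section AuxModel

open SimpleGraph Sum

variable {V : Type} [Fintype V] {G : SimpleGraph V} (CT : CliqueTree G)

/-- A tree model of `Gprime G CT` whose host tree is `CT.T` itself. -/
noncomputable def auxModel : TreeModel (Gprime G CT) where
  W := MaxCliques G
  finW := Subtype.finite
  T := CT.T
  tree := CT.tree
  sub := fun x => match x with
    | Sum.inl u => {C : MaxCliques G | u ∈ C.1}
    | Sum.inr e => {C : MaxCliques G | C ∈ e.1}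
  sub_nonempty := by
    rintro (u | e)
    · obtain ⟨C, hC⟩ := aux_exists_maxClique G (G.isClique_singleton u)
      exact ⟨C, hC rfl⟩
    · obtain ⟨A, B, hrep, -⟩ := aux_edge_endpoints e.2
      exact ⟨A, show A ∈ e.1 by rw [hrep]; exact Sym2.mem_mk_left _ _⟩
  sub_conn := by
    rintro (u | e)
    · exact aux_cliqueSub_conn CT u
    · obtain ⟨A, B, hrep, hAdj⟩ := aux_edge_endpoints e.2
      have hA : A ∈ {C : MaxCliques G | C ∈ e.1} := by
        show A ∈ e.1; rw [hrep]; exact Sym2.mem_mk_left _ _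
      have hB : B ∈ {C : MaxCliques G | C ∈ e.1} := by
        show B ∈ e.1; rw [hrep]; exact Sym2.mem_mk_right _ _
      rw [connected_iff]
      refine ⟨?_, ⟨⟨A, hA⟩⟩⟩
      have hcase : ∀ x ∈ {C : MaxCliques G | C ∈ e.1}, x = A ∨ x = B := by
        intro x hx
        have : x ∈ s(A, B) := hrep ▸ hx
        rwa [Sym2.mem_iff] at this
      have hreach : (CT.T.induce {C : MaxCliques G | C ∈ e.1}).Reachable ⟨A, hA⟩ ⟨B, hB⟩ := by
        refine SimpleGraph.Adj.reachable ?_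
        simpa using hAdj
      rintro ⟨x, hx⟩ ⟨y, hy⟩
      rcases hcase x hx with rfl | rfl <;> rcases hcase y hy with rfl | rfl
      · exact Reachable.refl _
      · exact hreach
      · exact hreach.symm
      · exact Reachable.refl _
  adj_iff := by
    rintro (u | e) (v | f) hne
    · have huv : u ≠ v := fun h => hne (by rw [h])
      rw [aux_Gprime_adj_inl_inl]
      constructor
      · intro h
        obtain ⟨C, hC⟩ := aux_exists_maxClique G
          ((SimpleGraph.isClique_pair (G := G)).mpr fun _ => h)
        exact ⟨C, hC (Set.mem_insert _ _), hC (Set.mem_insert_of_mem _ rfl)⟩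
      · rintro ⟨C, hC1, hC2⟩
        exact C.2.1 hC1 hC2 huv
    · rw [aux_Gprime_adj_inl_inr]
      constructor
      · rintro ⟨D, hD1, hD2⟩
        exact ⟨D, hD2, hD1⟩
      · rintro ⟨D, hD1, hD2⟩
        exact ⟨D, hD2, hD1⟩
    · rw [SimpleGraph.adj_comm, aux_Gprime_adj_inl_inr]
      constructor
      · rintro ⟨D, hD1, hD2⟩
        exact ⟨D, hD1, hD2⟩
      · rintro ⟨D, hD1, hD2⟩
        exact ⟨D, hD1, hD2⟩
    · rw [aux_Gprime_adj_inr_inr]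
      constructor
      · rintro ⟨-, D, hD1, hD2⟩
        exact ⟨D, hD1, hD2⟩
      · rintro ⟨D, hD1, hD2⟩
        exact ⟨fun h => hne (by rw [h]), D, hD1, hD2⟩

lemma aux_leafage_le : leafage (Gprime G CT) ≤ numLeaves CT.T :=
  Nat.sInf_le ⟨auxModel CT, rfl⟩

end AuxModel
section AuxCount

open SimpleGraph Finset

variable {N : Type*} [Fintype N]

lemma aux_deg_eq_degree (S : SimpleGraph N) [DecidableRel S.Adj] (v : N) :
    deg S v = S.degree v := by
  unfold deg
  rw [← SimpleGraph.card_neighborFinset_eq_degree, ← Set.ncard_coe_finset]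
  congr 1
  simp [SimpleGraph.neighborFinset_def]

lemma aux_min_degree (S : SimpleGraph N) [DecidableRel S.Adj] (hS : S.IsTree)
    (h2 : 2 ≤ Fintype.card N) (v : N) : 1 ≤ S.degree v := by
  obtain ⟨w, hw⟩ := Fintype.exists_ne_of_one_lt_card (by omega) v
  obtain ⟨q⟩ := hS.isConnected v w
  cases q with
  | nil => exact absurd rfl hw
  | cons h q' =>
      rw [← SimpleGraph.card_neighborFinset_eq_degree]
      exact Finset.card_pos.mpr ⟨_, SimpleGraph.mem_neighborFinset _ _ _ |>.mpr h⟩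

lemma aux_leaf_formula (S : SimpleGraph N) [DecidableRel S.Adj] (hS : S.IsTree)
    (h2 : 2 ≤ Fintype.card N) :
    (∑ v ∈ Finset.univ.filter (fun v => 3 ≤ S.degree v), S.degree v) + 2
      = (Finset.univ.filter (fun v => S.degree v = 1)).card
        + 2 * (Finset.univ.filter (fun v => 3 ≤ S.degree v)).card := by
  classical
  have hsumall : ∑ v, S.degree v = 2 * (Fintype.card N - 1) := by
    rw [SimpleGraph.sum_degrees_eq_twice_card_edges]
    have := hS.card_edgeFinset
    omega
  set d1 := Finset.univ.filter (fun v => S.degree v = 1) with hd1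
  set rest := Finset.univ.filter (fun v => ¬ S.degree v = 1) with hrest
  set d3 := Finset.univ.filter (fun v => 3 ≤ S.degree v) with hd3
  set d2 := rest.filter (fun v => ¬ 3 ≤ S.degree v) with hd2
  have hsplit1 : (∑ v ∈ d1, S.degree v) + (∑ v ∈ rest, S.degree v) = ∑ v, S.degree v :=
    Finset.sum_filter_add_sum_filter_not _ _ _
  have hsplit2 : (∑ v ∈ rest.filter (fun v => 3 ≤ S.degree v), S.degree v)
      + (∑ v ∈ d2, S.degree v) = ∑ v ∈ rest, S.degree v :=
    Finset.sum_filter_add_sum_filter_not _ _ _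
  have hrest3 : rest.filter (fun v => 3 ≤ S.degree v) = d3 := by
    rw [hrest, hd3, Finset.filter_filter]
    apply Finset.filter_congr
    intro v _
    constructor
    · rintro ⟨-, h⟩; exact h
    · intro h; exact ⟨by omega, h⟩
  have hsum1 : ∑ v ∈ d1, S.degree v = d1.card := by
    rw [Finset.card_eq_sum_ones]
    apply Finset.sum_congr rfl
    intro v hv
    exact (Finset.mem_filter.mp hv).2
  have hsum2 : ∑ v ∈ d2, S.degree v = 2 * d2.card := by
    have h22 : ∑ v ∈ d2, S.degree v = ∑ _v ∈ d2, 2 := by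
      apply Finset.sum_congr rfl
      intro v hv
      have hmem := Finset.mem_filter.mp hv
      have hmem2 := Finset.mem_filter.mp hmem.1
      have h1 := aux_min_degree S hS h2 v
      omega
    rw [h22, Finset.sum_const, smul_eq_mul, Nat.mul_comm]
  have hcard1 : d1.card + rest.card = Fintype.card N := by
    rw [hd1, hrest, ← Finset.card_univ]
    exact Finset.card_filter_add_card_filter_not _
  have hcard2 : d3.card + d2.card = rest.card := by
    rw [← hrest3, hd2]
    exact Finset.card_filter_add_card_filter_not _
  rw [hrest3] at hsplit2
  omega

end AuxCount
section AuxCompare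

open SimpleGraph Finset

variable {N : Type*} [Fintype N]

lemma aux_numLeaves_eq_card (S : SimpleGraph N) [DecidableRel S.Adj] :
    numLeaves S = (Finset.univ.filter (fun v => S.degree v = 1)).card := by
  unfold numLeaves
  rw [← Set.ncard_coe_finset]
  congr 1
  ext v
  simp [leaves, aux_deg_eq_degree]

lemma aux_compare (S Sstar : SimpleGraph N) [DecidableRel S.Adj] [DecidableRel Sstar.Adj]
    (hS : S.IsTree) (hSstar : Sstar.IsTree) (h2 : 2 ≤ Fintype.card N)
    (hdom : ∀ v, 3 ≤ Sstar.degree v → Sstar.neighborSet v ⊆ S.neighborSet v)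
    (hle : numLeaves S ≤ numLeaves Sstar) :
    (∀ v, 3 ≤ S.degree v ↔ 3 ≤ Sstar.degree v)
      ∧ (∀ v, 3 ≤ Sstar.degree v → S.neighborSet v = Sstar.neighborSet v)
      ∧ numLeaves S = numLeaves Sstar := by
  classical
  have hdeg : ∀ v, 3 ≤ Sstar.degree v → Sstar.degree v ≤ S.degree v := by
    intro v hv
    rw [← aux_deg_eq_degree S, ← aux_deg_eq_degree Sstar]
    exact Set.ncard_le_ncard (hdom v hv) (Set.toFinite _)
  have hfS := aux_leaf_formula S hS h2
  have hfT := aux_leaf_formula Sstar hSstar h2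
  rw [← aux_numLeaves_eq_card] at hfS hfT
  set Hs := Finset.univ.filter (fun v => 3 ≤ S.degree v) with hHs
  set Ht := Finset.univ.filter (fun v => 3 ≤ Sstar.degree v) with hHt
  have hsub : Ht ⊆ Hs := by
    intro v hv
    rw [hHt, Finset.mem_filter] at hv
    rw [hHs, Finset.mem_filter]
    exact ⟨hv.1, le_trans hv.2 (hdeg v hv.2)⟩
  have hsd : (∑ v ∈ Hs \ Ht, S.degree v) + (∑ v ∈ Ht, S.degree v) = ∑ v ∈ Hs, S.degree v :=
    Finset.sum_sdiff hsub
  have hb1 : ∑ v ∈ Ht, Sstar.degree v ≤ ∑ v ∈ Ht, S.degree v :=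
    Finset.sum_le_sum (fun v hv => hdeg v (Finset.mem_filter.mp hv).2)
  have hb2 : 3 * (Hs \ Ht).card ≤ ∑ v ∈ Hs \ Ht, S.degree v := by
    have := Finset.card_nsmul_le_sum (Hs \ Ht) (fun v => S.degree v) 3
      (fun v hv => by exact (Finset.mem_filter.mp (Finset.mem_sdiff.mp hv).1).2)
    simpa [smul_eq_mul, Nat.mul_comm] using this
  have hcards : Ht.card + (Hs \ Ht).card = Hs.card := by
    have h1 := Finset.card_sdiff_of_subset hsub
    have h2 := Finset.card_le_card hsub
    omega
  have hkey : (Hs \ Ht).card = 0 ∧ numLeaves S = numLeaves Sstar := by omega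
  have hHeq : Hs = Ht := by
    have h0 : Hs \ Ht = ∅ := Finset.card_eq_zero.mp hkey.1
    apply Finset.Subset.antisymm _ hsub
    intro v hv
    by_contra hvt
    have hmem : v ∈ Hs \ Ht := Finset.mem_sdiff.mpr ⟨hv, hvt⟩
    rw [h0] at hmem
    exact absurd hmem (Finset.notMem_empty v)
  have hsums : ∑ v ∈ Ht, Sstar.degree v = ∑ v ∈ Ht, S.degree v := by
    rw [hHeq] at hfS
    have := hkey.2
    omega
  have hpt : ∀ v ∈ Ht, Sstar.degree v = S.degree v :=
    (Finset.sum_eq_sum_iff_of_le (fun i hi => hdeg i (Finset.mem_filter.mp hi).2)).mp hsums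
  refine ⟨?_, ?_, hkey.2⟩
  · intro v
    constructor
    · intro h
      have hmem : v ∈ Hs := Finset.mem_filter.mpr ⟨Finset.mem_univ v, h⟩
      rw [hHeq] at hmem
      exact (Finset.mem_filter.mp hmem).2
    · intro h
      exact le_trans h (hdeg v h)
  · intro v hv
    have hvt : v ∈ Ht := Finset.mem_filter.mpr ⟨Finset.mem_univ v, hv⟩
    have hdeq : deg S v = deg Sstar v := by
      rw [aux_deg_eq_degree, aux_deg_eq_degree]
      exact (hpt v hvt).symm
    exact (Set.eq_of_subset_of_ncard_le (hdom v hv) (le_of_eq hdeq) (Set.toFinite _)).symm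

end AuxCompare
/-- Let `F = Ee(T*)`, let `T'` be a clique tree of `G'` with `|L(T')| = ℓ(G')`, and let
`T` be obtained from `T'` by renaming each node `C'` to `C' ∩ V(G)`. Then `T` is a
clique tree of `G` (a tree on the maximal cliques satisfying the clique-tree condition),
`F ⊆ E(T)`, `Hh(T) = Hh(T*)`, `Ee(T) = Ee(T*) = F`, and `|L(T)| = |L(T*)|`. -/
theorem stmt11 {V : Type} [Fintype V] (G : SimpleGraph V) (CTstar : CliqueTree G)
    (CT' : CliqueTree (Gprime G CTstar))
    (hopt : numLeaves CT'.T = leafage (Gprime G CTstar)) :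
    (renameT G CTstar CT').IsTree ∧
    (∀ (D E : MaxCliques G) (p : (renameT G CTstar CT').Walk D E), p.IsPath →
      ∀ Dmid ∈ p.support, D.1 ∩ E.1 ⊆ Dmid.1) ∧
    Ee CTstar.T ⊆ (renameT G CTstar CT').edgeSet ∧
    Hh (renameT G CTstar CT') = Hh CTstar.T ∧
    Ee (renameT G CTstar CT') = Ee CTstar.T ∧
    numLeaves (renameT G CTstar CT') = numLeaves CTstar.T := by
  classical
  have htree : (renameT G CTstar CT').IsTree := aux_renameT_isTree CT'
  have hpcond := aux_renameT_path_cond CT'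
  have hF : Ee CTstar.T ⊆ (renameT G CTstar CT').edgeSet := aux_F_subset CT'
  set T := renameT G CTstar CT' with hTdef
  have hle : numLeaves T ≤ numLeaves CTstar.T := by
    rw [hTdef, aux_numLeaves_renameT CT', hopt]
    exact aux_leafage_le CTstar
  haveI : Fintype (MaxCliques G) := Fintype.ofFinite _
  haveI hdecT : DecidableRel T.Adj := Classical.decRel _
  haveI hdecS : DecidableRel CTstar.T.Adj := Classical.decRel _
  by_cases h2 : 2 ≤ Fintype.card (MaxCliques G)
  · have hdom : ∀ C, 3 ≤ CTstar.T.degree C →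
        CTstar.T.neighborSet C ⊆ T.neighborSet C := by
      intro C hC D hD
      have hadj : CTstar.T.Adj C D := hD
      have hHhC : C ∈ Hh CTstar.T := by
        show 3 ≤ deg CTstar.T C
        rw [aux_deg_eq_degree]
        exact hC
      have hmem : s(C, D) ∈ Ee CTstar.T :=
        ⟨(SimpleGraph.mem_edgeSet _).mpr hadj, ⟨C, Sym2.mem_mk_left _ _, hHhC⟩⟩
      exact (SimpleGraph.mem_edgeSet _).mp (hF hmem)
    obtain ⟨hiff, hnb, hnum⟩ := aux_compare T CTstar.T htree CTstar.tree h2 hdom hle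
    have hHhEq : Hh T = Hh CTstar.T := by
      ext C
      show 3 ≤ deg T C ↔ 3 ≤ deg CTstar.T C
      rw [aux_deg_eq_degree, aux_deg_eq_degree]
      exact hiff C
    have hnb' : ∀ C, C ∈ Hh CTstar.T →
        T.neighborSet C = CTstar.T.neighborSet C := by
      intro C hC
      apply hnb
      rw [← aux_deg_eq_degree]
      exact hC
    refine ⟨htree, hpcond, hF, hHhEq, ?_, hnum⟩
    ext e
    induction e using Sym2.inductionOn
    rename_i a b
    constructor
    · rintro ⟨hedge, w, hwmem, hw3⟩
      have hw3' : w ∈ Hh CTstar.T := hHhEq ▸ hw3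
      have hnbw := hnb' w hw3'
      rw [Sym2.mem_iff] at hwmem
      have hadjT : T.Adj a b := (SimpleGraph.mem_edgeSet _).mp hedge
      rcases hwmem with rfl | rfl
      · have : b ∈ CTstar.T.neighborSet w := hnbw ▸ hadjT
        exact ⟨(SimpleGraph.mem_edgeSet _).mpr this, w, Sym2.mem_mk_left _ _, hw3'⟩
      · have : a ∈ CTstar.T.neighborSet w := hnbw ▸ hadjT.symm
        exact ⟨(SimpleGraph.mem_edgeSet _).mpr this.symm, w, Sym2.mem_mk_right _ _, hw3'⟩
    · rintro ⟨hedge, w, hwmem, hw3⟩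
      have hnbw := hnb' w hw3
      rw [Sym2.mem_iff] at hwmem
      have hadjS : CTstar.T.Adj a b := (SimpleGraph.mem_edgeSet _).mp hedge
      rcases hwmem with rfl | rfl
      · have : b ∈ T.neighborSet w := hnbw ▸ (show b ∈ CTstar.T.neighborSet w from hadjS)
        exact ⟨(SimpleGraph.mem_edgeSet _).mpr this, w, Sym2.mem_mk_left _ _, hHhEq ▸ hw3⟩
      · have : a ∈ T.neighborSet w := hnbw ▸ (show a ∈ CTstar.T.neighborSet w from hadjS.symm)
        exact ⟨(SimpleGraph.mem_edgeSet _).mpr this.symm, w, Sym2.mem_mk_right _ _, hHhEq ▸ hw3⟩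
  · -- degenerate case: a single maximal clique
    have hpos : 1 ≤ Fintype.card (MaxCliques G) := Fintype.card_pos_iff.mpr
      htree.isConnected.nonempty
    have hone : Fintype.card (MaxCliques G) ≤ 1 := by omega
    have hsing : ∀ C D : MaxCliques G, C = D := fun C D =>
      Fintype.card_le_one_iff.mp hone C D
    have hdeg0 : ∀ (S : SimpleGraph (MaxCliques G)) (C : MaxCliques G), deg S C = 0 := by
      intro S C
      have hempty : S.neighborSet C = ∅ :=
        Set.eq_empty_iff_forall_notMem.mpr (fun D hD => (SimpleGraph.Adj.ne hD) (hsing C D))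
      simp [deg, hempty]
    have hHh : ∀ (S : SimpleGraph (MaxCliques G)), Hh S = ∅ := by
      intro S
      ext C
      simp [Hh, hdeg0]
    have hEe : ∀ (S : SimpleGraph (MaxCliques G)), Ee S = ∅ := by
      intro S
      ext e
      simp [Ee, hHh]
    have hnl : ∀ (S : SimpleGraph (MaxCliques G)), numLeaves S = 0 := by
      intro S
      have : leaves S = ∅ := by
        ext C
        simp [leaves, hdeg0]
      simp [numLeaves, this]
    exact ⟨htree, hpcond, hF, by rw [hHh, hHh], by rw [hEe, hEe], by rw [hnl, hnl]⟩
end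

section
/- Let T and T* be finite trees on the same vertex set, each with at least two vertices, and suppose Ee(T*) ⊆ E(T), i.e., every edge of T* incident to a vertex of degree at least 3 in T* is also an edge of T. Then Hh(T*) ⊆ Hh(T), every C ∈ Hh(T*) satisfies N_{T*}(C) ⊆ N_T(C), and |L(T*)| ≤ |L(T)|. If moreover |L(T)| ≤ |L(T*)|, then Hh(T) = Hh(T*), every C ∈ Hh(T) satisfies N_T(C) = N_{T*}(C), and Ee(T) = Ee(T*). -/
open SimpleGraph

lemma deg_eq_degree {W : Type} [Fintype W] (T : SimpleGraph W) [DecidableRel T.Adj] (w : W) :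
    deg T w = T.degree w := by
  rw [deg, SimpleGraph.degree, ← Set.ncard_coe_finset]
  congr 1
  ext v
  simp

lemma degree_one_le {W : Type} [Fintype W] (T : SimpleGraph W) [DecidableRel T.Adj]
    (hT : T.Connected) (h2 : 2 ≤ Fintype.card W) (v : W) : 1 ≤ T.degree v := by
  obtain ⟨u, hu⟩ := Fintype.exists_ne_of_one_lt_card (by omega) v
  obtain ⟨p⟩ := hT.preconnected v u
  rw [Nat.succ_le_iff, T.degree_pos_iff_exists_adj]
  exact ⟨p.getVert 1, p.adj_snd (SimpleGraph.Walk.not_nil_of_ne hu.symm)⟩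

lemma leaf_formula {W : Type} [Fintype W] (T : SimpleGraph W) [DecidableRel T.Adj]
    (hT : T.IsTree) (h2 : 2 ≤ Fintype.card W) :
    (numLeaves T : ℤ) =
      2 + ∑ v ∈ Finset.univ.filter (fun v => 3 ≤ T.degree v), ((T.degree v : ℤ) - 2) := by
  classical
  have deg1 : ∀ v, 1 ≤ T.degree v := degree_one_le T hT.isConnected h2
  have hcard : T.edgeFinset.card + 1 = Fintype.card W := hT.card_edgeFinset
  have hsum : ∑ v, T.degree v = 2 * T.edgeFinset.card :=
    T.sum_degrees_eq_twice_card_edges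
  set L : Finset W := Finset.univ.filter (fun v => T.degree v = 1) with hL
  set H : Finset W := Finset.univ.filter (fun v => 3 ≤ T.degree v) with hH
  have hLnum : (numLeaves T : ℤ) = (L.card : ℤ) := by
    have : leaves T = (L : Set W) := by
      ext w
      simp [leaves, hL, deg_eq_degree]
    rw [numLeaves, this, Set.ncard_coe_finset]
  -- total sum of (deg - 2) over all vertices
  have htot : ∑ v, ((T.degree v : ℤ) - 2) = -2 := by
    rw [Finset.sum_sub_distrib, Finset.sum_const, Finset.card_univ]
    have : ((∑ v, T.degree v : ℕ) : ℤ) = 2 * (Fintype.card W : ℤ) - 2 := by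
      rw [hsum]; push_cast [← hcard]; ring
    push_cast at this ⊢
    rw [this]; ring
  have hsplit : ∑ v, ((T.degree v : ℤ) - 2)
      = ∑ v ∈ L, ((T.degree v : ℤ) - 2) + ∑ v ∈ Lᶜ, ((T.degree v : ℤ) - 2) := by
    rw [Finset.sum_add_sum_compl]
  have hLsum : ∑ v ∈ L, ((T.degree v : ℤ) - 2) = -(L.card : ℤ) := by
    have hone : ∀ v ∈ L, ((T.degree v : ℤ) - 2) = -1 := by
      intro v hv
      rw [hL, Finset.mem_filter] at hv
      rw [hv.2]; norm_num
    rw [Finset.sum_congr rfl hone, Finset.sum_const]; simp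
  have hCsum : ∑ v ∈ Lᶜ, ((T.degree v : ℤ) - 2) = ∑ v ∈ H, ((T.degree v : ℤ) - 2) := by
    refine (Finset.sum_subset ?_ ?_).symm
    · intro v hv
      rw [hH, Finset.mem_filter] at hv
      simp only [Finset.mem_compl, hL, Finset.mem_filter, Finset.mem_univ, true_and]
      omega
    · intro v hv hvH
      simp only [Finset.mem_compl, hL, Finset.mem_filter, Finset.mem_univ, true_and] at hv
      simp only [hH, Finset.mem_filter, Finset.mem_univ, true_and, not_le] at hvH
      have h1 := deg1 v
      have hd : T.degree v = 2 := by omega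
      rw [hd]; ring
  rw [hLnum]
  rw [hsplit, hLsum, hCsum] at htot
  linarith

/-- Let `T` and `T*` be finite trees on the same vertex set, each with at least two
vertices, with `Ee(T*) ⊆ E(T)`. Then `Hh(T*) ⊆ Hh(T)`, every `C ∈ Hh(T*)` satisfies
`N_{T*}(C) ⊆ N_T(C)`, and `|L(T*)| ≤ |L(T)|`. If moreover `|L(T)| ≤ |L(T*)|`, then
`Hh(T) = Hh(T*)`, every `C ∈ Hh(T)` satisfies `N_T(C) = N_{T*}(C)`, and
`Ee(T) = Ee(T*)`. -/
theorem stmt12 {W : Type} [Fintype W] (T Tstar : SimpleGraph W)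
    (hT : T.IsTree) (hTstar : Tstar.IsTree) (h2 : 2 ≤ Fintype.card W)
    (hEe : Ee Tstar ⊆ T.edgeSet) :
    (Hh Tstar ⊆ Hh T ∧
      (∀ C ∈ Hh Tstar, Tstar.neighborSet C ⊆ T.neighborSet C) ∧
      numLeaves Tstar ≤ numLeaves T) ∧
    (numLeaves T ≤ numLeaves Tstar →
      (Hh T = Hh Tstar ∧
        (∀ C ∈ Hh T, T.neighborSet C = Tstar.neighborSet C) ∧
        Ee T = Ee Tstar)) := by
  classical
  -- neighbour inclusion for high-degree vertices of Tstar
  have hnb : ∀ C ∈ Hh Tstar, Tstar.neighborSet C ⊆ T.neighborSet C := by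
    intro C hC v hv
    have hadj : Tstar.Adj C v := hv
    have : s(C, v) ∈ Ee Tstar := ⟨hadj, C, Sym2.mem_mk_left C v, hC⟩
    exact hEe this
  have hsub : Hh Tstar ⊆ Hh T := by
    intro C hC
    have h3 : 3 ≤ deg Tstar C := hC
    have hle : deg Tstar C ≤ deg T C :=
      Set.ncard_le_ncard (hnb C hC) (T.neighborSet C).toFinite
    exact le_trans h3 hle
  -- finset versions
  set H : Finset W := Finset.univ.filter (fun v => 3 ≤ T.degree v) with hHdef
  set Hs : Finset W := Finset.univ.filter (fun v => 3 ≤ Tstar.degree v) with hHsdef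
  have hHh_T : Hh T = (H : Set W) := by
    ext w; simp [Hh, hHdef, deg_eq_degree]
  have hHh_Ts : Hh Tstar = (Hs : Set W) := by
    ext w; simp [Hh, hHsdef, deg_eq_degree]
  have hHsub : Hs ⊆ H := by
    intro v hv
    have : v ∈ Hh Tstar := by rw [hHh_Ts]; exact_mod_cast hv
    have := hsub this
    rw [hHh_T] at this; exact_mod_cast this
  have hdegle : ∀ v ∈ Hs, Tstar.degree v ≤ T.degree v := by
    intro v hv
    have hvH : v ∈ Hh Tstar := by rw [hHh_Ts]; exact_mod_cast hv
    have hle : deg Tstar v ≤ deg T v :=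
      Set.ncard_le_ncard (hnb v hvH) (T.neighborSet v).toFinite
    rwa [deg_eq_degree, deg_eq_degree] at hle
  have hfT := leaf_formula T hT h2
  have hfTs := leaf_formula Tstar hTstar h2
  -- sum comparison
  have hsum1 : ∑ v ∈ Hs, ((Tstar.degree v : ℤ) - 2) ≤ ∑ v ∈ Hs, ((T.degree v : ℤ) - 2) :=
    Finset.sum_le_sum (fun v hv => by have := hdegle v hv; push_cast; omega)
  have hsum2 : ∑ v ∈ Hs, ((T.degree v : ℤ) - 2) ≤ ∑ v ∈ H, ((T.degree v : ℤ) - 2) := by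
    refine Finset.sum_le_sum_of_subset_of_nonneg hHsub ?_
    intro v hv _
    rw [hHdef, Finset.mem_filter] at hv
    have := hv.2; push_cast; omega
  have hleaf : numLeaves Tstar ≤ numLeaves T := by
    have : (numLeaves Tstar : ℤ) ≤ (numLeaves T : ℤ) := by
      rw [hfT, hfTs]; linarith
    exact_mod_cast this
  refine ⟨⟨hsub, hnb, hleaf⟩, ?_⟩
  intro hle
  -- equality case
  have heq : (numLeaves T : ℤ) = (numLeaves Tstar : ℤ) := by
    have := hleaf; exact_mod_cast le_antisymm hle this
  have hsums : ∑ v ∈ H, ((T.degree v : ℤ) - 2) = ∑ v ∈ Hs, ((Tstar.degree v : ℤ) - 2) := by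
    rw [hfT, hfTs] at heq; linarith
  have hsum2' : ∑ v ∈ Hs, ((T.degree v : ℤ) - 2) = ∑ v ∈ H, ((T.degree v : ℤ) - 2) :=
    le_antisymm hsum2 (by linarith)
  have hsum1' : ∑ v ∈ Hs, ((Tstar.degree v : ℤ) - 2) = ∑ v ∈ Hs, ((T.degree v : ℤ) - 2) :=
    le_antisymm hsum1 (by linarith)
  -- H ⊆ Hs
  have hHeqfin : H = Hs := by
    refine Finset.Subset.antisymm ?_ hHsub
    by_contra hcon
    obtain ⟨v, hvH, hvHs⟩ := Finset.not_subset.mp hcon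
    have hpos : 0 < ((T.degree v : ℤ) - 2) := by
      rw [hHdef, Finset.mem_filter] at hvH
      have := hvH.2; push_cast; omega
    have : ∑ x ∈ Hs, ((T.degree x : ℤ) - 2) < ∑ x ∈ H, ((T.degree x : ℤ) - 2) := by
      refine Finset.sum_lt_sum_of_subset hHsub hvH hvHs hpos ?_
      intro x hx _
      rw [hHdef, Finset.mem_filter] at hx
      have := hx.2; push_cast; omega
    omega
  -- degrees equal on Hs
  have hdegeq : ∀ v ∈ Hs, T.degree v = Tstar.degree v := by
    have hz : ∑ v ∈ Hs, (((T.degree v : ℤ) - 2) - ((Tstar.degree v : ℤ) - 2)) = 0 := by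
      rw [Finset.sum_sub_distrib]; omega
    have := (Finset.sum_eq_zero_iff_of_nonneg (fun v hv => by
      have := hdegle v hv; push_cast; omega)).mp hz
    intro v hv
    have := this v hv
    have h2' := hdegle v hv
    omega
  have hHheq : Hh T = Hh Tstar := by rw [hHh_T, hHh_Ts, hHeqfin]
  have hnbeq : ∀ C ∈ Hh T, T.neighborSet C = Tstar.neighborSet C := by
    intro C hC
    have hCs : C ∈ Hh Tstar := hHheq ▸ hC
    have hCfin : C ∈ Hs := by
      have : C ∈ (Hs : Set W) := hHh_Ts ▸ hCs
      exact_mod_cast this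
    refine (Set.eq_of_subset_of_ncard_le (hnb C hCs) ?_).symm
    show deg T C ≤ deg Tstar C
    rw [deg_eq_degree, deg_eq_degree, hdegeq C hCfin]
  refine ⟨hHheq, hnbeq, ?_⟩
  ext e
  induction e with
  | _ a b =>
    constructor
    · rintro ⟨hadj, w, hw, hwH⟩
      rw [Sym2.mem_iff] at hw
      rw [SimpleGraph.mem_edgeSet] at hadj
      rcases hw with rfl | rfl
      · have hb : b ∈ Tstar.neighborSet w := (hnbeq w hwH) ▸ hadj
        exact ⟨hb, w, Sym2.mem_mk_left w b, hHheq ▸ hwH⟩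
      · have ha : a ∈ Tstar.neighborSet w := (hnbeq w hwH) ▸ hadj.symm
        exact ⟨(SimpleGraph.mem_neighborSet Tstar w a).mp ha |>.symm,
          w, Sym2.mem_mk_right a w, hHheq ▸ hwH⟩
    · rintro ⟨hadj, w, hw, hwH⟩
      rw [Sym2.mem_iff] at hw
      rw [SimpleGraph.mem_edgeSet] at hadj
      have hwHT : w ∈ Hh T := hHheq ▸ hwH
      rcases hw with rfl | rfl
      · have hb : b ∈ T.neighborSet w := (hnbeq w hwHT) ▸ (hadj : b ∈ Tstar.neighborSet w)
        exact ⟨hb, w, Sym2.mem_mk_left w b, hwHT⟩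
      · have ha : a ∈ T.neighborSet w := (hnbeq w hwHT) ▸ (hadj.symm : a ∈ Tstar.neighborSet w)
        exact ⟨((SimpleGraph.mem_neighborSet T w a).mp ha).symm,
          w, Sym2.mem_mk_right a w, hwHT⟩
end

section
/- Let G be a chordal graph and let T and T* be clique trees of G with Ee(T) = Ee(T*). For each vertex u of G, let T_u (respectively T*_u) be the subtree of T (respectively T*) induced by the maximal cliques containing u. Then |L(T_u)| = |L(T*_u)| for every vertex u of G. -/
open SimpleGraph

section Aux

lemma reach_of_walk_s13 {W : Type*} {G : SimpleGraph W} {su : Set W} {x y : W} (p : G.Walk x y)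
    (hs : ∀ z ∈ p.support, z ∈ su) (hx : x ∈ su) (hy : y ∈ su) :
    (G.induce su).Reachable ⟨x, hx⟩ ⟨y, hy⟩ := by
  induction p with
  | nil => rfl
  | @cons a b c h p ih =>
    have hb : b ∈ su := hs b (by simp)
    have hadj : (G.induce su).Adj ⟨a, hx⟩ ⟨b, hb⟩ := by simpa using h
    exact hadj.reachable.trans (ih (fun z hz => hs z (by simp [hz])) hb hy)

lemma acyclic_induce {W : Type*} {G : SimpleGraph W} (hG : G.IsAcyclic) (su : Set W) :
    (G.induce su).IsAcyclic := by
  intro v c hc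
  exact hG (c.map (SimpleGraph.Embedding.induce (G := G) su).toHom)
    (hc.map (SimpleGraph.Embedding.induce (G := G) su).injective)

lemma deg_induce {W : Type*} (G : SimpleGraph W) (su : Set W) (x : su) :
    deg (G.induce su) x = (G.neighborSet x.1 ∩ su).ncard := by
  have : Subtype.val '' ((G.induce su).neighborSet x) = G.neighborSet x.1 ∩ su := by
    ext w
    simp only [Set.mem_image, mem_neighborSet, comap_adj, Function.Embedding.coe_subtype,
      Set.mem_inter_iff]
    constructor
    · rintro ⟨⟨w, hw⟩, ha, rfl⟩; exact ⟨ha, hw⟩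
    · rintro ⟨ha, hw⟩; exact ⟨⟨w, hw⟩, ha, rfl⟩
  rw [deg, ← this, Set.ncard_image_of_injective _ Subtype.val_injective]

open Finset in
lemma tree_leaf_formula {X : Type*} [Fintype X] {S : SimpleGraph X} (hS : S.IsTree)
    (h2 : 2 ≤ Fintype.card X) :
    numLeaves S = 2 + ∑ x : X, (if 3 ≤ deg S x then deg S x - 2 else 0) := by
  classical
  have hdeg : ∀ x, deg S x = S.degree x := by
    intro x
    rw [deg, degree, ← Set.ncard_coe_finset, neighborFinset_def, Set.coe_toFinset]
  have hpos : ∀ x, 1 ≤ S.degree x := by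
    intro x
    obtain ⟨y, hxy⟩ := Fintype.exists_ne_of_one_lt_card (by omega) x
    obtain ⟨p⟩ := hS.isConnected.preconnected x y
    cases p with
    | nil => exact absurd rfl hxy.symm
    | cons h p => exact (S.degree_pos_iff_exists_adj x).2 ⟨_, h⟩
  have hsum : (∑ x, S.degree x) + 2 = 2 * Fintype.card X := by
    rw [sum_degrees_eq_twice_card_edges, ← hS.card_edgeFinset]; ring
  have key : (∑ x : X, ((S.degree x : ℤ) - 2)) = -2 := by
    rw [Finset.sum_sub_distrib, Finset.sum_const, Finset.card_univ, nsmul_eq_mul, ← Nat.cast_sum]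
    have : ((∑ x, S.degree x : ℕ) : ℤ) + 2 = 2 * (Fintype.card X : ℤ) := by
      exact_mod_cast congrArg (Nat.cast : ℕ → ℤ) hsum
    linarith
  have hsplit : (∑ x : X, ((S.degree x : ℤ) - 2)) =
      (∑ x ∈ univ.filter (fun x => S.degree x = 1), ((S.degree x : ℤ) - 2)) +
      (∑ x ∈ univ.filter (fun x => ¬ S.degree x = 1), ((S.degree x : ℤ) - 2)) :=
    (Finset.sum_filter_add_sum_filter_not univ _ _).symm
  have h1 : (∑ x ∈ univ.filter (fun x => S.degree x = 1), ((S.degree x : ℤ) - 2)) =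
      -((univ.filter (fun x => S.degree x = 1)).card : ℤ) := by
    rw [Finset.sum_congr rfl (g := fun _ => (-1 : ℤ)) (fun x hx => by
      rw [Finset.mem_filter] at hx; rw [hx.2]; norm_num), Finset.sum_const, nsmul_eq_mul]
    ring
  have h3 : (∑ x ∈ univ.filter (fun x => ¬ S.degree x = 1), ((S.degree x : ℤ) - 2)) =
      ∑ x : X, (if 3 ≤ deg S x then ((deg S x : ℤ) - 2) else 0) := by
    rw [Finset.sum_filter]
    apply Finset.sum_congr rfl
    intro x _
    rcases Nat.lt_or_ge (S.degree x) 3 with h | h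
    · have := hpos x
      have hd := hdeg x
      by_cases h1 : S.degree x = 1
      · simp only [h1, not_true, if_false]
        rw [if_neg (by omega)]
      · have : S.degree x = 2 := by omega
        simp only [h1, not_false_iff, if_true]
        rw [if_neg (by omega), this]
        norm_num
    · rw [if_pos (by omega), if_pos (by rw [hdeg]; omega), hdeg]
  have hL : numLeaves S = (univ.filter (fun x => S.degree x = 1)).card := by
    rw [numLeaves, ← Set.ncard_coe_finset]
    congr 1
    ext x
    simp [leaves, hdeg]
  have hcast : ((2 + ∑ x : X, (if 3 ≤ deg S x then deg S x - 2 else 0) : ℕ) : ℤ) =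
      2 + ∑ x : X, (if 3 ≤ deg S x then ((deg S x : ℤ) - 2) else 0) := by
    push_cast
    congr 1
    apply Finset.sum_congr rfl
    intro x _
    split
    · next h => rw [Nat.cast_sub (by omega)]; norm_num
    · norm_num
  have key2 : ((numLeaves S : ℕ) : ℤ) =
      ((2 + ∑ x : X, (if 3 ≤ deg S x then deg S x - 2 else 0) : ℕ) : ℤ) := by
    rw [hcast, hL]
    have := key
    rw [hsplit, h1, h3] at this
    linarith
  exact_mod_cast key2

lemma numSubLeaves_eq_numLeaves_induce {W : Type*} (T : SimpleGraph W) (su : Set W) :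
    numSubLeaves T su = numLeaves (T.induce su) := by
  rw [numSubLeaves, numLeaves,
    ← Set.ncard_image_of_injective (leaves (T.induce su)) Subtype.val_injective]
  congr 1
  ext w
  simp only [subLeaves, Set.mem_image, leaves, Set.mem_setOf_eq]
  constructor
  · rintro ⟨hw, h1⟩
    exact ⟨⟨w, hw⟩, by rwa [deg_induce], rfl⟩
  · rintro ⟨⟨w, hw⟩, h1, rfl⟩
    rw [deg_induce] at h1
    exact ⟨hw, h1⟩

lemma cliqueSub_connected {V : Type} (G : SimpleGraph V) (CT : CliqueTree G) (u : V)
    (hne : (cliqueSub G u).Nonempty) : (CT.T.induce (cliqueSub G u)).Connected := by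
  classical
  obtain ⟨C0, hC0⟩ := hne
  haveI : Nonempty (cliqueSub G u) := ⟨⟨C0, hC0⟩⟩
  refine ⟨?_⟩
  rintro ⟨C, hC⟩ ⟨C', hC'⟩
  obtain ⟨p⟩ := CT.tree.isConnected.preconnected C C'
  refine reach_of_walk_s13 (p.toPath : CT.T.Walk C C') ?_ hC hC'
  intro z hz
  exact CT.path_cond C C' p.toPath (Walk.toPath p).2 z hz ⟨hC, hC'⟩

lemma branch_term {V : Type} [Fintype V] (G : SimpleGraph V) (CT : CliqueTree G) (u : V)
    (x : MaxCliques G) :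
    (if 3 ≤ (CT.T.neighborSet x ∩ cliqueSub G u).ncard
       then (CT.T.neighborSet x ∩ cliqueSub G u).ncard - 2 else 0)
    = (if 3 ≤ ({C' | s(x, C') ∈ Ee CT.T} ∩ cliqueSub G u).ncard
       then ({C' | s(x, C') ∈ Ee CT.T} ∩ cliqueSub G u).ncard - 2 else 0) := by
  classical
  haveI : Finite (MaxCliques G) := Subtype.finite
  set N := CT.T.neighborSet x ∩ cliqueSub G u with hN
  set M := {C' | s(x, C') ∈ Ee CT.T} ∩ cliqueSub G u with hM
  have hMN : M ⊆ N := by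
    apply Set.inter_subset_inter_left
    intro C' hC'
    exact (CT.T.mem_edgeSet).1 hC'.1
  by_cases h3 : 3 ≤ N.ncard
  · have hdx : 3 ≤ deg CT.T x := by
      refine le_trans h3 (Set.ncard_le_ncard ?_ (Set.toFinite _))
      exact Set.inter_subset_left
    have hNM : N ⊆ M := by
      rintro C' ⟨hadj, hsu⟩
      refine ⟨⟨(CT.T.mem_edgeSet).2 hadj, x, ?_, hdx⟩, hsu⟩
      simp
    have : N = M := Set.Subset.antisymm hNM hMN
    rw [this]
  · have hM3 : ¬ 3 ≤ M.ncard := fun h =>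
      h3 (le_trans h (Set.ncard_le_ncard hMN (Set.toFinite _)))
    rw [if_neg h3, if_neg hM3]

end Aux

/-- If `T` and `T*` are clique trees of a chordal graph `G` with `Ee(T) = Ee(T*)`, then
for every vertex `u`, the subtrees `T_u` and `T*_u` (induced by the maximal cliques
containing `u`) have the same number of leaves. -/
theorem stmt13 {V : Type} [Fintype V] (G : SimpleGraph V) (CT CTstar : CliqueTree G)
    (hEe : Ee CT.T = Ee CTstar.T) :
    ∀ u : V, numSubLeaves CT.T (cliqueSub G u) = numSubLeaves CTstar.T (cliqueSub G u) := by
  intro u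
  classical
  by_cases hne : (cliqueSub G u).Nonempty
  · haveI : Finite (MaxCliques G) := Subtype.finite
    haveI : Fintype (MaxCliques G) := Fintype.ofFinite _
    haveI : Fintype (cliqueSub G u) := Fintype.ofFinite _
    by_cases h2 : 2 ≤ Fintype.card (cliqueSub G u)
    · have tree1 : (CT.T.induce (cliqueSub G u)).IsTree :=
        ⟨cliqueSub_connected G CT u hne, acyclic_induce CT.tree.IsAcyclic _⟩
      have tree2 : (CTstar.T.induce (cliqueSub G u)).IsTree :=
        ⟨cliqueSub_connected G CTstar u hne, acyclic_induce CTstar.tree.IsAcyclic _⟩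
      rw [numSubLeaves_eq_numLeaves_induce, numSubLeaves_eq_numLeaves_induce,
        tree_leaf_formula tree1 h2, tree_leaf_formula tree2 h2]
      congr 1
      apply Finset.sum_congr rfl
      intro x _
      rw [deg_induce, deg_induce, branch_term G CT u x.1, branch_term G CTstar u x.1, hEe]
    · obtain ⟨a, ha⟩ : ∃ a, cliqueSub G u = {a} := by
        rw [← Set.ncard_eq_one]
        have hc : (cliqueSub G u).ncard = Fintype.card (cliqueSub G u) := by
          rw [Set.ncard_eq_toFinset_card', Set.toFinset_card]
        have h1 : 1 ≤ (cliqueSub G u).ncard := by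
          exact (Set.ncard_pos (Set.toFinite _)).2 hne
        omega
      have hempty : ∀ (T : SimpleGraph (MaxCliques G)), subLeaves T (cliqueSub G u) = ∅ := by
        intro T
        ext w
        simp only [subLeaves, ha, Set.mem_singleton_iff, Set.mem_setOf_eq,
          Set.mem_empty_iff_false, iff_false, not_and]
        rintro rfl
        have : T.neighborSet w ∩ {w} = ∅ := by
          ext z
          simp only [Set.mem_inter_iff, mem_neighborSet, Set.mem_singleton_iff,
            Set.mem_empty_iff_false, iff_false, not_and]
          rintro hadj rfl
          exact T.irrefl hadj
        rw [this]
        simp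
      simp [numSubLeaves, hempty]
  · have : cliqueSub G u = ∅ := Set.not_nonempty_iff_eq_empty.1 hne
    simp [numSubLeaves, subLeaves, this]
end
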